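/- arXiv:2501.06763 — 8 statements merged into one kernel-verified Lean document; each statement's English description precedes it below -/
import Mathlib

section
/- Let K be a field of characteristic ≠ 2 and q ∈ K* with q ≠ ±1, ε = q - q⁻¹. For x, y ∈ K*, choose u, v ∈ K* with x + x⁻¹ = 𝚚(u) and y + y⁻¹ = 𝚚(v) where 𝚚(t) = 2(qt+(qt)⁻¹)/(q+q⁻¹). Then x⁻¹y/(x⁻¹y-1)² + xy/(xy-1)² = 1/ε² holds if and only if v = q²u, or v = q⁻²u, or v = u⁻¹, or v = q⁻⁴u⁻¹ (assuming the denominators are nonzero). -/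
set_option maxHeartbeats 1000000 in
/-- The intertwiner invertibility condition `x⁻¹y/(x⁻¹y-1)² + xy/(xy-1)² = 1/ε²`
holds iff, under the substitution `x + x⁻¹ = 𝚚(u)`, `y + y⁻¹ = 𝚚(v)`,
one has `v = q²u`, `v = q⁻²u`, `v = u⁻¹` or `v = q⁻⁴u⁻¹`. -/
theorem stmt1 (K : Type) [Field K] [IsAlgClosed K] (hchar : ringChar K ≠ 2)
    (q : K) (hq0 : q ≠ 0) (hq1 : q ≠ 1) (hqm1 : q ≠ -1)
    (x y u v : K) (hx : x ≠ 0) (hy : y ≠ 0) (hu : u ≠ 0) (hv : v ≠ 0)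
    (hd1 : x⁻¹ * y - 1 ≠ 0) (hd2 : x * y - 1 ≠ 0)
    (hxu : x + x⁻¹ = 2 * (q * u + (q * u)⁻¹) / (q + q⁻¹))
    (hyv : y + y⁻¹ = 2 * (q * v + (q * v)⁻¹) / (q + q⁻¹)) :
    x⁻¹ * y / (x⁻¹ * y - 1) ^ 2 + x * y / (x * y - 1) ^ 2 = 1 / (q - q⁻¹) ^ 2 ↔
      v = q ^ 2 * u ∨ v = (q ^ 2)⁻¹ * u ∨ v = u⁻¹ ∨ v = (q ^ 4)⁻¹ * u⁻¹ := by
  have h2 : (2 : K) ≠ 0 := Ring.two_ne_zero hchar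
  have h4 : (4 : K) ≠ 0 := by
    intro h
    apply h2
    have h' : (2 : K) * 2 = 0 := by linear_combination h
    rcases mul_eq_zero.mp h' with h'' | h'' <;> exact h''
  have hε : q - q⁻¹ ≠ 0 := by
    intro h
    have hq2 : q * q = 1 := by
      have := sub_eq_zero.mp h
      field_simp at this
      linear_combination this
    rcases mul_self_eq_one_iff.mp hq2 with h1 | h1
    · exact hq1 h1
    · exact hqm1 h1
  by_cases hd : q + q⁻¹ = 0
  · exfalso
    rw [hd, div_zero] at hxu hyv
    have hx2 : x * x + 1 = 0 := by
      field_simp at hxu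
      linear_combination hxu
    have hy2 : y * y + 1 = 0 := by
      field_simp at hyv
      linear_combination hyv
    have hxx : x⁻¹ = -x := by
      field_simp
      linear_combination hx2
    have : (x * y - 1) * (x⁻¹ * y - 1) = 0 := by
      rw [hxx]
      linear_combination hy2 - y ^ 2 * hx2
    exact mul_ne_zero hd2 hd1 this
  · -- main case
    have hd1' : (x⁻¹ * y - 1) ^ 2 ≠ 0 := pow_ne_zero _ hd1
    have hd2' : (x * y - 1) ^ 2 ≠ 0 := pow_ne_zero _ hd2
    have hq2p1 : q ^ 2 + 1 ≠ 0 := by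
      intro h
      apply hd
      field_simp
      linear_combination h
    -- abstract e := q - q⁻¹
    obtain ⟨e, he⟩ : ∃ e, q - q⁻¹ = e := ⟨_, rfl⟩
    have he0 : e ≠ 0 := he ▸ hε
    have he2 : e ^ 2 * q ^ 2 = (q ^ 2 - 1) ^ 2 := by
      rw [← he]
      field_simp
    -- abstract s := x + x⁻¹, t := y + y⁻¹
    obtain ⟨s, hs⟩ : ∃ s, x + x⁻¹ = s := ⟨_, rfl⟩
    obtain ⟨t, ht⟩ : ∃ t, y + y⁻¹ = t := ⟨_, rfl⟩
    rw [hs] at hxu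
    rw [ht] at hyv
    have SX : s * ((q ^ 2 + 1) * u) = 2 * (q ^ 2 * u ^ 2 + 1) := by
      rw [hxu, div_mul_eq_mul_div, div_eq_iff hd]
      field_simp
    have SY : t * ((q ^ 2 + 1) * v) = 2 * (q ^ 2 * v ^ 2 + 1) := by
      rw [hyv, div_mul_eq_mul_div, div_eq_iff hd]
      field_simp
    -- a := x*y + x⁻¹*y⁻¹ - 2, b := x⁻¹*y + x*y⁻¹ - 2
    have ha1 : (x * y + x⁻¹ * y⁻¹ - 2) * (x * y) = (x * y - 1) ^ 2 := by
      field_simp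
      ring
    have ha0 : x * y + x⁻¹ * y⁻¹ - 2 ≠ 0 := by
      intro h
      exact hd2' (by rw [← ha1, h, zero_mul])
    have hb1 : (x⁻¹ * y + x * y⁻¹ - 2) * (x⁻¹ * y) = (x⁻¹ * y - 1) ^ 2 := by
      field_simp
      ring
    have hb0 : x⁻¹ * y + x * y⁻¹ - 2 ≠ 0 := by
      intro h
      exact hd1' (by rw [← hb1, h, zero_mul])
    have hsum : (x * y + x⁻¹ * y⁻¹ - 2) + (x⁻¹ * y + x * y⁻¹ - 2) = s * t - 4 := by
      rw [← hs, ← ht]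
      field_simp
      ring
    have hprod : (x * y + x⁻¹ * y⁻¹ - 2) * (x⁻¹ * y + x * y⁻¹ - 2) = (s - t) ^ 2 := by
      rw [← hs, ← ht]
      field_simp
      ring
    -- rewrite the two summands
    have hx1 : x * y / (x * y - 1) ^ 2 = 1 / (x * y + x⁻¹ * y⁻¹ - 2) := by
      rw [div_eq_div_iff hd2' ha0]
      linear_combination ha1
    have hx2 : x⁻¹ * y / (x⁻¹ * y - 1) ^ 2 = 1 / (x⁻¹ * y + x * y⁻¹ - 2) := by
      rw [div_eq_div_iff hd1' hb0]
      linear_combination hb1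
    rw [hx1, hx2, he, div_add_div _ _ hb0 ha0,
      div_eq_div_iff (mul_ne_zero hb0 ha0) (pow_ne_zero 2 he0)]
    -- auxiliary identities
    have E1 : (2 * (q ^ 2 * u ^ 2 + 1)) * (2 * (q ^ 2 * v ^ 2 + 1)) -
        4 * ((q ^ 2 + 1) * u) * ((q ^ 2 + 1) * v) =
        ((x * y + x⁻¹ * y⁻¹ - 2) + (x⁻¹ * y + x * y⁻¹ - 2)) *
          (((q ^ 2 + 1) * u) * ((q ^ 2 + 1) * v)) := by
      linear_combination (-(t * ((q ^ 2 + 1) * v))) * SX - (2 * (q ^ 2 * u ^ 2 + 1)) * SY -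
        ((q ^ 2 + 1) * u) * ((q ^ 2 + 1) * v) * hsum
    have E2 : (2 * (q ^ 2 * u ^ 2 + 1)) * ((q ^ 2 + 1) * v) -
        (2 * (q ^ 2 * v ^ 2 + 1)) * ((q ^ 2 + 1) * u) =
        (s - t) * (((q ^ 2 + 1) * u) * ((q ^ 2 + 1) * v)) := by
      linear_combination (-((q ^ 2 + 1) * v)) * SX + ((q ^ 2 + 1) * u) * SY
    have master : (-4) * (q ^ 2 + 1) ^ 2 *
        ((v - q ^ 2 * u) * ((q ^ 2 * v - u) * ((u * v - 1) * (q ^ 4 * u * v - 1)))) =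
        ((((q ^ 2 + 1) * u) * ((q ^ 2 + 1) * v)) ^ 2 * q ^ 2) *
          (((x * y + x⁻¹ * y⁻¹ - 2) + (x⁻¹ * y + x * y⁻¹ - 2)) * e ^ 2 -
            (x * y + x⁻¹ * y⁻¹ - 2) * (x⁻¹ * y + x * y⁻¹ - 2)) := by
      linear_combination ((q ^ 2 - 1) ^ 2 * (((q ^ 2 + 1) * u) * ((q ^ 2 + 1) * v))) * E1 -
        (((x * y + x⁻¹ * y⁻¹ - 2) + (x⁻¹ * y + x * y⁻¹ - 2)) *
          (((q ^ 2 + 1) * u) * ((q ^ 2 + 1) * v)) ^ 2) * he2 -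
        (q ^ 2 * ((2 * (q ^ 2 * u ^ 2 + 1)) * ((q ^ 2 + 1) * v) -
          (2 * (q ^ 2 * v ^ 2 + 1)) * ((q ^ 2 + 1) * u) +
          (s - t) * (((q ^ 2 + 1) * u) * ((q ^ 2 + 1) * v)))) * E2 +
        (q ^ 2 * (((q ^ 2 + 1) * u) * ((q ^ 2 + 1) * v)) ^ 2) * hprod
    have hC0 : (((q ^ 2 + 1) * u) * ((q ^ 2 + 1) * v)) ^ 2 * q ^ 2 ≠ 0 :=
      mul_ne_zero (pow_ne_zero _ (mul_ne_zero (mul_ne_zero hq2p1 hu) (mul_ne_zero hq2p1 hv)))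
        (pow_ne_zero _ hq0)
    have hc40 : (-4 : K) * (q ^ 2 + 1) ^ 2 ≠ 0 :=
      mul_ne_zero (neg_ne_zero.mpr h4) (pow_ne_zero _ hq2p1)
    constructor
    · intro h
      have hbr : ((x * y + x⁻¹ * y⁻¹ - 2) + (x⁻¹ * y + x * y⁻¹ - 2)) * e ^ 2 -
          (x * y + x⁻¹ * y⁻¹ - 2) * (x⁻¹ * y + x * y⁻¹ - 2) = 0 := by
        linear_combination h
      have hPz : (-4) * (q ^ 2 + 1) ^ 2 *
          ((v - q ^ 2 * u) * ((q ^ 2 * v - u) * ((u * v - 1) * (q ^ 4 * u * v - 1)))) = 0 := by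
        linear_combination master +
          ((((q ^ 2 + 1) * u) * ((q ^ 2 + 1) * v)) ^ 2 * q ^ 2) * hbr
      have hP : (v - q ^ 2 * u) * ((q ^ 2 * v - u) * ((u * v - 1) * (q ^ 4 * u * v - 1))) = 0 :=
        (mul_eq_zero.mp hPz).resolve_left hc40
      rcases mul_eq_zero.mp hP with h1 | h1
      · exact Or.inl (by linear_combination h1)
      rcases mul_eq_zero.mp h1 with h1 | h1
      · refine Or.inr (Or.inl ?_)
        field_simp
        linear_combination h1
      rcases mul_eq_zero.mp h1 with h1 | h1
      · refine Or.inr (Or.inr (Or.inl ?_))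
        field_simp
        linear_combination h1
      · refine Or.inr (Or.inr (Or.inr ?_))
        field_simp
        linear_combination h1
    · intro h
      have hP : (v - q ^ 2 * u) * ((q ^ 2 * v - u) * ((u * v - 1) * (q ^ 4 * u * v - 1))) = 0 := by
        rcases h with h | h | h | h
        · have c1 : v - q ^ 2 * u = 0 := sub_eq_zero.mpr h
          linear_combination ((q ^ 2 * v - u) * ((u * v - 1) * (q ^ 4 * u * v - 1))) * c1
        · have c2 : q ^ 2 * v - u = 0 := by
            rw [h]
            field_simp
            ring
          linear_combination ((v - q ^ 2 * u) * ((u * v - 1) * (q ^ 4 * u * v - 1))) * c2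
        · have c3 : u * v - 1 = 0 := by
            rw [h]
            field_simp
            ring
          linear_combination ((v - q ^ 2 * u) * ((q ^ 2 * v - u) * (q ^ 4 * u * v - 1))) * c3
        · have c4 : q ^ 4 * u * v - 1 = 0 := by
            rw [h]
            field_simp
            ring
          linear_combination ((v - q ^ 2 * u) * ((q ^ 2 * v - u) * (u * v - 1))) * c4
      have hCbr : ((((q ^ 2 + 1) * u) * ((q ^ 2 + 1) * v)) ^ 2 * q ^ 2) *
          (((x * y + x⁻¹ * y⁻¹ - 2) + (x⁻¹ * y + x * y⁻¹ - 2)) * e ^ 2 -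
            (x * y + x⁻¹ * y⁻¹ - 2) * (x⁻¹ * y + x * y⁻¹ - 2)) = 0 := by
        linear_combination (-1 : K) * master + ((-4 : K) * (q ^ 2 + 1) ^ 2) * hP
      have hbr : ((x * y + x⁻¹ * y⁻¹ - 2) + (x⁻¹ * y + x * y⁻¹ - 2)) * e ^ 2 -
          (x * y + x⁻¹ * y⁻¹ - 2) * (x⁻¹ * y + x * y⁻¹ - 2) = 0 :=
        (mul_eq_zero.mp hCbr).resolve_left hC0
      linear_combination hbr
end

section
/- Let K be a field of characteristic ≠ 2. For x, y ∈ K, choose u, v ∈ K with x² = u(u+1) and y² = v(v+1). Then (x+y)² + (x-y)² = (x²-y²)² holds if and only if u - v = ±1, or u + v = 0, or u + v = -2. -/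
/-- Degenerate intertwiner vanishing condition: with `x² = u(u+1)` and `y² = v(v+1)`,
`(x+y)² + (x-y)² = (x²-y²)²` holds iff `u - v = ±1`, `u + v = 0` or `u + v = -2`. -/
theorem stmt2 (K : Type) [Field K] [IsAlgClosed K] (hchar : ringChar K ≠ 2)
    (x y u v : K) (hxu : x ^ 2 = u * (u + 1)) (hyv : y ^ 2 = v * (v + 1)) :
    (x + y) ^ 2 + (x - y) ^ 2 = (x ^ 2 - y ^ 2) ^ 2 ↔
      u - v = 1 ∨ u - v = -1 ∨ u + v = 0 ∨ u + v = -2 := by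
  have h : (x ^ 2 - y ^ 2) ^ 2 - ((x + y) ^ 2 + (x - y) ^ 2) =
      (u - v - 1) * ((u - v + 1) * ((u + v) * (u + v + 2))) := by
    linear_combination (x ^ 2 + u * (u + 1) - y ^ 2 - v * (v + 1) - 2) * hxu +
      (y ^ 2 + v * (v + 1) - x ^ 2 - u * (u + 1) - 2) * hyv
  constructor
  · intro he
    have h0 : (u - v - 1) * ((u - v + 1) * ((u + v) * (u + v + 2))) = 0 := by
      rw [← h, he]; ring
    rcases mul_eq_zero.1 h0 with h1 | h1
    · exact Or.inl (by linear_combination h1)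
    rcases mul_eq_zero.1 h1 with h2 | h2
    · exact Or.inr (Or.inl (by linear_combination h2))
    rcases mul_eq_zero.1 h2 with h3 | h3
    · exact Or.inr (Or.inr (Or.inl h3))
    · exact Or.inr (Or.inr (Or.inr (by linear_combination h3)))
  · rintro (he | he | he | he)
    · linear_combination -h - (u - v + 1) * ((u + v) * (u + v + 2)) * he
    · linear_combination -h - (u - v - 1) * ((u + v) * (u + v + 2)) * he
    · linear_combination -h - (u - v - 1) * ((u - v + 1) * (u + v + 2)) * he
    · linear_combination -h - (u - v - 1) * ((u - v + 1) * (u + v)) * he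
end

section
/- Let λ be a multipartition of n and s, t ∈ Std(λ) standard tableaux with τ·s = t for τ ∈ S_n. Then for ANY reduced expression τ = s_{i_k}⋯s_{i_1}, each partial product s_{i_l}⋯s_{i_1}·s is a standard tableau for l = 1,…,k. -/
/-- A multipartition-like shape: `comps` components, each either strict
(shifted diagram) or an ordinary partition diagram.  A box is a triple
`(l, i, j)`: component `l`, row `i`, column `j` (all 0-indexed). -/
structure MultiShape where
  comps : ℕ
  isStrict : ℕ → Bool
  part : ℕ → ℕ → ℕ

namespace MultiShape

/-- The set of boxes of the diagram of the shape.  In a strict component the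
`i`-th row is shifted `i` steps to the right. -/
def cells (Λ : MultiShape) : Set (ℕ × ℕ × ℕ) :=
  {b | b.1 < Λ.comps ∧
    (if Λ.isStrict b.1 then
        b.2.1 ≤ b.2.2 ∧ b.2.2 < b.2.1 + Λ.part b.1 b.2.1
      else b.2.2 < Λ.part b.1 b.2.1)}

/-- `p : ℕ → ℕ` is a strict partition: weakly decreasing and strictly
decreasing on nonzero parts. -/
def IsStrictPartFun (p : ℕ → ℕ) : Prop :=
  Antitone p ∧ ∀ i, p (i + 1) ≠ 0 → p (i + 1) < p i

/-- Well-formedness of a shape: strict components are strict partitions,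
ordinary components are partitions, and everything beyond `comps` is
normalized to zero. -/
def WellFormed (Λ : MultiShape) : Prop :=
  (∀ l < Λ.comps, Λ.isStrict l = true → IsStrictPartFun (Λ.part l)) ∧
  (∀ l < Λ.comps, Λ.isStrict l = false → Antitone (Λ.part l)) ∧
  (∀ l, Λ.comps ≤ l → (Λ.part l = fun _ => 0) ∧ Λ.isStrict l = false)

/-- `t` is a standard tableau of shape `Λ` with entries `1,…,n`: a bijection
from the boxes onto `{1,…,n}`, increasing along rows and columns of each
component, normalized to `0` outside the diagram. -/
def IsStd (Λ : MultiShape) (n : ℕ) (t : ℕ × ℕ × ℕ → ℕ) : Prop :=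
  Set.BijOn t Λ.cells (Set.Icc 1 n) ∧
  (∀ b ∈ Λ.cells, ∀ b' ∈ Λ.cells,
      b.1 = b'.1 → b.2.1 = b'.2.1 → b.2.2 < b'.2.2 → t b < t b') ∧
  (∀ b ∈ Λ.cells, ∀ b' ∈ Λ.cells,
      b.1 = b'.1 → b.2.2 = b'.2.2 → b.2.1 < b'.2.1 → t b < t b') ∧
  (∀ b, b ∉ Λ.cells → t b = 0)

/-- The simple transposition `s_k = (k, k+1)` acting on entries. -/
def sw (k : ℕ) : Equiv.Perm ℕ := Equiv.swap k (k + 1)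

/-- The permutation `s_{i_k} ⋯ s_{i_1}` associated to the word `w = [i_1,…,i_k]`
(the first letter acts first). -/
def wordPerm (w : List ℕ) : Equiv.Perm ℕ :=
  w.foldl (fun σ k => sw k * σ) 1

lemma wordPerm_nil : wordPerm ([] : List ℕ) = 1 := rfl

lemma foldl_sw (u : List ℕ) : ∀ σ₀ : Equiv.Perm ℕ,
    u.foldl (fun σ k => sw k * σ) σ₀ = u.foldl (fun σ k => sw k * σ) 1 * σ₀ := by
  induction u with
  | nil => intro σ₀; simp
  | cons m u ih =>
      intro σ₀
      rw [List.foldl_cons, List.foldl_cons, ih (sw m * σ₀), ih (sw m * 1), mul_one, mul_assoc]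

lemma wordPerm_cons (m : ℕ) (u : List ℕ) : wordPerm (m :: u) = wordPerm u * sw m := by
  simp only [wordPerm, List.foldl_cons, mul_one]
  exact foldl_sw u (sw m)

lemma wordPerm_append (u : List ℕ) (m : ℕ) : wordPerm (u ++ [m]) = sw m * wordPerm u := by
  simp only [wordPerm, List.foldl_append, List.foldl_cons, List.foldl_nil]

lemma sw_apply (m x : ℕ) : sw m x = if x = m then m + 1 else if x = m + 1 then m else x := by
  simp [sw, Equiv.swap_apply_def]

lemma sw_self (m : ℕ) : sw m m = m + 1 := Equiv.swap_apply_left _ _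

lemma sw_self' (m : ℕ) : sw m (m + 1) = m := Equiv.swap_apply_right _ _

lemma sw_mul_self (m : ℕ) : sw m * sw m = 1 := Equiv.swap_mul_self _ _

lemma sw_lt_iff {m x y : ℕ} (h1 : ¬(x = m ∧ y = m + 1)) (h2 : ¬(x = m + 1 ∧ y = m)) :
    sw m x < sw m y ↔ x < y := by
  rw [sw_apply, sw_apply]
  split_ifs <;> omega

lemma sw_fix {n m x : ℕ} (hm : 1 ≤ m) (hmn : m + 1 ≤ n) (hx : x ∉ Set.Icc 1 n) : sw m x = x := by
  simp only [Set.mem_Icc, not_and, not_le] at hx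
  rw [sw_apply]
  split_ifs <;> omega

lemma wordPerm_fix {n : ℕ} (w : List ℕ) (hw : ∀ k ∈ w, 1 ≤ k ∧ k + 1 ≤ n)
    {x : ℕ} (hx : x ∉ Set.Icc 1 n) : wordPerm w x = x := by
  induction w with
  | nil => rfl
  | cons m u ih =>
      rw [wordPerm_cons, Equiv.Perm.mul_apply,
        sw_fix (hw m (by simp)).1 (hw m (by simp)).2 hx]
      exact ih fun k hk => hw k (by simp [hk])

lemma fix_symm_mem {n : ℕ} {σ : Equiv.Perm ℕ} (hfix : ∀ x ∉ Set.Icc 1 n, σ x = x)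
    {x : ℕ} (hx : x ∈ Set.Icc 1 n) : σ.symm x ∈ Set.Icc 1 n := by
  by_contra h
  have h2 := hfix _ h
  rw [Equiv.apply_symm_apply] at h2
  rw [← h2] at h
  exact h hx

lemma bijOn_of_fix {n : ℕ} {σ : Equiv.Perm ℕ} (hfix : ∀ x ∉ Set.Icc 1 n, σ x = x) :
    Set.BijOn ⇑σ (Set.Icc 1 n) (Set.Icc 1 n) := by
  refine ⟨?_, σ.injective.injOn, fun y hy => ⟨σ.symm y, fix_symm_mem hfix hy, σ.apply_symm_apply y⟩⟩
  intro x hx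
  by_contra hc
  have h1 := hfix _ hc
  have h2 : σ x = x := σ.injective h1
  rw [h2] at hc
  exact hc hx

def invSet (n : ℕ) (σ : Equiv.Perm ℕ) : Finset (ℕ × ℕ) :=
  (Finset.Icc 1 n ×ˢ Finset.Icc 1 n).filter fun p => p.1 < p.2 ∧ σ p.2 < σ p.1

def invNum (n : ℕ) (σ : Equiv.Perm ℕ) : ℕ := (invSet n σ).card

lemma invNum_one (n : ℕ) : invNum n 1 = 0 := by
  rw [invNum, Finset.card_eq_zero, invSet, Finset.filter_eq_empty_iff]
  rintro ⟨a, b⟩ _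
  simp only [Equiv.Perm.coe_one, id_eq]
  omega

lemma invNum_mul_sw_of_lt {n : ℕ} {σ : Equiv.Perm ℕ} (hfix : ∀ x ∉ Set.Icc 1 n, σ x = x)
    {m : ℕ} (hm : 1 ≤ m) (hmn : m + 1 ≤ n) (h : σ.symm m < σ.symm (m + 1)) :
    invNum n (sw m * σ) = invNum n σ + 1 := by
  have hpmem : σ.symm m ∈ Set.Icc 1 n := fix_symm_mem hfix (by simp only [Set.mem_Icc]; omega)
  have hp'mem : σ.symm (m + 1) ∈ Set.Icc 1 n :=
    fix_symm_mem hfix (by simp only [Set.mem_Icc]; omega)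
  simp only [Set.mem_Icc] at hpmem hp'mem
  have hset : invSet n (sw m * σ) = insert (σ.symm m, σ.symm (m + 1)) (invSet n σ) := by
    apply Finset.ext; rintro ⟨a, b⟩
    simp only [invSet, Finset.mem_insert, Finset.mem_filter, Finset.mem_product,
      Finset.mem_Icc, Prod.mk.injEq]
    simp only [Equiv.Perm.mul_apply]
    constructor
    · rintro ⟨⟨ha, hb⟩, hab, hlt⟩
      by_cases hc : a = σ.symm m ∧ b = σ.symm (m + 1)
      · exact Or.inl hc
      · refine Or.inr ⟨⟨ha, hb⟩, hab, ?_⟩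
        rw [sw_lt_iff ?_ ?_] at hlt
        · exact hlt
        · rintro ⟨h1, h2⟩
          have hb' : b = σ.symm m := by rw [← h1, Equiv.symm_apply_apply]
          have ha' : a = σ.symm (m + 1) := by rw [← h2, Equiv.symm_apply_apply]
          omega
        · rintro ⟨h1, h2⟩
          exact hc ⟨by rw [← h2, Equiv.symm_apply_apply], by rw [← h1, Equiv.symm_apply_apply]⟩
    · rintro (⟨ha, hb⟩ | ⟨⟨ha, hb⟩, hab, hlt⟩)
      · subst ha; subst hb
        refine ⟨⟨hpmem, hp'mem⟩, h, ?_⟩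
        rw [Equiv.apply_symm_apply, Equiv.apply_symm_apply, sw_self, sw_self']
        omega
      · refine ⟨⟨ha, hb⟩, hab, ?_⟩
        rw [sw_lt_iff ?_ ?_]
        · exact hlt
        · rintro ⟨h1, h2⟩
          have hb' : b = σ.symm m := by rw [← h1, Equiv.symm_apply_apply]
          have ha' : a = σ.symm (m + 1) := by rw [← h2, Equiv.symm_apply_apply]
          omega
        · rintro ⟨h1, h2⟩
          omega
  have hnot : (σ.symm m, σ.symm (m + 1)) ∉ invSet n σ := by
    simp only [invSet, Finset.mem_filter, Finset.mem_product, Finset.mem_Icc,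
      Equiv.apply_symm_apply]
    omega
  rw [invNum, invNum, hset, Finset.card_insert_of_notMem hnot]

lemma invNum_mul_sw_of_gt {n : ℕ} {σ : Equiv.Perm ℕ} (hfix : ∀ x ∉ Set.Icc 1 n, σ x = x)
    {m : ℕ} (hm : 1 ≤ m) (hmn : m + 1 ≤ n) (h : σ.symm (m + 1) < σ.symm m) :
    invNum n σ = invNum n (sw m * σ) + 1 := by
  have hfix2 : ∀ x ∉ Set.Icc 1 n, (sw m * σ) x = x := by
    intro x hx
    rw [Equiv.Perm.mul_apply, hfix x hx]
    exact sw_fix hm hmn hx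
  have e1 : (sw m * σ).symm m = σ.symm (m + 1) := by
    rw [Equiv.symm_apply_eq, Equiv.Perm.mul_apply, Equiv.apply_symm_apply, sw_self']
  have e2 : (sw m * σ).symm (m + 1) = σ.symm m := by
    rw [Equiv.symm_apply_eq, Equiv.Perm.mul_apply, Equiv.apply_symm_apply, sw_self]
  have h2 : (sw m * σ).symm m < (sw m * σ).symm (m + 1) := by rw [e1, e2]; exact h
  have := invNum_mul_sw_of_lt hfix2 hm hmn h2
  rwa [← mul_assoc, sw_mul_self, one_mul] at this

lemma invNum_mul_sw_le {n : ℕ} {σ : Equiv.Perm ℕ} (hfix : ∀ x ∉ Set.Icc 1 n, σ x = x)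
    {m : ℕ} (hm : 1 ≤ m) (hmn : m + 1 ≤ n) :
    invNum n (sw m * σ) ≤ invNum n σ + 1 ∧ invNum n σ ≤ invNum n (sw m * σ) + 1 := by
  rcases lt_trichotomy (σ.symm m) (σ.symm (m + 1)) with h | h | h
  · rw [invNum_mul_sw_of_lt hfix hm hmn h]; omega
  · exact absurd (σ.symm.injective h) (by omega)
  · rw [invNum_mul_sw_of_gt hfix hm hmn h]; omega

lemma eq_one_of_no_descent {n : ℕ} {σ : Equiv.Perm ℕ} (hfix : ∀ x ∉ Set.Icc 1 n, σ x = x)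
    (h : ∀ m, 1 ≤ m → m + 1 ≤ n → σ.symm m < σ.symm (m + 1)) : σ = 1 := by
  have hlb : ∀ x, 1 ≤ x → x ≤ n → x ≤ σ.symm x := by
    intro x
    induction x with
    | zero => omega
    | succ x ih =>
        intro _ hxn
        by_cases hx0 : x = 0
        · subst hx0
          have hm := fix_symm_mem hfix (show 1 ∈ Set.Icc 1 n by simp only [Set.mem_Icc]; omega)
          simp only [Set.mem_Icc] at hm
          simpa using hm.1
        · have h1 : 1 ≤ x := by omega
          have h2 := ih h1 (by omega)
          have h3 := h x h1 (by omega)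
          omega
  have hub : ∀ d x, x + d = n → 1 ≤ x → σ.symm x ≤ x := by
    intro d
    induction d with
    | zero =>
        intro x hx h1
        have hm := fix_symm_mem hfix (show x ∈ Set.Icc 1 n by simp only [Set.mem_Icc]; omega)
        simp only [Set.mem_Icc] at hm
        omega
    | succ d ih =>
        intro x hx h1
        have h2 := ih (x + 1) (by omega) (by omega)
        have h3 := h x h1 (by omega)
        omega
  have hsid : ∀ x, σ.symm x = x := by
    intro x
    by_cases hx : x ∈ Set.Icc 1 n
    · simp only [Set.mem_Icc] at hx
      exact le_antisymm (hub (n - x) x (by omega) hx.1) (hlb x hx.1 hx.2)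
    · rw [Equiv.symm_apply_eq, hfix x hx]
  ext x
  have hx := hsid (σ x)
  rw [Equiv.symm_apply_apply] at hx
  simpa using hx.symm

lemma exists_word (n : ℕ) : ∀ N (σ : Equiv.Perm ℕ), (∀ x ∉ Set.Icc 1 n, σ x = x) →
    invNum n σ ≤ N →
    ∃ w' : List ℕ, (∀ k ∈ w', 1 ≤ k ∧ k + 1 ≤ n) ∧ wordPerm w' = σ ∧ w'.length = invNum n σ := by
  intro N
  induction N with
  | zero =>
      intro σ hfix hN
      by_cases hd : ∃ m, 1 ≤ m ∧ m + 1 ≤ n ∧ σ.symm (m + 1) < σ.symm m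
      · obtain ⟨m, hm1, hmn, hdm⟩ := hd
        have := invNum_mul_sw_of_gt hfix hm1 hmn hdm
        omega
      · push_neg at hd
        have hσ : σ = 1 := by
          refine eq_one_of_no_descent hfix fun m hm1 hmn => ?_
          have hne : σ.symm m ≠ σ.symm (m + 1) := fun he => by
            have := σ.symm.injective he; omega
          have := hd m hm1 hmn
          omega
        subst hσ
        exact ⟨[], by simp, rfl, by rw [invNum_one]; rfl⟩
  | succ N ih =>
      intro σ hfix hN
      by_cases hd : ∃ m, 1 ≤ m ∧ m + 1 ≤ n ∧ σ.symm (m + 1) < σ.symm m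
      · obtain ⟨m, hm1, hmn, hdm⟩ := hd
        have hB := invNum_mul_sw_of_gt hfix hm1 hmn hdm
        have hfix2 : ∀ x ∉ Set.Icc 1 n, (sw m * σ) x = x := by
          intro x hx
          rw [Equiv.Perm.mul_apply, hfix x hx]
          exact sw_fix hm1 hmn hx
        obtain ⟨w'', hw''r, hw''p, hw''l⟩ := ih (sw m * σ) hfix2 (by omega)
        refine ⟨w'' ++ [m], ?_, ?_, ?_⟩
        · intro k hk
          rcases List.mem_append.mp hk with h | h
          · exact hw''r k h
          · simp only [List.mem_singleton] at h
            subst h; exact ⟨hm1, hmn⟩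
        · rw [wordPerm_append, hw''p, ← mul_assoc, sw_mul_self, one_mul]
        · simp only [List.length_append, List.length_singleton]
          omega
      · push_neg at hd
        have hσ : σ = 1 := by
          refine eq_one_of_no_descent hfix fun m hm1 hmn => ?_
          have hne : σ.symm m ≠ σ.symm (m + 1) := fun he => by
            have := σ.symm.injective he; omega
          have := hd m hm1 hmn
          omega
        subst hσ
        exact ⟨[], by simp, rfl, by rw [invNum_one]; rfl⟩

end MultiShape

open MultiShape in
/-- If `s, t` are standard tableaux of shape `λ` with `τ·s = t`, then for ANY
reduced expression `τ = s_{i_k}⋯s_{i_1}` (a word of minimal length among words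
in the simple transpositions `s_1,…,s_{n-1}` representing `τ`), each partial
product `s_{i_l}⋯s_{i_1}·s` is standard. -/
theorem stmt5 (Λ : MultiShape) (n : ℕ) (hwf : Λ.WellFormed)
    (hfin : Λ.cells.Finite) (hsize : Λ.cells.ncard = n)
    (s : ℕ × ℕ × ℕ → ℕ) (hs : Λ.IsStd n s)
    (τ : Equiv.Perm ℕ) (ht : Λ.IsStd n (⇑τ ∘ s))
    (w : List ℕ) (hw : ∀ k ∈ w, 1 ≤ k ∧ k + 1 ≤ n)
    (hwτ : wordPerm w = τ)
    (hred : ∀ w' : List ℕ, (∀ k ∈ w', 1 ≤ k ∧ k + 1 ≤ n) → wordPerm w' = τ →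
      w.length ≤ w'.length) :
    ∀ l ≤ w.length, Λ.IsStd n (⇑(wordPerm (w.take l)) ∘ s) := by

  have hmrange : ∀ j (hj : j < w.length), 1 ≤ w[j] ∧ w[j] + 1 ≤ n :=
    fun j hj => hw _ (List.getElem_mem hj)
  have hwpre : ∀ j, ∀ k ∈ w.take j, 1 ≤ k ∧ k + 1 ≤ n :=
    fun j k hk => hw k (List.take_subset j w hk)
  have hfixρ : ∀ j, ∀ x ∉ Set.Icc 1 n, wordPerm (w.take j) x = x :=
    fun j x hx => wordPerm_fix _ (hwpre j) hx
  have hτfix : ∀ x ∉ Set.Icc 1 n, τ x = x := by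
    intro x hx; rw [← hwτ]; exact wordPerm_fix w hw hx
  have hstep : ∀ j (hj : j < w.length),
      wordPerm (w.take (j + 1)) = sw w[j] * wordPerm (w.take j) := by
    intro j hj
    rw [List.take_succ, List.getElem?_eq_getElem hj, Option.toList_some, wordPerm_append]
  have hub : ∀ j, invNum n (wordPerm (w.take j)) ≤ j := by
    intro j
    induction j with
    | zero =>
        rw [List.take_zero, wordPerm_nil, invNum_one]
    | succ j ih =>
        by_cases hj : j < w.length
        · rw [hstep j hj]
          have := (invNum_mul_sw_le (hfixρ j) (hmrange j hj).1 (hmrange j hj).2).1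
          omega
        · rw [List.take_succ, List.getElem?_eq_none (by omega)]
          simp only [Option.toList_none, List.append_nil]
          omega
  have hτL : invNum n τ = w.length := by
    have h1 : invNum n τ ≤ w.length := by
      have := hub w.length
      rwa [List.take_length, hwτ] at this
    obtain ⟨w'', hw''r, hw''p, hw''l⟩ := exists_word n (invNum n τ) τ hτfix le_rfl
    have := hred w'' hw''r hw''p
    omega
  have hsuffix : ∀ d j, j + d ≤ w.length →
      invNum n (wordPerm (w.take (j + d))) ≤ invNum n (wordPerm (w.take j)) + d := by
    intro d
    induction d with
    | zero => intro j _; simp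
    | succ d ih =>
        intro j hjd
        have hj : j + d < w.length := by omega
        have h1 := ih j (by omega)
        rw [show j + (d + 1) = (j + d) + 1 by omega, hstep (j + d) hj]
        have h2 := (invNum_mul_sw_le (hfixρ (j + d)) (hmrange _ hj).1 (hmrange _ hj).2).1
        omega
  have hexact : ∀ j, j ≤ w.length → invNum n (wordPerm (w.take j)) = j := by
    intro j hj
    have h1 := hub j
    have h2 := hsuffix (w.length - j) j (by omega)
    rw [show j + (w.length - j) = w.length by omega, List.take_length, hwτ, hτL] at h2
    omega
  have H1 : ∀ j (hj : j < w.length),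
      (wordPerm (w.take j)).symm w[j] < (wordPerm (w.take j)).symm (w[j] + 1) := by
    intro j hj
    rcases lt_trichotomy ((wordPerm (w.take j)).symm w[j]) ((wordPerm (w.take j)).symm (w[j] + 1))
      with h | h | h
    · exact h
    · exact absurd ((wordPerm (w.take j)).symm.injective h) (by omega)
    · exfalso
      have hB := invNum_mul_sw_of_gt (hfixρ j) (hmrange j hj).1 (hmrange j hj).2 h
      rw [← hstep j hj, hexact j (by omega), hexact (j + 1) (by omega)] at hB
      omega
  have noflip : ∀ a a' : ℕ, a < a' → ∀ j d, j + d ≤ w.length →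
      wordPerm (w.take j) a' < wordPerm (w.take j) a →
      wordPerm (w.take (j + d)) a' < wordPerm (w.take (j + d)) a := by
    intro a a' haa j d
    induction d with
    | zero => intro _ h; exact h
    | succ d ih =>
        intro hjd hstart
        have hj : j + d < w.length := by omega
        have hprev := ih (by omega) hstart
        rw [show j + (d + 1) = (j + d) + 1 by omega, hstep (j + d) hj,
          Equiv.Perm.mul_apply, Equiv.Perm.mul_apply]
        refine (sw_lt_iff ?_ ?_).mpr hprev
        · rintro ⟨h1, h2⟩
          have ha' : a' = (wordPerm (w.take (j + d))).symm w[j + d] := by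
            rw [← h1, Equiv.symm_apply_apply]
          have ha : a = (wordPerm (w.take (j + d))).symm (w[j + d] + 1) := by
            rw [← h2, Equiv.symm_apply_apply]
          have := H1 (j + d) hj
          omega
        · rintro ⟨h1, h2⟩
          omega
  have key : ∀ l (hl : l < w.length), ∀ a a' : ℕ,
      wordPerm (w.take l) a = w[l] → wordPerm (w.take l) a' = w[l] + 1 →
      τ a < τ a' → False := by
    intro l hl a a' h1 h2 hτlt
    have ha : a = (wordPerm (w.take l)).symm w[l] := by rw [← h1, Equiv.symm_apply_apply]
    have ha' : a' = (wordPerm (w.take l)).symm (w[l] + 1) := by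
      rw [← h2, Equiv.symm_apply_apply]
    have haa : a < a' := by have := H1 l hl; omega
    have hinv : wordPerm (w.take (l + 1)) a' < wordPerm (w.take (l + 1)) a := by
      rw [hstep l hl, Equiv.Perm.mul_apply, Equiv.Perm.mul_apply, h1, h2, sw_self, sw_self']
      omega
    have hfin' := noflip a a' haa (l + 1) (w.length - (l + 1)) (by omega) hinv
    rw [show l + 1 + (w.length - (l + 1)) = w.length by omega, List.take_length, hwτ] at hfin'
    omega
  intro l
  induction l with
  | zero =>
      intro _
      have he : ⇑(wordPerm (w.take 0)) ∘ s = s := by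
        funext b
        simp [wordPerm_nil]
      rwa [he]
  | succ l ih =>
      intro hl1
      have hl : l < w.length := by omega
      have hu := ih (by omega)
      have hm1 := (hmrange l hl).1
      have hmn := (hmrange l hl).2
      have hcomp : ⇑(wordPerm (w.take (l + 1))) ∘ s
          = ⇑(sw w[l]) ∘ (⇑(wordPerm (w.take l)) ∘ s) := by
        funext b
        simp [hstep l hl]
      rw [hcomp]
      obtain ⟨hbij, hrow, hcol, hout⟩ := hu
      have hswbij : Set.BijOn (⇑(sw w[l])) (Set.Icc 1 n) (Set.Icc 1 n) :=
        bijOn_of_fix fun x hx => sw_fix hm1 hmn hx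
      refine ⟨hswbij.comp hbij, ?_, ?_, ?_⟩
      · intro b hb b' hb' e1 e2 e3
        have hlt := hrow b hb b' hb' e1 e2 e3
        have hτlt := ht.2.1 b hb b' hb' e1 e2 e3
        show sw w[l] ((⇑(wordPerm (w.take l)) ∘ s) b) < sw w[l] ((⇑(wordPerm (w.take l)) ∘ s) b')
        refine (sw_lt_iff ?_ ?_).mpr hlt
        · rintro ⟨h1, h2⟩
          exact key l hl (s b) (s b') h1 h2 hτlt
        · rintro ⟨h1, h2⟩
          omega
      · intro b hb b' hb' e1 e2 e3
        have hlt := hcol b hb b' hb' e1 e2 e3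
        have hτlt := ht.2.2.1 b hb b' hb' e1 e2 e3
        show sw w[l] ((⇑(wordPerm (w.take l)) ∘ s) b) < sw w[l] ((⇑(wordPerm (w.take l)) ∘ s) b')
        refine (sw_lt_iff ?_ ?_).mpr hlt
        · rintro ⟨h1, h2⟩
          exact key l hl (s b) (s b') h1 h2 hτlt
        · rintro ⟨h1, h2⟩
          omega
      · intro b hb
        show sw w[l] ((⇑(wordPerm (w.take l)) ∘ s) b) = 0
        have h0 : (⇑(wordPerm (w.take l)) ∘ s) b = 0 := hout b hb
        rw [h0]
        exact sw_fix hm1 hmn (by simp)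
end

section
/- For a positive integer t, the sum over all strict partitions ξ of t of (2^{(t-ℓ(ξ))/2} · |Std(ξ)|)² equals t!, where ℓ(ξ) is the number of parts of ξ and Std(ξ) is the set of standard shifted tableaux of shape ξ. -/
namespace SPP
open MultiShape Finset

noncomputable section
open Classical

/-- one-component shifted shape -/
def sh (p : ℕ → ℕ) : MultiShape := ⟨1, fun _ => true, fun _ => p⟩

/-- number of standard shifted tableaux -/
def g (p : ℕ → ℕ) (n : ℕ) : ℕ := Nat.card {tab // IsStd (sh p) n tab}

def addable (p : ℕ → ℕ) (r : ℕ) : Prop := r = 0 ∨ p r + 1 < p (r - 1)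

def removable (p : ℕ → ℕ) (r : ℕ) : Prop :=
  p r ≠ 0 ∧ (p (r + 1) = 0 ∨ p (r + 1) + 1 < p r)

def inc (p : ℕ → ℕ) (r : ℕ) : ℕ → ℕ := fun i => if i = r then p i + 1 else p i
def dec (p : ℕ → ℕ) (r : ℕ) : ℕ → ℕ := fun i => if i = r then p i - 1 else p i

def wA (p : ℕ → ℕ) (r : ℕ) : ℕ := if p r = 0 then 1 else 2
def wR (p : ℕ → ℕ) (r : ℕ) : ℕ := if p r = 1 then 1 else 2

/-- strict partition of `n` (with all parts among first `n` rows) -/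
def Sh (p : ℕ → ℕ) (n : ℕ) : Prop :=
  IsStrictPartFun p ∧ (∑ i ∈ Finset.range n, p i) = n ∧ ∀ j, n ≤ j → p j = 0

def ell (p : ℕ → ℕ) (n : ℕ) : ℕ := ((Finset.range n).filter fun i => p i ≠ 0).card

lemma mem_cells {p : ℕ → ℕ} {b : ℕ × ℕ × ℕ} :
    b ∈ (sh p).cells ↔ b.1 = 0 ∧ b.2.1 ≤ b.2.2 ∧ b.2.2 < b.2.1 + p b.2.1 := by
  simp [cells, sh, Nat.lt_one_iff]

lemma tri {p : ℕ → ℕ} (hp : IsStrictPartFun p) :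
    ∀ d i, p (i + d) ≠ 0 → p (i + d) + d ≤ p i := by
  intro d
  induction d with
  | zero => intro i h; simp
  | succ d ih =>
    intro i h
    have h1 : p (i + d + 1) ≠ 0 := by rwa [show i + (d+1) = i + d + 1 by ring] at h
    have h2 : p (i + d + 1) < p (i + d) := hp.2 _ h1
    have h3 : p (i + d) ≠ 0 := by omega
    have := ih i h3
    rw [show i + (d+1) = i + d + 1 by ring]
    omega

lemma zero_of_apply_zero {p : ℕ → ℕ} (hp : IsStrictPartFun p) {m j : ℕ} (h : p m = 0)
    (hj : m ≤ j) : p j = 0 := Nat.le_zero.1 (h ▸ hp.1 hj)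

/-- if `p m ≠ 0` then the first `m+1` rows sum to at least `(m+1)(m+2)/2`. -/
lemma sum_large {p : ℕ → ℕ} (hp : IsStrictPartFun p) {m : ℕ} (h : p m ≠ 0) :
    ∑ i ∈ Finset.range (m + 1), (m + 1 - i) ≤ ∑ i ∈ Finset.range (m + 1), p i := by
  apply Finset.sum_le_sum
  intro i hi
  rw [Finset.mem_range] at hi
  have key := tri hp (m - i) i (by rwa [show i + (m - i) = m by omega])
  rw [show i + (m - i) = m by omega] at key
  omega

lemma sh_zero_lt {p : ℕ → ℕ} {n : ℕ} (h : Sh p n) {j : ℕ} (hj : p j ≠ 0) : j < n := by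
  by_contra hc
  exact hj (h.2.2 j (by omega))

/-- row `n-1` is empty when `n ≥ 2` -/
lemma sh_penult {p : ℕ → ℕ} {n : ℕ} (h : Sh p n) (hn : 2 ≤ n) : p (n - 1) = 0 := by
  by_contra hc
  have h1 := sum_large h.1 hc
  rw [show n - 1 + 1 = n by omega] at h1
  rw [h.2.1] at h1
  have h2 : ∑ i ∈ Finset.range n, (n - i) = ∑ i ∈ Finset.range n, (i + 1) := by
    rw [← Finset.sum_range_reflect]
    apply Finset.sum_congr rfl
    intro i hi; rw [Finset.mem_range] at hi; omega
  rw [h2] at h1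
  have h3 : ∑ i ∈ Finset.range n, (i + 1) = (∑ i ∈ Finset.range n, i) + n := by
    rw [Finset.sum_add_distrib]; simp
  have h5 : 1 ≤ ∑ i ∈ Finset.range n, i :=
    Finset.single_le_sum (f := fun i => i) (fun i _ => Nat.zero_le i)
      (Finset.mem_range.2 (by omega : (1:ℕ) < n))
  omega

end
end SPP

namespace SPP
open MultiShape Finset

lemma removable_lt {p : ℕ → ℕ} {n r : ℕ} (h : Sh p n) (hr : removable p r) : r < n :=
  sh_zero_lt h hr.1

lemma addable_le {p : ℕ → ℕ} {n r : ℕ} (h : Sh p n) (hr : addable p r) : r ≤ n := by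
  rcases hr with h0 | h1
  · omega
  · have : p (r - 1) ≠ 0 := by omega
    have := sh_zero_lt h this
    omega

lemma sh_pos {p : ℕ → ℕ} {n r : ℕ} (h : Sh p n) (hr : removable p r) : 1 ≤ n := by
  have := removable_lt h hr; omega

lemma strict_dec {p : ℕ → ℕ} {n r : ℕ} (h : Sh p n) (hr : removable p r) :
    IsStrictPartFun (dec p r) := by
  obtain ⟨⟨hmon, hstr⟩, hsum, hvan⟩ := h
  obtain ⟨hr0, hr1⟩ := hr
  constructor
  · apply antitone_nat_of_succ_le
    intro i
    have h1 : p (i + 1) ≤ p i := hmon (Nat.le_succ i)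
    by_cases e1 : i + 1 = r
    · subst e1
      simp [dec, show i ≠ i + 1 by omega]
      omega
    · by_cases e2 : i = r
      · subst e2
        simp [dec, e1]
        omega
      · simp [dec, e1, e2]
        omega
  · intro i hi
    have h2 := hstr i
    by_cases e1 : i + 1 = r
    · subst e1
      simp [dec, show i ≠ i + 1 by omega] at hi ⊢
      omega
    · by_cases e2 : i = r
      · subst e2
        simp [dec, e1] at hi ⊢
        omega
      · simp [dec, e1, e2] at hi ⊢
        omega

lemma sum_dec {p : ℕ → ℕ} {n r : ℕ} (h : Sh p n) (hr : removable p r) :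
    Sh (dec p r) (n - 1) := by
  refine ⟨strict_dec h hr, ?_, ?_⟩
  · have hrn := removable_lt h hr
    have hsplit : ∀ q : ℕ → ℕ, ∑ i ∈ Finset.range n, q i
        = q r + ∑ i ∈ (Finset.range n).erase r, q i := by
      intro q
      rw [Finset.add_sum_erase]
      exact Finset.mem_range.2 hrn
    have h1 := hsplit p
    have h2 := hsplit (dec p r)
    have h3 : ∑ i ∈ (Finset.range n).erase r, dec p r i
        = ∑ i ∈ (Finset.range n).erase r, p i := by
      apply Finset.sum_congr rfl
      intro i hi
      have : i ≠ r := (Finset.mem_erase.1 hi).1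
      simp [dec, this]
    have hdr : dec p r r = p r - 1 := by simp [dec]
    have hsum := h.2.1
    rcases Nat.lt_or_ge n 2 with hn | hn
    · have hn1 : n = 1 := by omega
      subst hn1
      simp
    · have hpen : p (n - 1) = 0 := sh_penult h hn
      have hne : r ≠ n - 1 := by intro e; exact hr.1 (e ▸ hpen)
      have hn' : n - 1 + 1 = n := by omega
      have h4 := Finset.sum_range_succ (dec p r) (n - 1)
      rw [hn'] at h4
      have h5 : dec p r (n - 1) = 0 := by simp [dec, hne.symm, hpen]
      have hr0 := hr.1
      omega
  · intro j hj
    rcases Nat.lt_or_ge n 2 with hn | hn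
    · have hn1 : n = 1 := by
        have := sh_pos h hr; omega
      subst hn1
      have hrn := removable_lt h hr
      have hr0 : r = 0 := by omega
      subst hr0
      rcases Nat.eq_zero_or_pos j with hj0 | hj0
      · subst hj0
        have : p 0 = 1 := by have := h.2.1; simpa using this
        simp [dec, this]
      · have : p j = 0 := h.2.2 j (by omega)
        simp [dec, this]
    · have hpen : p (n - 1) = 0 := sh_penult h hn
      have : p j = 0 := zero_of_apply_zero h.1 hpen (by omega)
      simp [dec, this]

lemma sum_inc {p : ℕ → ℕ} {n r : ℕ} (h : Sh p n) (hr : addable p r) :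
    Sh (inc p r) (n + 1) := by
  have hrn := addable_le h hr
  obtain ⟨⟨hmon, hstr⟩, hsum, hvan⟩ := h
  refine ⟨⟨?_, ?_⟩, ?_, ?_⟩
  · apply antitone_nat_of_succ_le
    intro i
    have h1 : p (i + 1) ≤ p i := hmon (Nat.le_succ i)
    by_cases e1 : i + 1 = r
    · subst e1
      rcases hr with h0 | h0
      · omega
      · rw [show i + 1 - 1 = i by omega] at h0
        simp [inc, show i ≠ i + 1 by omega]
        omega
    · by_cases e2 : i = r
      · subst e2
        simp [inc, e1]
        omega
      · simp [inc, e1, e2]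
        omega
  · intro i hi
    have h2 := hstr i
    by_cases e1 : i + 1 = r
    · subst e1
      rcases hr with h0 | h0
      · omega
      · rw [show i + 1 - 1 = i by omega] at h0
        simp [inc, show i ≠ i + 1 by omega] at hi ⊢
        omega
    · by_cases e2 : i = r
      · subst e2
        simp [inc, e1] at hi ⊢
        omega
      · simp [inc, e1, e2] at hi ⊢
        omega
  · have hsplit : ∀ q : ℕ → ℕ, ∑ i ∈ Finset.range (n+1), q i
        = q r + ∑ i ∈ (Finset.range (n+1)).erase r, q i := by
      intro q
      rw [Finset.add_sum_erase]
      exact Finset.mem_range.2 (by omega)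
    have h1 := hsplit p
    have h2 := hsplit (inc p r)
    have h3 : ∑ i ∈ (Finset.range (n+1)).erase r, inc p r i
        = ∑ i ∈ (Finset.range (n+1)).erase r, p i := by
      apply Finset.sum_congr rfl
      intro i hi
      have : i ≠ r := (Finset.mem_erase.1 hi).1
      simp [inc, this]
    have h4 : ∑ i ∈ Finset.range (n+1), p i = n := by
      rw [Finset.sum_range_succ, hsum, hvan n le_rfl]
      omega
    have h5 : inc p r r = p r + 1 := by simp [inc]
    omega
  · intro j hj
    have : p j = 0 := hvan j (by omega)
    simp [inc, show j ≠ r by omega, this]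

lemma removable_inc {p : ℕ → ℕ} {r : ℕ} (hp : IsStrictPartFun p) (hr : addable p r) :
    removable (inc p r) r := by
  constructor
  · simp [inc]
  · have := hp.2 r
    simp [inc, show r + 1 ≠ r by omega]
    omega

lemma addable_dec {p : ℕ → ℕ} {r : ℕ} (hp : IsStrictPartFun p) (hr : removable p r) :
    addable (dec p r) r := by
  rcases Nat.eq_zero_or_pos r with h0 | h0
  · exact Or.inl h0
  · right
    have h1 : p (r - 1 + 1) ≠ 0 := by rw [show r - 1 + 1 = r by omega]; exact hr.1
    have h2 := hp.2 (r-1) h1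
    rw [show r - 1 + 1 = r by omega] at h2
    have h3 := hr.1
    simp [dec, show r - 1 ≠ r by omega]
    omega

lemma dec_inc (p : ℕ → ℕ) (r : ℕ) : dec (inc p r) r = p := by
  funext i
  simp only [dec, inc]
  by_cases e : i = r <;> simp [e]

lemma inc_dec {p : ℕ → ℕ} {r : ℕ} (h : p r ≠ 0) : inc (dec p r) r = p := by
  funext i
  simp only [dec, inc]
  by_cases e : i = r <;> simp [e]
  omega

lemma dec_inc_comm {p : ℕ → ℕ} {r s : ℕ} (h : r ≠ s) :
    dec (inc p r) s = inc (dec p s) r := by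
  funext i
  simp only [dec, inc]
  by_cases e1 : i = r <;> by_cases e2 : i = s <;>
    simp [e1, e2, h, Ne.symm h] <;> omega

lemma commute_iff {p : ℕ → ℕ} {r s : ℕ} (h : r ≠ s) :
    (addable p r ∧ removable (inc p r) s) ↔ (removable p s ∧ addable (dec p s) r) := by
  by_cases e : r = s + 1
  · subst e
    simp only [addable, removable, inc, dec]
    simp [show s + 1 ≠ s by omega, show s + 1 + 1 ≠ s + 1 by omega,
      show s + 1 - 1 = s by omega]
    omega
  · have v1 : (inc p r) s = p s := by simp [inc, Ne.symm h]
    have v2 : (inc p r) (s + 1) = p (s + 1) := by simp [inc, show s + 1 ≠ r by omega]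
    have v3 : (dec p s) r = p r := by simp [dec, h]
    by_cases e0 : r = 0
    · subst e0
      simp only [addable, removable, v1, v2]
      tauto
    · have v4 : (dec p s) (r - 1) = p (r - 1) := by
        simp [dec, show r - 1 ≠ s by omega]
      simp only [addable, removable, v1, v2, v3, v4]
      tauto
end SPP

namespace SPP
open MultiShape Finset

lemma part_le {p : ℕ → ℕ} {n : ℕ} (h : Sh p n) (i : ℕ) : p i ≤ n := by
  by_cases hi : p i = 0
  · omega
  · have hlt := sh_zero_lt h hi
    calc p i ≤ ∑ j ∈ Finset.range n, p j :=
          Finset.single_le_sum (fun j _ => Nat.zero_le (p j)) (Finset.mem_range.2 hlt)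
    _ = n := h.2.1

lemma cells_finite {p : ℕ → ℕ} {n : ℕ} (h : Sh p n) : (sh p).cells.Finite := by
  apply Set.Finite.subset
    (Set.Finite.prod (Set.finite_Iio 1)
      (Set.Finite.prod (Set.finite_Iio n) (Set.finite_Iio (n + n))))
  intro b hb
  rw [mem_cells] at hb
  obtain ⟨h0, h1, h2⟩ := hb
  have hp : p b.2.1 ≠ 0 := by omega
  have := sh_zero_lt h hp
  have := part_le h b.2.1
  exact ⟨by simp [h0], by simp; omega, by simp; omega⟩

lemma std_finite {p : ℕ → ℕ} {n : ℕ} (h : Sh p n) :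
    Finite {tab // IsStd (sh p) n tab} := by
  have hc : Finite (sh p).cells := (cells_finite h).to_subtype
  have hicc : Finite (Set.Icc 1 n) := (Set.finite_Icc 1 n).to_subtype
  apply Finite.of_injective
    (fun tab : {tab // IsStd (sh p) n tab} =>
      (fun c : (sh p).cells => (⟨tab.1 c, tab.2.1.mapsTo c.2⟩ : Set.Icc 1 n)))
  intro t1 t2 he
  apply Subtype.ext
  funext b
  by_cases hb : b ∈ (sh p).cells
  · have := congrFun he ⟨b, hb⟩
    simpa using this
  · rw [t1.2.2.2.2 b hb, t2.2.2.2.2 b hb]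

lemma g_empty {p : ℕ → ℕ} (h : ∀ j, p j = 0) : g p 0 = 1 := by
  have hcells : (sh p).cells = ∅ := by
    ext b
    rw [mem_cells]
    simp [h]
  have hstd : ∀ tab, IsStd (sh p) 0 tab ↔ tab = (fun _ => 0) := by
    intro tab
    constructor
    · intro ht
      funext b
      exact ht.2.2.2 b (by rw [hcells]; exact Set.notMem_empty b)
    · rintro rfl
      refine ⟨?_, ?_, ?_, ?_⟩
      · rw [hcells]
        constructor
        · intro b hb; exact absurd hb (Set.notMem_empty b)
        · constructor
          · intro b hb; exact absurd hb (Set.notMem_empty b)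
          · intro m hm
            rw [Set.Icc_eq_empty (by omega)] at hm
            exact absurd hm (Set.notMem_empty m)
      · intro b hb; rw [hcells] at hb; exact absurd hb (Set.notMem_empty b)
      · intro b hb; rw [hcells] at hb; exact absurd hb (Set.notMem_empty b)
      · intro b _; rfl
  have : Unique {tab // IsStd (sh p) 0 tab} := by
    refine ⟨⟨⟨(fun _ => 0), (hstd _).2 rfl⟩⟩, ?_⟩
    intro t
    exact Subtype.ext ((hstd t.1).1 t.2)
  rw [g, Nat.card_unique]

/-- removing the outer corner box of row `r` -/
lemma cells_dec {p : ℕ → ℕ} {r : ℕ} (hpr : p r ≠ 0) :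
    (sh (dec p r)).cells = (sh p).cells \ {((0:ℕ), (r, r + p r - 1))} := by
  ext b
  rw [Set.mem_diff, mem_cells, mem_cells]
  by_cases e : b.2.1 = r
  · constructor
    · rintro ⟨h0, h1, h2⟩
      rw [e] at h2 ⊢
      simp [dec] at h2
      refine ⟨⟨h0, by omega, by omega⟩, ?_⟩
      simp only [Set.mem_singleton_iff]
      intro hb
      have : b = (b.1, (b.2.1, b.2.2)) := rfl
      rw [this] at hb
      have h3 : b.2.2 = r + p r - 1 := by
        have := congrArg (fun x : ℕ × ℕ × ℕ => x.2.2) hb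
        simpa using this
      omega
    · rintro ⟨⟨h0, h1, h2⟩, hb⟩
      refine ⟨h0, by omega, ?_⟩
      rw [e]
      simp [dec]
      rw [e] at h2
      have : b.2.2 ≠ r + p r - 1 := by
        intro hc
        apply hb
        simp only [Set.mem_singleton_iff]
        have : b = (b.1, (b.2.1, b.2.2)) := rfl
        rw [this, h0, e, hc]
      omega
  · constructor
    · rintro ⟨h0, h1, h2⟩
      simp only [dec, if_neg e] at h2
      refine ⟨⟨h0, h1, h2⟩, ?_⟩
      simp only [Set.mem_singleton_iff]
      intro hb
      apply e
      have := congrArg (fun x : ℕ × ℕ × ℕ => x.2.1) hb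
      simpa using this
    · rintro ⟨⟨h0, h1, h2⟩, _⟩
      refine ⟨h0, h1, ?_⟩
      simpa only [dec, if_neg e] using h2

lemma corner_mem {p : ℕ → ℕ} {r : ℕ} (hpr : p r ≠ 0) :
    ((0:ℕ), (r, r + p r - 1)) ∈ (sh p).cells := by
  rw [mem_cells]
  refine ⟨rfl, ?_, ?_⟩ <;> simp <;> omega

lemma corner_not_mem_dec {p : ℕ → ℕ} {r : ℕ} (hpr : p r ≠ 0) :
    ((0:ℕ), (r, r + p r - 1)) ∉ (sh (dec p r)).cells := by
  rw [cells_dec hpr]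
  intro hb
  exact hb.2 rfl

/-- no cell strictly below the outer corner of a removable row -/
lemma no_cell_below {p : ℕ → ℕ} {n r : ℕ} (h : Sh p n) (hr : removable p r)
    {i : ℕ} (hi : r < i) : ((0:ℕ), (i, r + p r - 1)) ∉ (sh p).cells := by
  rw [mem_cells]
  rintro ⟨-, h1, h2⟩
  simp only at h1 h2
  have hpi : p i ≠ 0 := by omega
  rcases hr.2 with h3 | h3
  · exact hpi (zero_of_apply_zero h.1 h3 (by omega))
  · have htri := tri h.1 (i - (r + 1)) (r + 1)
      (by rwa [show r + 1 + (i - (r + 1)) = i by omega])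
    rw [show r + 1 + (i - (r + 1)) = i by omega] at htri
    omega
end SPP

namespace SPP
open MultiShape Finset

section
variable {p : ℕ → ℕ} {n r : ℕ}

/-- extending a standard tableau by the corner of a removable row, placing `n`. -/
lemma std_extend (h : Sh p n) (hr : removable p r) {tb : ℕ × ℕ × ℕ → ℕ}
    (htb : IsStd (sh (dec p r)) (n - 1) tb) :
    IsStd (sh p) n (fun b => if b = ((0:ℕ), (r, r + p r - 1)) then n else tb b) := by
  have hn : 1 ≤ n := sh_pos h hr
  have hpr : p r ≠ 0 := hr.1
  set b0 : ℕ × ℕ × ℕ := ((0:ℕ), (r, r + p r - 1)) with hb0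
  have hmem : b0 ∈ (sh p).cells := corner_mem hpr
  have hnotmem : b0 ∉ (sh (dec p r)).cells := corner_not_mem_dec hpr
  have hcd : (sh (dec p r)).cells = (sh p).cells \ {b0} := cells_dec hpr
  have hvaltb : ∀ b ∈ (sh (dec p r)).cells, 1 ≤ tb b ∧ tb b ≤ n - 1 := by
    intro b hb
    have := htb.1.mapsTo hb
    rwa [Set.mem_Icc] at this
  have hmemd : ∀ b, b ∈ (sh p).cells → b ≠ b0 → b ∈ (sh (dec p r)).cells := by
    intro b hb hne
    rw [hcd]
    exact ⟨hb, by simpa using hne⟩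
  refine ⟨⟨?_, ?_, ?_⟩, ?_, ?_, ?_⟩
  · -- MapsTo
    intro b hb
    by_cases e : b = b0
    · simp [e, Set.mem_Icc]; omega
    · have := hvaltb b (hmemd b hb e)
      simp [e, Set.mem_Icc]; omega
  · -- InjOn
    intro b hb b' hb' he
    by_cases e : b = b0 <;> by_cases e' : b' = b0
    · rw [e, e']
    · have := hvaltb b' (hmemd b' hb' e')
      simp [e, e'] at he; omega
    · have := hvaltb b (hmemd b hb e)
      simp [e, e'] at he; omega
    · simp [e, e'] at he
      exact htb.1.injOn (hmemd b hb e) (hmemd b' hb' e') he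
  · -- SurjOn
    intro m hm
    rw [Set.mem_Icc] at hm
    by_cases e : m = n
    · exact ⟨b0, hmem, by simp [e]⟩
    · obtain ⟨b, hb, hbe⟩ := htb.1.surjOn (Set.mem_Icc.2 (by omega : 1 ≤ m ∧ m ≤ n - 1))
      refine ⟨b, by rw [hcd] at hb; exact hb.1, ?_⟩
      have hne : b ≠ b0 := by rw [hcd] at hb; simpa using hb.2
      simpa [hne] using hbe
  · -- row increasing
    intro b hb b' hb' h1 h2 h3
    by_cases e' : b' = b0
    · have e : b ≠ b0 := by
        intro hc; rw [hc, e'] at h3; omega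
      have := hvaltb b (hmemd b hb e)
      simp [e, e']; omega
    · have e : b ≠ b0 := by
        intro hc
        -- b is corner of row r; b' to its right in row r: contradiction
        rw [mem_cells] at hb'
        have h2' : b'.2.1 = r := by
          rw [hc] at h2; rw [hb0] at h2; exact h2.symm
        have h3' : r + p r - 1 < b'.2.2 := by
          rw [hc] at h3; rw [hb0] at h3; exact h3
        rw [h2'] at hb'
        have hpr' := hr.1
        omega
      have goal := htb.2.1 b (hmemd b hb e) b' (hmemd b' hb' e') h1 h2 h3
      simpa [e, e'] using goal
  · -- column increasing
    intro b hb b' hb' h1 h2 h3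
    by_cases e' : b' = b0
    · have e : b ≠ b0 := by
        intro hc; rw [hc, e'] at h3; omega
      have := hvaltb b (hmemd b hb e)
      simp [e, e']; omega
    · have e : b ≠ b0 := by
        intro hc
        -- b' strictly below corner: impossible
        have : b' = ((0:ℕ), (b'.2.1, b'.2.2)) := by
          rw [mem_cells] at hb'
          rcases b' with ⟨l, i, j⟩
          simp_all
        apply no_cell_below h hr (show r < b'.2.1 by rw [hc] at h3; exact h3)
        have hcol : b'.2.2 = r + p r - 1 := by rw [hc] at h2; exact h2.symm
        rw [← hcol]
        rw [← this]
        exact hb'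
      have goal := htb.2.2.1 b (hmemd b hb e) b' (hmemd b' hb' e') h1 h2 h3
      simpa [e, e'] using goal
  · -- zero outside
    intro b hb
    have e : b ≠ b0 := fun hc => hb (hc ▸ hmem)
    have : b ∉ (sh (dec p r)).cells := by
      rw [hcd]; intro hc; exact hb hc.1
    simp [e, htb.2.2.2 b this]

/-- restricting a standard tableau: the cell containing `n` is a removable corner. -/
lemma std_restrict (h : Sh p n) (hn : 1 ≤ n) {tab : ℕ × ℕ × ℕ → ℕ}
    (ht : IsStd (sh p) n tab) {b0 : ℕ × ℕ × ℕ} (hb0 : b0 ∈ (sh p).cells)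
    (hv : tab b0 = n) :
    removable p b0.2.1 ∧ b0 = ((0:ℕ), (b0.2.1, b0.2.1 + p b0.2.1 - 1)) ∧
      IsStd (sh (dec p b0.2.1)) (n - 1) (fun b => if b = b0 then 0 else tab b) := by
  obtain ⟨hc0, hc1, hc2⟩ := mem_cells.1 hb0
  set r := b0.2.1 with hrdef
  have hpr : p r ≠ 0 := by omega
  have hval : ∀ b ∈ (sh p).cells, 1 ≤ tab b ∧ tab b ≤ n := by
    intro b hb
    have := ht.1.mapsTo hb
    rwa [Set.mem_Icc] at this
  -- b0 is at the end of its row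
  have hcol : b0.2.2 = r + p r - 1 := by
    by_contra hcc
    have hlt : b0.2.2 + 1 < r + p r := by omega
    have hb1 : ((0:ℕ), (r, b0.2.2 + 1)) ∈ (sh p).cells := by
      rw [mem_cells]
      exact ⟨rfl, show r ≤ b0.2.2 + 1 by omega, show b0.2.2 + 1 < r + p r by omega⟩
    have := ht.2.1 b0 hb0 _ hb1 (by rw [hc0]) rfl (by simp)
    have := hval _ hb1
    omega
  -- removability
  have hrem : removable p r := by
    refine ⟨hpr, ?_⟩
    by_contra hcc
    push_neg at hcc
    obtain ⟨hc3, hc4⟩ := hcc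
    have hc5 : p (r + 1) < p r := h.1.2 r hc3
    have hc6 : p r = p (r + 1) + 1 := by omega
    have hb2 : ((0:ℕ), (r + 1, b0.2.2)) ∈ (sh p).cells := by
      rw [mem_cells]
      refine ⟨rfl, show r + 1 ≤ b0.2.2 by omega, show b0.2.2 < r + 1 + p (r+1) by omega⟩
    have := ht.2.2.1 b0 hb0 _ hb2 (by rw [hc0]) rfl (by simp; omega)
    have := hval _ hb2
    omega
  have hb0eq : b0 = ((0:ℕ), (r, r + p r - 1)) := by
    rcases b0 with ⟨l, i, j⟩
    simp only at hc0 hcol hrdef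
    rw [hc0, hcol]
  refine ⟨hrem, hb0eq, ?_⟩
  have hcd : (sh (dec p r)).cells = (sh p).cells \ {b0} := by
    rw [cells_dec hpr, ← hb0eq]
  have hmemd : ∀ b, b ∈ (sh (dec p r)).cells → b ∈ (sh p).cells ∧ b ≠ b0 := by
    intro b hb
    rw [hcd] at hb
    exact ⟨hb.1, by simpa using hb.2⟩
  refine ⟨⟨?_, ?_, ?_⟩, ?_, ?_, ?_⟩
  · intro b hb
    obtain ⟨hb1, hb2⟩ := hmemd b hb
    have h1 := hval b hb1
    have h2 : tab b ≠ n := by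
      intro hc
      exact hb2 (ht.1.injOn hb1 hb0 (by rw [hc, hv]))
    simp [hb2, Set.mem_Icc]
    omega
  · intro b hb b' hb' he
    obtain ⟨hb1, hb2⟩ := hmemd b hb
    obtain ⟨hb1', hb2'⟩ := hmemd b' hb'
    simp [hb2, hb2'] at he
    exact ht.1.injOn hb1 hb1' he
  · intro m hm
    rw [Set.mem_Icc] at hm
    obtain ⟨b, hb, hbe⟩ := ht.1.surjOn (Set.mem_Icc.2 (by omega : 1 ≤ m ∧ m ≤ n))
    have hne : b ≠ b0 := by
      intro hc
      rw [hc, hv] at hbe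
      omega
    refine ⟨b, ?_, by simpa [hne] using hbe⟩
    rw [hcd]
    exact ⟨hb, by simpa using hne⟩
  · intro b hb b' hb' h1 h2 h3
    obtain ⟨hb1, hb2⟩ := hmemd b hb
    obtain ⟨hb1', hb2'⟩ := hmemd b' hb'
    simpa [hb2, hb2'] using ht.2.1 b hb1 b' hb1' h1 h2 h3
  · intro b hb b' hb' h1 h2 h3
    obtain ⟨hb1, hb2⟩ := hmemd b hb
    obtain ⟨hb1', hb2'⟩ := hmemd b' hb'
    simpa [hb2, hb2'] using ht.2.2.1 b hb1 b' hb1' h1 h2 h3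
  · intro b hb
    by_cases e : b = b0
    · simp [e]
    · have : b ∉ (sh p).cells := by
        intro hc
        apply hb
        rw [hcd]
        exact ⟨hc, by simpa using e⟩
      simp [e, ht.2.2.2 b this]

end
end SPP

namespace SPP
open MultiShape Finset

lemma nat_card_sigma' {ι : Type*} [Fintype ι] (β : ι → Type*) [∀ i, Finite (β i)] :
    Nat.card (Σ i, β i) = ∑ i, Nat.card (β i) := by
  classical
  have : ∀ i, Fintype (β i) := fun i => Fintype.ofFinite _
  simp [Nat.card_eq_fintype_card]

open Classical in
theorem branching {p : ℕ → ℕ} {n : ℕ} (h : Sh p n) (hn : 1 ≤ n) :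
    g p n = ∑ r ∈ Finset.range n, if removable p r then g (dec p r) (n - 1) else 0 := by
  classical
  set R : Finset ℕ := (Finset.range n).filter (fun r => removable p r) with hR
  have hmemR : ∀ r, r ∈ R ↔ removable p r := by
    intro r
    rw [hR, Finset.mem_filter, Finset.mem_range]
    exact ⟨And.right, fun hr => ⟨removable_lt h hr, hr⟩⟩
  have hfib : ∀ r : {x // x ∈ R}, Finite {tab // IsStd (sh (dec p (r : ℕ))) (n - 1) tab} :=
    fun r => std_finite (sum_dec h ((hmemR _).1 r.2))
  let B : (Σ r : {x // x ∈ R}, {tab // IsStd (sh (dec p (r : ℕ))) (n - 1) tab}) →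
      {tab // IsStd (sh p) n tab} :=
    fun x => ⟨fun b => if b = ((0:ℕ), ((x.1:ℕ), (x.1:ℕ) + p (x.1:ℕ) - 1)) then n else x.2.1 b,
      std_extend h ((hmemR _).1 x.1.2) x.2.2⟩
  have hBij : Function.Bijective B := by
    constructor
    · rintro ⟨⟨r, hr⟩, tb, htb⟩ ⟨⟨s, hs⟩, tc, htc⟩ hxy
      have hxy' : ∀ b, (if b = ((0:ℕ), (r, r + p r - 1)) then n else tb b)
          = (if b = ((0:ℕ), (s, s + p s - 1)) then n else tc b) := by
        intro b
        exact congrFun (congrArg Subtype.val hxy) b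
      have hrs : r = s := by
        by_contra hne
        have h1 := hxy' ((0:ℕ), (r, r + p r - 1))
        rw [if_pos rfl] at h1
        have hne' : ((0:ℕ), (r, r + p r - 1)) ≠ ((0:ℕ), (s, s + p s - 1)) := by
          intro hc
          simp only [Prod.mk.injEq] at hc
          exact hne hc.2.1
        rw [if_neg hne'] at h1
        by_cases hmem : ((0:ℕ), (r, r + p r - 1)) ∈ (sh (dec p s)).cells
        · have h2 := htc.1.mapsTo hmem
          rw [Set.mem_Icc] at h2
          omega
        · have h2 := htc.2.2.2 _ hmem
          omega
      subst hrs
      have hrr : removable p r := (hmemR r).1 hr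
      have htbc : tb = tc := by
        funext b
        by_cases e : b = ((0:ℕ), (r, r + p r - 1))
        · rw [e, htb.2.2.2 _ (corner_not_mem_dec hrr.1), htc.2.2.2 _ (corner_not_mem_dec hrr.1)]
        · have h1 := hxy' b
          rwa [if_neg e, if_neg e] at h1
      subst htbc
      rfl
    · rintro ⟨tabf, htab⟩
      have hns : (n : ℕ) ∈ Set.Icc 1 n := Set.mem_Icc.2 ⟨hn, le_rfl⟩
      obtain ⟨b0, hb0, hv⟩ := htab.1.surjOn hns
      obtain ⟨hrem, hb0eq, hstd'⟩ := std_restrict h hn htab hb0 hv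
      refine ⟨⟨⟨b0.2.1, (hmemR _).2 hrem⟩, ⟨fun b => if b = b0 then 0 else tabf b, hstd'⟩⟩, ?_⟩
      apply Subtype.ext
      funext b
      show (if b = ((0:ℕ), (b0.2.1, b0.2.1 + p b0.2.1 - 1)) then n
        else if b = b0 then 0 else tabf b) = tabf b
      by_cases e : b = ((0:ℕ), (b0.2.1, b0.2.1 + p b0.2.1 - 1))
      · rw [if_pos e, e, ← hb0eq, hv]
      · rw [if_neg e, if_neg (show b ≠ b0 by rw [hb0eq]; exact e)]
  have h1 : g p n = Nat.card
      (Σ r : {x // x ∈ R}, {tab // IsStd (sh (dec p (r : ℕ))) (n - 1) tab}) :=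
    (Nat.card_congr (Equiv.ofBijective B hBij)).symm
  rw [h1, nat_card_sigma']
  have h2 : ∀ r : {x // x ∈ R},
      Nat.card {tab // IsStd (sh (dec p (r : ℕ))) (n - 1) tab} = g (dec p (r : ℕ)) (n - 1) :=
    fun r => rfl
  rw [Finset.sum_congr rfl (fun r _ => h2 r)]
  rw [Finset.sum_coe_sort R (fun r => g (dec p r) (n - 1))]
  rw [hR, Finset.sum_filter]
end SPP

namespace SPP
open MultiShape Finset

lemma sum_range_succ_zero {f : ℕ → ℕ} {m : ℕ} (h : f m = 0) :
    ∑ r ∈ Finset.range (m + 1), f r = ∑ r ∈ Finset.range m, f r := by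
  rw [Finset.sum_range_succ, h, add_zero]

lemma tele (c : ℕ → ℕ) (hc : ∀ r, c (r + 1) ≤ c r) (n : ℕ) :
    ∑ r ∈ Finset.range n, (c r - c (r + 1)) = c 0 - c n := by
  have hmono : ∀ m, c m ≤ c 0 := by
    intro m
    induction m with
    | zero => exact le_rfl
    | succ m ih => exact le_trans (hc m) ih
  induction n with
  | zero => simp
  | succ n ih =>
    rw [Finset.sum_range_succ, ih]
    have := hc n
    have := hmono n
    omega

open Classical in
lemma local_rel {p : ℕ → ℕ} {n : ℕ} (h : Sh p n) :
    ∑ r ∈ Finset.range (n + 1), (if addable p r then wA p r else 0)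
      = (∑ r ∈ Finset.range n, (if removable p r then wR p r else 0)) + 1 := by
  set c : ℕ → ℕ := fun r => if p r = 0 then 0 else 1 with hc
  have hcle : ∀ r, c (r + 1) ≤ c r := by
    intro r
    have : p (r + 1) ≤ p r := h.1.1 (Nat.le_succ r)
    simp only [hc]
    split_ifs <;> omega
  have key : ∀ r, (if removable p r then wR p r else 0)
      = (if addable p (r + 1) then wA p (r + 1) else 0) + (c r - c (r + 1)) := by
    intro r
    have h1 : p (r + 1) ≤ p r := h.1.1 (Nat.le_succ r)
    have h2 : p (r + 1) ≠ 0 → p (r + 1) < p r := h.1.2 r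
    simp only [removable, addable, wA, wR, hc, Nat.add_sub_cancel,
      Nat.add_one_ne_zero, false_or]
    by_cases ha : p r = 0 <;> by_cases hb : p (r + 1) = 0 <;>
      by_cases hc1 : p (r + 1) + 1 < p r <;> by_cases hd : p r = 1 <;>
      simp [ha, hb, hc1, hd] <;> omega
  have hsum : ∑ r ∈ Finset.range n, (if removable p r then wR p r else 0)
      = (∑ r ∈ Finset.range n, (if addable p (r + 1) then wA p (r + 1) else 0))
        + (c 0 - c n) := by
    rw [← tele c hcle n, ← Finset.sum_add_distrib]
    exact Finset.sum_congr rfl (fun r _ => key r)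
  have hsplit : ∑ r ∈ Finset.range (n + 1), (if addable p r then wA p r else 0)
      = (∑ r ∈ Finset.range n, (if addable p (r + 1) then wA p (r + 1) else 0))
        + (if addable p 0 then wA p 0 else 0) := by
    rw [Finset.sum_range_succ']
  have hadd0 : addable p 0 := Or.inl rfl
  have h0 : (if addable p 0 then wA p 0 else 0) = 1 + c 0 := by
    rw [if_pos hadd0]
    simp only [wA, hc]
    split_ifs <;> omega
  have hcn : c n = 0 := by
    simp only [hc]
    rw [if_pos (h.2.2 n le_rfl)]
  omega

open Classical in
theorem key_rel : ∀ (n : ℕ) (p : ℕ → ℕ), Sh p n →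
    ∑ r ∈ Finset.range (n + 1),
      (if addable p r then wA p r * g (inc p r) (n + 1) else 0) = (n + 1) * g p n := by
  intro n
  induction n with
  | zero =>
    intro p h
    have hp0 : ∀ j, p j = 0 := fun j => h.2.2 j (Nat.zero_le j)
    have hadd : addable p 0 := Or.inl rfl
    rw [Finset.sum_range_one, if_pos hadd]
    have hwa : wA p 0 = 1 := by simp [wA, hp0 0]
    have hsh1 : Sh (inc p 0) 1 := sum_inc h hadd
    have hg1 : g (inc p 0) 1 = 1 := by
      rw [branching hsh1 le_rfl, Finset.sum_range_one]
      have hrem : removable (inc p 0) 0 := removable_inc h.1 hadd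
      rw [if_pos hrem, show (1:ℕ) - 1 = 0 from rfl, dec_inc]
      exact g_empty hp0
    rw [hwa, hg1, one_mul, g_empty hp0]
  | succ n IH =>
    intro p h
    set u : Finset ℕ := Finset.range (n + 1 + 1) with hu
    set X : ℕ := g p (n + 1) with hX
    set F : ℕ → ℕ → ℕ := fun r s =>
      if addable p r ∧ removable (inc p r) s
      then wA p r * g (dec (inc p r) s) (n + 1) else 0 with hF
    set G : ℕ → ℕ → ℕ := fun s r =>
      if removable p s ∧ addable (dec p s) r
      then wA (dec p s) r * g (inc (dec p s) r) (n + 1) else 0 with hG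
    -- Step 1: expand by branching
    have step1 : ∑ r ∈ u, (if addable p r then wA p r * g (inc p r) (n + 1 + 1) else 0)
        = ∑ r ∈ u, ∑ s ∈ u, F r s := by
      apply Finset.sum_congr rfl
      intro r _
      by_cases ha : addable p r
      · rw [if_pos ha]
        have hbr := branching (sum_inc h ha) (by omega)
        rw [Nat.add_sub_cancel] at hbr
        rw [hbr, Finset.mul_sum]
        apply Finset.sum_congr rfl
        intro s _
        by_cases hb : removable (inc p r) s
        · simp [hF, ha, hb]
        · simp [hF, ha, hb]
      · rw [if_neg ha]
        exact (Finset.sum_eq_zero (fun s _ => by simp [hF, ha])).symm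
    -- Step 2: diagonal terms
    have step2 : ∀ r ∈ u, F r r = (if addable p r then wA p r else 0) * X := by
      intro r _
      by_cases ha : addable p r
      · have hrem : removable (inc p r) r := removable_inc h.1 ha
        simp only [hF, if_pos (And.intro ha hrem), if_pos ha, dec_inc, hX]
      · simp [hF, ha]
    -- off-diagonal equality F r s = G s r for r ≠ s
    have hFG : ∀ r s, r ≠ s → F r s = G s r := by
      intro r s hrs
      simp only [hF, hG]
      have hiff := commute_iff (p := p) hrs
      have hwa : wA (dec p s) r = wA p r := by simp [wA, dec, hrs]
      by_cases hcc : addable p r ∧ removable (inc p r) s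
      · rw [if_pos hcc, if_pos (hiff.1 hcc), hwa, ← dec_inc_comm hrs]
      · rw [if_neg hcc, if_neg (fun hc' => hcc (hiff.2 hc'))]
    -- Step 3: diagonal + off-diagonal decomposition
    have step3 : ∑ r ∈ u, ∑ s ∈ u, F r s
        = (∑ r ∈ u, F r r) + ∑ r ∈ u, ∑ s ∈ u.erase r, F r s := by
      rw [← Finset.sum_add_distrib]
      exact Finset.sum_congr rfl (fun r hr => (Finset.add_sum_erase _ _ hr).symm)
    -- Step 4: swap the off-diagonal double sum
    have step4 : ∑ r ∈ u, ∑ s ∈ u.erase r, F r s = ∑ s ∈ u, ∑ r ∈ u.erase s, G s r := by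
      rw [Finset.sum_comm' (s' := fun s => u.erase s) (t' := u)]
      · exact Finset.sum_congr rfl (fun s _ => Finset.sum_congr rfl
          (fun r hr => hFG r s (Finset.ne_of_mem_erase hr)))
      · intro r s
        simp only [Finset.mem_erase]
        constructor
        · rintro ⟨h1, h2, h3⟩; exact ⟨⟨Ne.symm h2, h1⟩, h3⟩
        · rintro ⟨⟨h1, h2⟩, h3⟩; exact ⟨h2, Ne.symm h1, h3⟩
    -- Step 5: complete each inner off-diagonal sum using the IH
    have step5 : ∀ s ∈ u, (∑ r ∈ u.erase s, G s r)
          + (if removable p s then wR p s else 0) * X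
        = (if removable p s then (n + 1) * g (dec p s) n else 0) := by
      intro s hs
      by_cases hrs : removable p s
      · have hmu : Sh (dec p s) n := by
          have := sum_dec h hrs
          rwa [Nat.add_sub_cancel] at this
        have hGss : G s s = wR p s * X := by
          have had : addable (dec p s) s := addable_dec h.1 hrs
          have hwr : wA (dec p s) s = wR p s := by
            have := hrs.1
            simp only [wA, wR, dec, if_pos rfl]
            split_ifs <;> omega
          simp only [hG, if_pos (And.intro hrs had), hwr, inc_dec hrs.1, hX]
        have hfull : ∑ r ∈ u, G s r = (n + 1) * g (dec p s) n := by
          have hIH := IH (dec p s) hmu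
          have hlast : G s (n + 1) = 0 := by
            simp only [hG]
            rw [if_neg]
            rintro ⟨-, hadd⟩
            have := addable_le hmu hadd
            omega
          rw [hu, sum_range_succ_zero hlast]
          rw [← hIH]
          apply Finset.sum_congr rfl
          intro r _
          simp only [hG, hrs, true_and]
        calc (∑ r ∈ u.erase s, G s r) + (if removable p s then wR p s else 0) * X
            = G s s + ∑ r ∈ u.erase s, G s r := by rw [if_pos hrs, ← hGss, add_comm]
          _ = ∑ r ∈ u, G s r := Finset.add_sum_erase _ _ hs
          _ = (n + 1) * g (dec p s) n := hfull
          _ = (if removable p s then (n + 1) * g (dec p s) n else 0) := by rw [if_pos hrs]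
      · have hz : ∀ r ∈ u.erase s, G s r = 0 := by
          intro r _
          simp [hG, hrs]
        rw [Finset.sum_eq_zero hz, if_neg hrs, if_neg hrs, zero_mul, add_zero]
    -- assemble
    set A : ℕ := ∑ r ∈ u, (if addable p r then wA p r else 0) with hA
    set RwS : ℕ := ∑ s ∈ u, (if removable p s then wR p s else 0) with hRwS
    have diag : ∑ r ∈ u, F r r = A * X := by
      rw [hA, Finset.sum_mul]
      exact Finset.sum_congr rfl step2
    have e1 : (∑ s ∈ u, ∑ r ∈ u.erase s, G s r) + RwS * X = (n + 1) * X := by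
      have hbig := Finset.sum_congr rfl step5
      rw [Finset.sum_add_distrib] at hbig
      rw [hRwS, Finset.sum_mul, hbig]
      have hX' : X = ∑ s ∈ u, (if removable p s then g (dec p s) n else 0) := by
        have hbr := branching h (by omega)
        rw [Nat.add_sub_cancel] at hbr
        have hlast : (if removable p (n + 1) then g (dec p (n + 1)) n else 0) = 0 := by
          rw [if_neg]
          intro hc
          have := removable_lt h hc
          omega
        rw [hX, hbr, hu]
        exact (sum_range_succ_zero
          (f := fun s => if removable p s then g (dec p s) n else 0)
          (m := n + 1) hlast).symm
      rw [hX', Finset.mul_sum]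
      apply Finset.sum_congr rfl
      intro s _
      by_cases hrs : removable p s <;> simp [hrs]
    have e2 : A = RwS + 1 := by
      have hl := local_rel h
      have hlast : (if removable p (n + 1) then wR p (n + 1) else 0) = 0 := by
        rw [if_neg]
        intro hc
        have := removable_lt h hc
        omega
      rw [hA, hRwS, hu, hl]
      congr 1
      exact (sum_range_succ_zero
        (f := fun s => if removable p s then wR p s else 0)
        (m := n + 1) hlast).symm
    rw [step1, step3, step4, diag]
    have e3 : (A * X + ∑ s ∈ u, ∑ r ∈ u.erase s, G s r) + RwS * X
        = ((n + 1 + 1) * X) + RwS * X := by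
      rw [add_assoc, e1, e2]
      ring
    exact Nat.add_right_cancel e3
end SPP

namespace SPP
open MultiShape Finset

noncomputable section
open Classical

/-- extend a tuple to a function on ℕ -/
def ext {n : ℕ} (q : Fin n → Fin (n + 1)) : ℕ → ℕ :=
  fun i => if h : i < n then (q ⟨i, h⟩ : ℕ) else 0

/-- the finset of strict partitions of `n`, as functions -/
def SPn (n : ℕ) : Finset (ℕ → ℕ) :=
  ((Finset.univ : Finset (Fin n → Fin (n + 1))).filter (fun q => Sh (ext q) n)).image ext

lemma mem_SPn {n : ℕ} {f : ℕ → ℕ} : f ∈ SPn n ↔ Sh f n := by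
  constructor
  · intro hf
    rw [SPn, Finset.mem_image] at hf
    obtain ⟨q, hq, rfl⟩ := hf
    exact (Finset.mem_filter.1 hq).2
  · intro hf
    rw [SPn, Finset.mem_image]
    have hle : ∀ i, f i < n + 1 := fun i => Nat.lt_succ_of_le (part_le hf i)
    refine ⟨fun i => ⟨f i.1, hle i.1⟩, ?_, ?_⟩
    · rw [Finset.mem_filter]
      refine ⟨Finset.mem_univ _, ?_⟩
      have he : ext (fun i : Fin n => (⟨f i.1, hle i.1⟩ : Fin (n+1))) = f := by
        funext i
        rw [ext]
        by_cases hi : i < n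
        · simp [hi]
        · rw [dif_neg hi]
          exact (hf.2.2 i (by omega)).symm
      rw [he]
      exact hf
    · funext i
      rw [ext]
      by_cases hi : i < n
      · simp [hi]
      · rw [dif_neg hi]
        exact (hf.2.2 i (by omega)).symm

/-- the weighted sum over strict partitions of `n` -/
def T (n : ℕ) : ℕ := ∑ p ∈ SPn n, 2 ^ (n - ell p n) * (g p n) ^ 2

lemma ell_le {p : ℕ → ℕ} (n : ℕ) : ell p n ≤ n := by
  calc ell p n ≤ (Finset.range n).card := Finset.card_filter_le _ _
  _ = n := Finset.card_range n

lemma ell_succ {p : ℕ → ℕ} {n : ℕ} (h : p n = 0) : ell p (n + 1) = ell p n := by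
  rw [ell, ell, Finset.range_add_one, Finset.filter_insert, if_neg (by simp [h])]

lemma ell_inc {p : ℕ → ℕ} {n r : ℕ} (hr : r ≤ n) :
    ell (inc p r) (n + 1) = ell p (n + 1) + (if p r = 0 then 1 else 0) := by
  have hset : (Finset.range (n+1)).filter (fun i => inc p r i ≠ 0)
      = insert r ((Finset.range (n+1)).filter (fun i => p i ≠ 0)) := by
    ext i
    rw [Finset.mem_insert, Finset.mem_filter, Finset.mem_filter, Finset.mem_range]
    constructor
    · rintro ⟨hi, hne⟩
      by_cases e : i = r
      · exact Or.inl e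
      · right
        refine ⟨hi, ?_⟩
        simpa [inc, e] using hne
    · rintro (rfl | ⟨hi, hne⟩)
      · exact ⟨by omega, by simp [inc]⟩
      · refine ⟨hi, ?_⟩
        by_cases e : i = r
        · subst e; simp [inc]
        · simpa [inc, e] using hne
    
  rw [ell, ell, hset, Finset.card_insert_eq_ite]
  by_cases hz : p r = 0
  · have hmem : r ∉ (Finset.range (n+1)).filter (fun i => p i ≠ 0) := by
      rw [Finset.mem_filter]
      rintro ⟨-, hc⟩
      exact hc hz
    rw [if_neg hmem, if_pos hz]
  · have hmem : r ∈ (Finset.range (n+1)).filter (fun i => p i ≠ 0) :=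
      Finset.mem_filter.2 ⟨Finset.mem_range.2 (by omega), hz⟩
    rw [if_pos hmem, if_neg hz, add_zero]

lemma weight_inc {p : ℕ → ℕ} {n r : ℕ} (h : Sh p n) (hr : addable p r) :
    2 ^ (n + 1 - ell (inc p r) (n + 1)) = 2 ^ (n - ell p n) * wA p r := by
  have h1 : ell (inc p r) (n + 1) = ell p (n + 1) + (if p r = 0 then 1 else 0) :=
    ell_inc (addable_le h hr)
  have h2 : ell p (n + 1) = ell p n := ell_succ (h.2.2 n le_rfl)
  have h3 : ell p n ≤ n := ell_le n
  rw [h1, h2, wA]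
  by_cases hz : p r = 0
  · rw [if_pos hz, if_pos hz, mul_one]
    congr 1
    omega
  · rw [if_neg hz, if_neg hz]
    rw [show n + 1 - (ell p n + 0) = (n - ell p n) + 1 by omega, pow_succ]

lemma T_zero : T 0 = 1 := by
  have hSPn0 : SPn 0 = {fun _ => 0} := by
    ext f
    rw [mem_SPn, Finset.mem_singleton]
    constructor
    · intro hf
      funext j
      exact hf.2.2 j (Nat.zero_le j)
    · rintro rfl
      refine ⟨⟨antitone_const, fun i hi => absurd rfl hi⟩, by simp, fun j _ => rfl⟩
  rw [T, hSPn0, Finset.sum_singleton, g_empty (fun _ => rfl)]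
  simp [ell]

lemma reindex (n : ℕ) (A : (ℕ → ℕ) → ℕ → ℕ) :
    ∑ p ∈ SPn (n + 1), ∑ r ∈ Finset.range (n + 1),
        (if removable p r then A p r else 0)
      = ∑ μ ∈ SPn n, ∑ r ∈ Finset.range (n + 1),
        (if addable μ r then A (inc μ r) r else 0) := by
  rw [← Finset.sum_product' (s := SPn (n+1)) (t := Finset.range (n+1))
    (f := fun p r => if removable p r then A p r else 0)]
  rw [← Finset.sum_product' (s := SPn n) (t := Finset.range (n+1))
    (f := fun μ r => if addable μ r then A (inc μ r) r else 0)]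
  rw [← Finset.sum_filter (fun z : (ℕ → ℕ) × ℕ => removable z.1 z.2)
    (fun z : (ℕ → ℕ) × ℕ => A z.1 z.2)]
  rw [← Finset.sum_filter (fun z : (ℕ → ℕ) × ℕ => addable z.1 z.2)
    (fun z : (ℕ → ℕ) × ℕ => A (inc z.1 z.2) z.2)]
  apply Finset.sum_nbij' (i := fun z : (ℕ → ℕ) × ℕ => (dec z.1 z.2, z.2))
    (j := fun z : (ℕ → ℕ) × ℕ => (inc z.1 z.2, z.2))
  · rintro ⟨p, r⟩ hz
    rw [Finset.mem_filter, Finset.mem_product, mem_SPn] at hz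
    obtain ⟨⟨hp, hrr⟩, hrem⟩ := hz
    rw [Finset.mem_filter, Finset.mem_product, mem_SPn]
    have hdec : Sh (dec p r) n := by
      have := sum_dec hp hrem
      rwa [Nat.add_sub_cancel] at this
    exact ⟨⟨hdec, hrr⟩, addable_dec hp.1 hrem⟩
  · rintro ⟨μ, r⟩ hz
    rw [Finset.mem_filter, Finset.mem_product, mem_SPn] at hz
    obtain ⟨⟨hμ, hrr⟩, hadd⟩ := hz
    rw [Finset.mem_filter, Finset.mem_product, mem_SPn]
    exact ⟨⟨sum_inc hμ hadd, hrr⟩, removable_inc hμ.1 hadd⟩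
  · rintro ⟨p, r⟩ hz
    rw [Finset.mem_filter] at hz
    have hpr : p r ≠ 0 := hz.2.1
    rw [Prod.mk.injEq]
    exact ⟨inc_dec hpr, rfl⟩
  · rintro ⟨μ, r⟩ hz
    rw [Prod.mk.injEq]
    exact ⟨dec_inc μ r, rfl⟩
  · rintro ⟨p, r⟩ hz
    rw [Finset.mem_filter] at hz
    simp only []
    rw [inc_dec hz.2.1]

open Classical in
lemma T_succ (n : ℕ) : T (n + 1) = (n + 1) * T n := by
  have step1 : T (n + 1) = ∑ p ∈ SPn (n + 1), ∑ r ∈ Finset.range (n + 1),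
      (if removable p r then
        2 ^ (n + 1 - ell p (n + 1)) * g p (n + 1) * g (dec p r) n else 0) := by
    rw [T]
    apply Finset.sum_congr rfl
    intro p hp
    have hsh : Sh p (n + 1) := mem_SPn.1 hp
    have hbr := branching hsh (by omega)
    rw [Nat.add_sub_cancel] at hbr
    calc 2 ^ (n + 1 - ell p (n + 1)) * g p (n + 1) ^ 2
        = (2 ^ (n + 1 - ell p (n + 1)) * g p (n + 1)) * g p (n + 1) := by ring
      _ = (2 ^ (n + 1 - ell p (n + 1)) * g p (n + 1)) * ∑ r ∈ Finset.range (n + 1),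
            (if removable p r then g (dec p r) n else 0) := by rw [← hbr]
      _ = ∑ r ∈ Finset.range (n + 1), (if removable p r then
            2 ^ (n + 1 - ell p (n + 1)) * g p (n + 1) * g (dec p r) n else 0) := by
          rw [Finset.mul_sum]
          apply Finset.sum_congr rfl
          intro r _
          by_cases hr : removable p r <;> simp [hr, mul_assoc]
  rw [step1,
    reindex n (fun p r => 2 ^ (n + 1 - ell p (n + 1)) * g p (n + 1) * g (dec p r) n)]
  rw [T, Finset.mul_sum]
  apply Finset.sum_congr rfl
  intro μ hμ
  have hshμ : Sh μ n := mem_SPn.1 hμ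
  have hinner : ∑ r ∈ Finset.range (n + 1),
      (if addable μ r then
        2 ^ (n + 1 - ell (inc μ r) (n + 1)) * g (inc μ r) (n + 1)
          * g (dec (inc μ r) r) n else 0)
    = 2 ^ (n - ell μ n) * g μ n * ∑ r ∈ Finset.range (n + 1),
        (if addable μ r then wA μ r * g (inc μ r) (n + 1) else 0) := by
    rw [Finset.mul_sum]
    apply Finset.sum_congr rfl
    intro r _
    by_cases hr : addable μ r
    · rw [if_pos hr, if_pos hr, dec_inc, weight_inc hshμ hr]
      ring
    · simp [hr]
  rw [hinner, key_rel n μ hshμ]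
  ring

lemma T_eq : ∀ n : ℕ, T n = n.factorial := by
  intro n
  induction n with
  | zero => rw [T_zero, Nat.factorial_zero]
  | succ n ih => rw [T_succ, ih, Nat.factorial_succ]

end
end SPP

namespace SPP
open MultiShape Finset

noncomputable section
open Classical

variable {t : ℕ}

lemma ext_apply {q : Fin t → Fin (t + 1)} {i : Fin t} : ext q (i : ℕ) = q i := by
  simp [ext, i.isLt]

lemma ell_ext (q : Fin t → Fin (t + 1)) :
    (Finset.univ.filter fun i : Fin t => (q i : ℕ) ≠ 0).card = ell (ext q) t := by
  rw [ell, Finset.card_filter, Finset.card_filter,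
    ← Fin.sum_univ_eq_sum_range (fun k => if ext q k ≠ 0 then 1 else 0) t]
  apply Finset.sum_congr rfl
  intro i _
  rw [ext_apply]

lemma sum_ext (q : Fin t → Fin (t + 1)) :
    ∑ i ∈ Finset.range t, ext q i = ∑ i : Fin t, (q i : ℕ) := by
  rw [← Fin.sum_univ_eq_sum_range (fun k => ext q k) t]
  exact Finset.sum_congr rfl (fun i _ => ext_apply)

lemma cond_iff (q : Fin t → Fin (t + 1)) :
    (IsStrictPartFun (ext q) ∧ (∑ i : Fin t, (q i : ℕ)) = t) ↔ Sh (ext q) t := by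
  constructor
  · rintro ⟨h1, h2⟩
    refine ⟨h1, by rw [sum_ext, h2], ?_⟩
    intro j hj
    rw [ext, dif_neg (by omega)]
  · rintro ⟨h1, h2, h3⟩
    exact ⟨h1, by rw [← sum_ext, h2]⟩

/-- inverse of `ext` on strict partitions -/
def unext (t : ℕ) (f : ℕ → ℕ) : Fin t → Fin (t + 1) :=
  fun i => ⟨min (f i.1) t, by omega⟩

lemma ext_unext {f : ℕ → ℕ} (hf : Sh f t) : ext (unext t f) = f := by
  funext i
  rw [ext]
  by_cases hi : i < t
  · rw [dif_pos hi]
    show min (f i) t = f i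
    have := part_le hf i
    omega
  · rw [dif_neg hi]
    exact (hf.2.2 i (by omega)).symm

open Classical in
lemma nat_sum (t : ℕ) :
    ∑ q : Fin t → Fin (t + 1),
      (if IsStrictPartFun (ext q) ∧ (∑ i : Fin t, (q i : ℕ)) = t
        then 2 ^ (t - ell (ext q) t) * g (ext q) t ^ 2 else 0) = T t := by
  rw [← Finset.sum_filter
    (fun q : Fin t → Fin (t + 1) =>
      IsStrictPartFun (ext q) ∧ (∑ i : Fin t, (q i : ℕ)) = t)
    (fun q => 2 ^ (t - ell (ext q) t) * g (ext q) t ^ 2)]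
  rw [T]
  apply Finset.sum_nbij' (i := fun q => ext q) (j := fun f => unext t f)
  · intro q hq
    rw [Finset.mem_filter] at hq
    exact mem_SPn.2 ((cond_iff q).1 hq.2)
  · intro f hf
    have hsh : Sh f t := mem_SPn.1 hf
    rw [Finset.mem_filter]
    refine ⟨Finset.mem_univ _, ?_⟩
    exact (cond_iff (unext t f)).2 (by rw [ext_unext hsh]; exact hsh)
  · intro q hq
    rw [Finset.mem_filter] at hq
    have hsh : Sh (ext q) t := (cond_iff q).1 hq.2
    funext i
    apply Fin.ext
    show min (ext q i.1) t = (q i : ℕ)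
    rw [ext_apply]
    have : (q i : ℕ) ≤ t := by omega
    omega
  · intro f hf
    exact ext_unext (mem_SPn.1 hf)
  · intro q _
    rfl
end
end SPP

open MultiShape Classical in
/-- `Σ_{ξ ∈ P^s_t} (2^{(t-ℓ(ξ))/2} |Std(ξ)|)² = t!`.  Strict partitions of `t`
are encoded as functions `q : Fin t → Fin (t+1)` (the part sizes, with trailing
zeros), `ℓ(ξ)` is the number of nonzero parts, and `|Std(ξ)|` is the number of
standard shifted tableaux of shape `ξ`. -/
theorem stmt8 (t : ℕ) (ht : 0 < t) :
    ∑ q : Fin t → Fin (t + 1),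
      (if IsStrictPartFun (fun i => if h : i < t then (q ⟨i, h⟩ : ℕ) else 0) ∧
          (∑ i : Fin t, (q i : ℕ)) = t then
        (((2 : ℝ) ^ (((t : ℝ) -
              ((Finset.univ.filter fun i : Fin t => (q i : ℕ) ≠ 0).card : ℝ)) / 2)) *
          (Nat.card {tab : ℕ × ℕ × ℕ → ℕ //
            IsStd ⟨1, fun _ => true,
              fun _ i => if h : i < t then (q ⟨i, h⟩ : ℕ) else 0⟩ t tab} : ℝ)) ^ 2
      else 0) = t.factorial := by
  classical
  have hE : ∀ q : Fin t → Fin (t + 1),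
      (fun i => if h : i < t then ((q ⟨i, h⟩ : Fin (t + 1)) : ℕ) else 0) = SPP.ext q :=
    fun _ => rfl
  have hterm : ∀ q : Fin t → Fin (t + 1),
      (if IsStrictPartFun (fun i => if h : i < t then (q ⟨i, h⟩ : ℕ) else 0) ∧
          (∑ i : Fin t, (q i : ℕ)) = t then
        (((2 : ℝ) ^ (((t : ℝ) -
              ((Finset.univ.filter fun i : Fin t => (q i : ℕ) ≠ 0).card : ℝ)) / 2)) *
          (Nat.card {tab : ℕ × ℕ × ℕ → ℕ //
            IsStd ⟨1, fun _ => true,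
              fun _ i => if h : i < t then (q ⟨i, h⟩ : ℕ) else 0⟩ t tab} : ℝ)) ^ 2
      else 0)
      = (((if IsStrictPartFun (SPP.ext q) ∧ (∑ i : Fin t, (q i : ℕ)) = t
          then 2 ^ (t - SPP.ell (SPP.ext q) t) * SPP.g (SPP.ext q) t ^ 2 else 0 : ℕ)) : ℝ) := by
    intro q
    have hgq : Nat.card {tab : ℕ × ℕ × ℕ → ℕ //
        IsStd ⟨1, fun _ => true,
          fun _ i => if h : i < t then (q ⟨i, h⟩ : ℕ) else 0⟩ t tab} = SPP.g (SPP.ext q) t := rfl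
    by_cases hc : IsStrictPartFun (SPP.ext q) ∧ (∑ i : Fin t, (q i : ℕ)) = t
    · rw [hE q] at *
      rw [if_pos hc, if_pos hc]
      have hsh : SPP.Sh (SPP.ext q) t := (SPP.cond_iff q).1 hc
      have hl : SPP.ell (SPP.ext q) t ≤ t := SPP.ell_le t
      rw [SPP.ell_ext q, hgq]
      set L := SPP.ell (SPP.ext q) t with hL
      set c : ℝ := (SPP.g (SPP.ext q) t : ℝ) with hcc
      have h2 : ((2:ℝ) ^ (((t : ℝ) - (L : ℝ)) / 2)) ^ (2:ℕ) = ((2 ^ (t - L) : ℕ) : ℝ) := by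
        rw [← Real.rpow_natCast ((2:ℝ) ^ (((t : ℝ) - (L : ℝ)) / 2)) 2,
          ← Real.rpow_mul (by norm_num : (0:ℝ) ≤ 2)]
        have he : ((t : ℝ) - (L : ℝ)) / 2 * (2:ℕ) = ((t - L : ℕ) : ℝ) := by
          push_cast [hl]
          ring
        rw [he, Real.rpow_natCast]
        push_cast
        ring
      calc ((2:ℝ) ^ (((t : ℝ) - (L : ℝ)) / 2) * c) ^ 2
          = ((2:ℝ) ^ (((t : ℝ) - (L : ℝ)) / 2)) ^ (2:ℕ) * c ^ 2 := by ring
        _ = ((2 ^ (t - L) : ℕ) : ℝ) * c ^ 2 := by rw [h2]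
        _ = ((2 ^ (t - L) * SPP.g (SPP.ext q) t ^ 2 : ℕ) : ℝ) := by
            rw [hcc]
            push_cast
            ring
    · rw [hE q] at *
      rw [if_neg hc, if_neg hc]
      norm_num
  rw [Finset.sum_congr rfl (fun q _ => hterm q), ← Nat.cast_sum]
  rw [SPP.nat_sum t, SPP.T_eq t]
end

section
/- For nonnegative integers n, m, the identity Σ_{a+b+c=n} 2^{2n} · binomial(n,c)² · binomial(n-c,a)² · (a!/2^a) · (b!/2^b) · c! · m^c = 2ⁿ · (2m+2)ⁿ · n! holds, where the sum runs over a, b, c ≥ 0 with a + b + c = n. -/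
open Finset

-- per-term rewriting
lemma term_eq12 (n m a b : ℕ) (h : a + b ≤ n) :
    (2 : ℚ) ^ (2 * n) * ((n.choose (n - a - b)) : ℚ) ^ 2 *
        (((n - (n - a - b)).choose a) : ℚ) ^ 2 *
        ((a.factorial : ℚ) / 2 ^ a) * ((b.factorial : ℚ) / 2 ^ b) *
        ((n - a - b).factorial : ℚ) * (m : ℚ) ^ (n - a - b)
    = 2 ^ n * (n.factorial : ℚ) * (n.choose (n - a - b)) * ((a + b).choose a) *
        (2 * m) ^ (n - a - b) := by
  set c := n - a - b with hc
  have h1 : n - c = a + b := by omega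
  have h2 : c ≤ n := by omega
  rw [h1]
  have k1 : (a + b).choose a * a.factorial * b.factorial = (a + b).factorial := by
    have := Nat.choose_mul_factorial_mul_factorial (Nat.le_add_right a b)
    simpa [Nat.add_sub_cancel_left] using this
  have k2 : n.choose c * c.factorial * (a + b).factorial = n.factorial := by
    have := Nat.choose_mul_factorial_mul_factorial h2
    rwa [h1] at this
  have key : (n.choose c : ℚ) * ((a + b).choose a) * a.factorial * b.factorial
      * c.factorial = n.factorial := by
    have : n.choose c * ((a + b).choose a * a.factorial * b.factorial) * c.factorial
        = n.factorial := by rw [k1]; linarith [k2]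
    exact_mod_cast by push_cast [← this]; ring
  have hp : (2 : ℚ) ^ (2 * n) = 2 ^ n * 2 ^ c * 2 ^ a * 2 ^ b := by
    rw [← pow_add, ← pow_add, ← pow_add]
    congr 1
    omega
  have h2a : (2:ℚ)^a ≠ 0 := by positivity
  have h2b : (2:ℚ)^b ≠ 0 := by positivity
  field_simp
  rw [hp, mul_pow]
  linear_combination (2:ℚ)^n * 2^c * 2^a * 2^b * (n.choose c) * ((a+b).choose a)
    * (m:ℚ)^c * key

-- triangle reindex
lemma tri12 (n : ℕ) (f : ℕ → ℕ → ℚ) :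
    ∑ a ∈ range (n + 1), ∑ b ∈ range (n + 1 - a), f a b
      = ∑ s ∈ range (n + 1), ∑ a ∈ range (s + 1), f a (s - a) := by
  rw [Finset.sum_sigma', Finset.sum_sigma']
  apply Finset.sum_nbij' (fun p => ⟨p.1 + p.2, p.1⟩) (fun p => ⟨p.2, p.1 - p.2⟩)
  · intro p hp
    simp only [mem_sigma, mem_range] at hp ⊢
    omega
  · intro p hp
    simp only [mem_sigma, mem_range] at hp ⊢
    omega
  · intro p hp
    simp only [mem_sigma, mem_range] at hp
    have : p.1 + p.2 - p.1 = p.2 := by omega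
    simp [this]
  · intro p hp
    simp only [mem_sigma, mem_range] at hp
    have : p.2 + (p.1 - p.2) = p.1 := by omega
    simp [this]
  · intro p hp
    simp [Nat.add_sub_cancel_left]

/-- Dimension-count identity for the cyclotomic Hecke-Clifford algebra with `r = 2m+2`:
`Σ_{a+b+c=n} 2^{2n} binom(n,c)² binom(n-c,a)² (a!/2^a)(b!/2^b) c! m^c = 2ⁿ (2m+2)ⁿ n!`. -/
theorem stmt12 (n m : ℕ) :
    ∑ a ∈ Finset.range (n + 1), ∑ b ∈ Finset.range (n + 1 - a),
      (2 : ℚ) ^ (2 * n) * ((n.choose (n - a - b)) : ℚ) ^ 2 *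
        (((n - (n - a - b)).choose a) : ℚ) ^ 2 *
        ((a.factorial : ℚ) / 2 ^ a) * ((b.factorial : ℚ) / 2 ^ b) *
        ((n - a - b).factorial : ℚ) * (m : ℚ) ^ (n - a - b)
      = 2 ^ n * (2 * (m : ℚ) + 2) ^ n * n.factorial := by
  have step1 : ∑ a ∈ Finset.range (n + 1), ∑ b ∈ Finset.range (n + 1 - a),
      (2 : ℚ) ^ (2 * n) * ((n.choose (n - a - b)) : ℚ) ^ 2 *
        (((n - (n - a - b)).choose a) : ℚ) ^ 2 *
        ((a.factorial : ℚ) / 2 ^ a) * ((b.factorial : ℚ) / 2 ^ b) *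
        ((n - a - b).factorial : ℚ) * (m : ℚ) ^ (n - a - b)
      = ∑ a ∈ Finset.range (n + 1), ∑ b ∈ Finset.range (n + 1 - a),
        (2:ℚ) ^ n * (n.factorial : ℚ) * (n.choose (n - a - b)) * ((a + b).choose a) *
        (2 * (m:ℚ)) ^ (n - a - b) := by
    apply Finset.sum_congr rfl
    intro a ha
    apply Finset.sum_congr rfl
    intro b hb
    simp only [mem_range] at ha hb
    exact term_eq12 n m a b (by omega)
  rw [step1, tri12]
  have step2 : ∀ s ∈ range (n + 1), ∑ a ∈ range (s + 1),
      (2:ℚ) ^ n * (n.factorial : ℚ) * (n.choose (n - a - (s - a))) *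
        ((a + (s - a)).choose a) * (2 * (m:ℚ)) ^ (n - a - (s - a))
      = (2:ℚ) ^ n * (n.factorial : ℚ) * (n.choose s) * (2 * (m:ℚ)) ^ (n - s) * 2 ^ s := by
    intro s hs
    simp only [mem_range] at hs
    have hsn : s ≤ n := by omega
    have : ∑ a ∈ range (s + 1),
        (2:ℚ) ^ n * (n.factorial : ℚ) * (n.choose (n - a - (s - a))) *
        ((a + (s - a)).choose a) * (2 * (m:ℚ)) ^ (n - a - (s - a))
        = ∑ a ∈ range (s + 1),
        (2:ℚ) ^ n * (n.factorial : ℚ) * (n.choose s) * (2 * (m:ℚ)) ^ (n - s)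
          * (s.choose a) := by
      apply Finset.sum_congr rfl
      intro a ha
      simp only [mem_range] at ha
      have h1 : a + (s - a) = s := by omega
      have h2 : n - a - (s - a) = n - s := by omega
      rw [h1, h2, Nat.choose_symm hsn]
      ring
    rw [this, ← Finset.mul_sum]
    have : ∑ a ∈ range (s + 1), ((s.choose a : ℚ)) = 2 ^ s := by
      exact_mod_cast congrArg (Nat.cast : ℕ → ℚ) (Nat.sum_range_choose s)
    rw [this]
  rw [Finset.sum_congr rfl step2]
  have expand : ((2:ℚ) + 2 * m) ^ n
      = ∑ s ∈ range (n + 1), (2:ℚ) ^ s * (2 * (m:ℚ)) ^ (n - s) * (n.choose s) := by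
    exact add_pow (2:ℚ) (2 * m) n
  have : (2:ℚ) * m + 2 = 2 + 2 * m := by ring
  rw [this, expand, Finset.mul_sum, Finset.sum_mul]
  apply Finset.sum_congr rfl
  intro s hs
  ring
end

section
/- In the affine Sergeev algebra h_n, the intertwining element Φ_i = s_i(x_i² - x_{i+1}²) + (x_i + x_{i+1}) + c_ic_{i+1}(x_i - x_{i+1}) satisfies Φ_i² = 2(x_i² + x_{i+1}²) - (x_i² - x_{i+1}²)², as well as Φ_i x_i = x_{i+1}Φ_i and Φ_i c_i = c_{i+1}Φ_i. -/
/-- In the affine Sergeev algebra — modelled here by a `K`-algebra `B`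
(char K ≠ 2) containing elements `s, xi, xi', ci, ci'` satisfying the defining
local relations — the intertwining element
`Φ = s(xi² - xi'²) + (xi + xi') + cici'(xi - xi')` satisfies
`Φ² = 2(xi² + xi'²) - (xi² - xi'²)²`, `Φ xi = xi' Φ` and `Φ ci = ci' Φ`. -/
theorem stmt15 (K B : Type) [Field K] [Ring B] [Algebra K B]
    (hchar : ringChar K ≠ 2)
    (s xi xi' ci ci' : B)
    (hs : s * s = 1)
    (hx : xi * xi' = xi' * xi)
    (hci : ci * ci = 1) (hci' : ci' * ci' = 1) (hcc : ci * ci' = -(ci' * ci))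
    (hsx : s * xi = xi' * s - (1 + ci * ci'))
    (hsc : s * ci = ci' * s) (hsc' : s * ci' = ci * s)
    (hxc : xi * ci = -(ci * xi)) (hxc2 : xi * ci' = ci' * xi)
    (hxc3 : xi' * ci' = -(ci' * xi')) (hxc4 : xi' * ci = ci * xi') :
    let Φ : B := s * (xi ^ 2 - xi' ^ 2) + (xi + xi') + ci * ci' * (xi - xi')
    Φ * Φ = 2 * (xi ^ 2 + xi' ^ 2) - (xi ^ 2 - xi' ^ 2) ^ 2 ∧
      Φ * xi = xi' * Φ ∧ Φ * ci = ci' * Φ := by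
  intro Φ
  have hcc' : ci' * ci = -(ci * ci') := by rw [hcc, neg_neg]
  have hsx' : xi' * s = s * xi + (1 + ci * ci') := by rw [hsx]; noncomm_ring
  have hcs : ci * s = s * ci' := hsc'.symm
  have hds : ci' * s = s * ci := hsc.symm
  have hyx : xi' * xi = xi * xi' := hx.symm
  have L1 : xi * s = s * xi' - 1 + ci * ci' := by
    linear_combination (norm := noncomm_ring) s * hsx * s - hs * (xi * s) +
      (s * xi') * hs - hs - hsc * (ci' * s) - ci' * hsc' * s - (ci' * ci) * hs - hcc
  -- trailing-variable forms of the rewrite rules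
  have r_ss : ∀ t : B, s * (s * t) = t := fun t => by rw [← mul_assoc, hs, one_mul]
  have r_xs : ∀ t : B, xi * (s * t) = s * (xi' * t) - t + ci * (ci' * t) := fun t => by
    rw [← mul_assoc, L1]; noncomm_ring
  have r_ys : ∀ t : B, xi' * (s * t) = s * (xi * t) + t + ci * (ci' * t) := fun t => by
    rw [← mul_assoc, hsx']; noncomm_ring
  have r_cs : ∀ t : B, ci * (s * t) = s * (ci' * t) := fun t => by
    rw [← mul_assoc, hcs, mul_assoc]
  have r_ds : ∀ t : B, ci' * (s * t) = s * (ci * t) := fun t => by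
    rw [← mul_assoc, hds, mul_assoc]
  have r_xc : ∀ t : B, xi * (ci * t) = -(ci * (xi * t)) := fun t => by
    rw [← mul_assoc, hxc]; noncomm_ring
  have r_xd : ∀ t : B, xi * (ci' * t) = ci' * (xi * t) := fun t => by
    rw [← mul_assoc, hxc2, mul_assoc]
  have r_yd : ∀ t : B, xi' * (ci' * t) = -(ci' * (xi' * t)) := fun t => by
    rw [← mul_assoc, hxc3]; noncomm_ring
  have r_yc : ∀ t : B, xi' * (ci * t) = ci * (xi' * t) := fun t => by
    rw [← mul_assoc, hxc4, mul_assoc]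
  have r_dc : ∀ t : B, ci' * (ci * t) = -(ci * (ci' * t)) := fun t => by
    rw [← mul_assoc, hcc']; noncomm_ring
  have r_cc : ∀ t : B, ci * (ci * t) = t := fun t => by rw [← mul_assoc, hci, one_mul]
  have r_dd : ∀ t : B, ci' * (ci' * t) = t := fun t => by rw [← mul_assoc, hci', one_mul]
  have r_yx : ∀ t : B, xi' * (xi * t) = xi * (xi' * t) := fun t => by
    rw [← mul_assoc, hyx, mul_assoc]
  refine ⟨?_, ?_, ?_⟩ <;>
  · simp only [Φ, pow_two, two_mul, mul_add, add_mul, mul_sub, sub_mul, mul_neg, neg_mul,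
      mul_one, one_mul, neg_neg, mul_assoc,
      r_ss, r_xs, r_ys, r_cs, r_ds, r_xc, r_xd, r_yd, r_yc, r_dc, r_cc, r_dd, r_yx,
      hs, L1, hsx', hcs, hds, hxc, hxc2, hxc3, hxc4, hcc', hci, hci', hyx]
    noncomm_ring
end

section
/- Let λ be a multipartition in P^{•,m}_n (• ∈ {0,s,ss}) with residues res(i,j,l) = Q_l q^{2(j-i)} (where Q₀ = Q_{0₊} = 1, Q_{0₋} = -1). Suppose (q, Q) is separate with respect to λ, i.e., for every standard tableau t of shape λ and every k, 𝚚(res_t(k)) ≠ 𝚚(res_t(k+1)). Then for a standard tableau t and 1 ≤ l ≤ n-1, s_l·t is standard if and only if there exists a standard tableau u of shape λ with s_l·𝚚(res(t)) = 𝚚(res(u)); and in that case u = s_l·t. (Requires the separateness condition P_n^{(•)}(q²,Q) ≠ 0.) -/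
namespace MultiShape

/-- `𝚚(x) = 2(qx + (qx)⁻¹)/(q + q⁻¹)`. -/
def qval {K : Type} [Field K] (q x : K) : K := 2 * (q * x + (q * x)⁻¹) / (q + q⁻¹)

/-- The cyclotomic parameter attached to component `l`, where `e ∈ {0,1,2}` is
the number of strict components: `Q₀ = Q_{0₊} = 1`, `Q_{0₋} = -1`, and the
remaining components carry `Q₁,…,Q_m` (0-indexed as `Q 0,…,Q (m-1)`). -/
def Qcomp {K : Type} [Field K] (e : ℕ) (Q : ℕ → K) : ℕ → K := fun l =>
  if e = 0 then Q l
  else if e = 1 then (if l = 0 then 1 else Q (l - 1))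
  else if l = 0 then -1 else if l = 1 then 1 else Q (l - 2)

/-- The residue `res(i,j,l) = Q_l q^{2(j-i)}` of the box `b = (l,i,j)`. -/
def resBox {K : Type} [Field K] (q : K) (Qf : ℕ → K) (b : ℕ × ℕ × ℕ) : K :=
  Qf b.1 * q ^ (2 * ((b.2.2 : ℤ) - (b.2.1 : ℤ)))

/-- `res_t(k)`: the residue of the box of `t` containing the entry `k`. -/
noncomputable def resAt {K : Type} [Field K] (q : K) (Qf : ℕ → K)
    (Λ : MultiShape) (t : ℕ × ℕ × ℕ → ℕ) (k : ℕ) : K :=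
  resBox q Qf (Function.invFunOn t Λ.cells k)

/-- `Λ` encodes a shape in `P^{•,m}`, where `e ∈ {0,1,2}` is the number of
strict components corresponding to `• ∈ {0, s, ss}`. -/
def IsShape (Λ : MultiShape) (e m : ℕ) : Prop :=
  Λ.comps = e + m ∧ (∀ l, Λ.isStrict l = decide (l < e)) ∧ Λ.WellFormed

end MultiShape

namespace MultiShape

----------------------------------------------------------------
-- auxiliary development
----------------------------------------------------------------

/-- `b'` strictly precedes `b` in the same row or same column of the same
component. -/
def Pred' (b' b : ℕ × ℕ × ℕ) : Prop :=
  b'.1 = b.1 ∧ ((b'.2.1 = b.2.1 ∧ b'.2.2 < b.2.2) ∨ (b'.2.2 = b.2.2 ∧ b'.2.1 < b.2.1))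

lemma pred'_irrefl (b : ℕ × ℕ × ℕ) : ¬ Pred' b b := by
  rintro ⟨-, h | h⟩ <;> omega

lemma pred'_sum_lt {b' b : ℕ × ℕ × ℕ} (h : Pred' b' b) :
    b'.2.1 + b'.2.2 < b.2.1 + b.2.2 := by
  rcases h with ⟨-, h | h⟩ <;> omega

/-- downward-closed subset of the diagram -/
def DLower (Λ : MultiShape) (E : Set (ℕ × ℕ × ℕ)) : Prop :=
  E ⊆ Λ.cells ∧ ∀ b ∈ E, ∀ b' ∈ Λ.cells, Pred' b' b → b' ∈ E

lemma dlower_union {Λ : MultiShape} {A B : Set (ℕ × ℕ × ℕ)}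
    (hA : DLower Λ A) (hB : DLower Λ B) : DLower Λ (A ∪ B) := by
  refine ⟨Set.union_subset hA.1 hB.1, ?_⟩
  rintro b (hb | hb) b' hb' hp
  · exact Or.inl (hA.2 b hb b' hb' hp)
  · exact Or.inr (hB.2 b hb b' hb' hp)

lemma dlower_cells (Λ : MultiShape) : DLower Λ Λ.cells :=
  ⟨le_refl _, fun _ _ b' hb' _ => hb'⟩

/-- partial standard filling of a down-closed set `E` with `1, …, |E|` -/
def PStd (Λ : MultiShape) (E : Set (ℕ × ℕ × ℕ)) (f : ℕ × ℕ × ℕ → ℕ) : Prop :=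
  Set.BijOn f E (Set.Icc 1 E.ncard) ∧
  (∀ b ∈ E, ∀ b' ∈ Λ.cells, Pred' b' b → f b' < f b) ∧
  (∀ b, b ∉ E → f b = 0)

lemma exists_addable {Λ : MultiShape} {E F : Set (ℕ × ℕ × ℕ)}
    (hfinF : F.Finite) (hF : DLower Λ F) (hE : DLower Λ E) (hEF : E ⊆ F)
    (hne : E ≠ F) : ∃ b ∈ F, b ∉ E ∧ DLower Λ (insert b E) := by
  have hc : ∃ c, c ∈ F ∧ c ∉ E := by
    by_contra h
    push_neg at h
    exact hne (Set.Subset.antisymm hEF h)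
  obtain ⟨c, hcF, hcE⟩ := hc
  set S : Set (ℕ × ℕ × ℕ) := {b | b ∈ F ∧ b ∉ E ∧ b.1 = c.1} with hS
  have hSfin : S.Finite := hfinF.subset (fun x hx => hx.1)
  have hSne : S.Nonempty := ⟨c, hcF, hcE, rfl⟩
  obtain ⟨b, hbS, hbmin⟩ := Set.exists_min_image S (fun b => b.2.1 + b.2.2) hSfin hSne
  refine ⟨b, hbS.1, hbS.2.1, ?_, ?_⟩
  · exact Set.insert_subset (hF.1 hbS.1) hE.1
  · rintro x hx b' hb' hp
    rcases hx with rfl | hx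
    · -- x = b
      have hb'F : b' ∈ F := hF.2 x hbS.1 b' hb' hp
      by_cases hb'E : b' ∈ E
      · exact Or.inr hb'E
      · exfalso
        have hb'S : b' ∈ S := ⟨hb'F, hb'E, hp.1.trans hbS.2.2⟩
        exact absurd (hbmin b' hb'S) (by simpa using (pred'_sum_lt hp))
    · exact Or.inr (hE.2 x hx b' hb' hp)

lemma pstd_empty (Λ : MultiShape) : PStd Λ ∅ (fun _ => 0) := by
  refine ⟨?_, ?_, fun _ _ => rfl⟩
  · rw [Set.ncard_empty, Set.Icc_eq_empty (by omega)]
    exact Set.bijOn_empty _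
  · rintro b hb
    exact absurd hb (Set.notMem_empty b)

lemma single_step {Λ : MultiShape} {E : Set (ℕ × ℕ × ℕ)} {f : ℕ × ℕ × ℕ → ℕ}
    {b : ℕ × ℕ × ℕ} (hfinE : E.Finite) (hE : DLower Λ E) (hb : b ∈ Λ.cells)
    (hbE : b ∉ E) (hEb : DLower Λ (insert b E)) (hf : PStd Λ E f) :
    PStd Λ (insert b E) (Function.update f b (E.ncard + 1)) := by
  set m := E.ncard with hm
  have hcard : (insert b E).ncard = m + 1 := Set.ncard_insert_of_notMem hbE hfinE
  set f' := Function.update f b (m + 1) with hf'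
  have hfb : f' b = m + 1 := Function.update_self _ _ _
  have hfx : ∀ x, x ≠ b → f' x = f x := fun x hx => Function.update_of_ne hx _ _
  have hle : ∀ x ∈ E, 1 ≤ f x ∧ f x ≤ m := by
    intro x hx
    have := hf.1.mapsTo hx
    exact Set.mem_Icc.mp this
  refine ⟨⟨?_, ?_, ?_⟩, ?_, ?_⟩
  · -- MapsTo
    rintro x (hx' | hx)
    · rw [hx', hcard, hfb]; exact Set.mem_Icc.mpr ⟨by omega, le_refl _⟩
    · have hxb : x ≠ b := fun h => hbE (h ▸ hx)
      rw [hcard, hfx x hxb]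
      have := hle x hx
      exact Set.mem_Icc.mpr ⟨this.1, by omega⟩
  · -- InjOn
    rintro x (hx' | hx) y (hy' | hy) hxy
    · rw [hx', hy']
    · exfalso
      have hyb : y ≠ b := fun h => hbE (h ▸ hy)
      rw [hx', hfb, hfx y hyb] at hxy
      have := hle y hy
      omega
    · exfalso
      have hxb : x ≠ b := fun h => hbE (h ▸ hx)
      rw [hy', hfb, hfx x hxb] at hxy
      have := hle x hx
      omega
    · have hxb : x ≠ b := fun h => hbE (h ▸ hx)
      have hyb : y ≠ b := fun h => hbE (h ▸ hy)
      rw [hfx x hxb, hfx y hyb] at hxy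
      exact hf.1.injOn hx hy hxy
  · -- SurjOn
    intro y hy
    rw [hcard] at hy
    rcases Set.mem_Icc.mp hy with ⟨hy1, hy2⟩
    by_cases hym : y = m + 1
    · exact ⟨b, Set.mem_insert _ _, by rw [hfb, hym]⟩
    · have : y ∈ Set.Icc 1 m := Set.mem_Icc.mpr ⟨hy1, by omega⟩
      obtain ⟨x, hx, hxy⟩ := hf.1.surjOn this
      have hxb : x ≠ b := fun h => hbE (h ▸ hx)
      exact ⟨x, Set.mem_insert_of_mem _ hx, by rw [hfx x hxb, hxy]⟩
  · -- order
    rintro x (hx' | hx) b' hb' hp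
    · subst hx'
      have hb'mem : b' ∈ insert x E := hEb.2 x (Set.mem_insert _ _) b' hb' hp
      have hb'x : b' ≠ x := fun h => pred'_irrefl x (h ▸ hp)
      have hb'E : b' ∈ E := hb'mem.resolve_left hb'x
      rw [hfb, hfx b' hb'x]
      have := hle b' hb'E
      omega
    · have hb'b : b' ≠ b := by
        rintro rfl
        exact hbE (hE.2 x hx b' hb' hp)
      have hxb : x ≠ b := fun h => hbE (h ▸ hx)
      rw [hfx b' hb'b, hfx x hxb]
      exact hf.2.1 x hx b' hb' hp
  · -- zero outside
    intro x hx
    have hxb : x ≠ b := fun h => hx (h ▸ Set.mem_insert _ _)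
    have hxE : x ∉ E := fun h => hx (Set.mem_insert_of_mem _ h)
    rw [hfx x hxb]
    exact hf.2.2 x hxE

lemma grow_to {Λ : MultiShape} :
    ∀ (N : ℕ) (E F : Set (ℕ × ℕ × ℕ)) (f : ℕ × ℕ × ℕ → ℕ),
      DLower Λ E → DLower Λ F → F.Finite → E ⊆ F → (F \ E).ncard ≤ N →
      PStd Λ E f → ∃ g, PStd Λ F g ∧ Set.EqOn f g E := by
  intro N
  induction N with
  | zero =>
    intro E F f hE hF hfinF hEF hN hf
    have hfinD : (F \ E).Finite := hfinF.subset Set.diff_subset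
    have : F \ E = ∅ := (Set.ncard_eq_zero hfinD).mp (by omega)
    have hEF' : E = F := Set.Subset.antisymm hEF (Set.diff_eq_empty.mp this)
    exact ⟨f, hEF' ▸ hf, Set.eqOn_refl f E⟩
  | succ N ih =>
    intro E F f hE hF hfinF hEF hN hf
    by_cases hEF' : E = F
    · exact ⟨f, hEF' ▸ hf, Set.eqOn_refl f E⟩
    · obtain ⟨b, hbF, hbE, hins⟩ := exists_addable hfinF hF hE hEF hEF'
      have hfinE : E.Finite := hfinF.subset hEF
      have hf' := single_step hfinE hE (hF.1 hbF) hbE hins hf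
      have hbFE : b ∈ F \ E := ⟨hbF, hbE⟩
      have hdiff : F \ insert b E = (F \ E) \ {b} := by
        ext x
        simp [Set.mem_diff, Set.mem_insert_iff]
        tauto
      have hlt : ((F \ E) \ {b}).ncard < (F \ E).ncard :=
        Set.ncard_diff_singleton_lt_of_mem hbFE (hfinF.subset Set.diff_subset)
      obtain ⟨g, hg, heq⟩ := ih (insert b E) F (Function.update f b (E.ncard + 1))
        hins hF hfinF (Set.insert_subset hbF hEF) (by rw [hdiff]; omega) hf'
      refine ⟨g, hg, ?_⟩
      intro x hx
      have hxb : x ≠ b := fun h => hbE (h ▸ hx)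
      calc f x = Function.update f b (E.ncard + 1) x := (Function.update_of_ne hxb _ _).symm
        _ = g x := heq (Set.mem_insert_of_mem _ hx)

lemma pstd_isStd {Λ : MultiShape} {n : ℕ} {f : ℕ × ℕ × ℕ → ℕ}
    (hsize : Λ.cells.ncard = n) (hf : PStd Λ Λ.cells f) : Λ.IsStd n f := by
  refine ⟨hsize ▸ hf.1, ?_, ?_, hf.2.2⟩
  · intro b hb b' hb' h1 h2 h3
    exact hf.2.1 b' hb' b hb ⟨h1, Or.inl ⟨h2, h3⟩⟩
  · intro b hb b' hb' h1 h2 h3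
    exact hf.2.1 b' hb' b hb ⟨h1, Or.inr ⟨h2, h3⟩⟩

/-- level set of a tableau -/
def Lev (Λ : MultiShape) (u : ℕ × ℕ × ℕ → ℕ) (j : ℕ) : Set (ℕ × ℕ × ℕ) :=
  {b | b ∈ Λ.cells ∧ u b ≤ j}

lemma lev_dlower {Λ : MultiShape} {n : ℕ} {u : ℕ × ℕ × ℕ → ℕ}
    (hu : Λ.IsStd n u) (j : ℕ) : DLower Λ (Lev Λ u j) := by
  refine ⟨fun x hx => hx.1, ?_⟩
  rintro b ⟨hbc, hbj⟩ b' hb' hp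
  refine ⟨hb', le_trans (le_of_lt ?_) hbj⟩
  rcases hp.2 with h | h
  · exact hu.2.1 b' hb' b hbc hp.1 h.1 h.2
  · exact hu.2.2.1 b' hb' b hbc hp.1 h.1 h.2

lemma invFunOn_std_mem {Λ : MultiShape} {n : ℕ} {u : ℕ × ℕ × ℕ → ℕ}
    (hu : Λ.IsStd n u) {j : ℕ} (h1 : 1 ≤ j) (h2 : j ≤ n) :
    Function.invFunOn u Λ.cells j ∈ Λ.cells ∧
      u (Function.invFunOn u Λ.cells j) = j := by
  have hex : ∃ b ∈ Λ.cells, u b = j := by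
    have := hu.1.surjOn (Set.mem_Icc.mpr ⟨h1, h2⟩)
    exact this
  exact ⟨Function.invFunOn_mem hex, Function.invFunOn_eq hex⟩

lemma invFunOn_self' {Λ : MultiShape} {u : ℕ × ℕ × ℕ → ℕ} {b : ℕ × ℕ × ℕ}
    (hinj : Set.InjOn u Λ.cells) (hb : b ∈ Λ.cells) :
    Function.invFunOn u Λ.cells (u b) = b :=
  hinj (Function.invFunOn_mem ⟨b, hb, rfl⟩) hb (Function.invFunOn_eq ⟨b, hb, rfl⟩)

lemma lev_insert {Λ : MultiShape} {n : ℕ} {u : ℕ × ℕ × ℕ → ℕ}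
    (hu : Λ.IsStd n u) {j : ℕ} (h1 : 1 ≤ j) (h2 : j ≤ n) :
    Lev Λ u j = insert (Function.invFunOn u Λ.cells j) (Lev Λ u (j - 1)) := by
  obtain ⟨hUc, hUv⟩ := invFunOn_std_mem hu h1 h2
  ext b
  constructor
  · rintro ⟨hbc, hbj⟩
    by_cases hbe : u b = j
    · left
      exact (hu.1.injOn hbc hUc (by rw [hbe, hUv])).symm ▸ rfl
    · right
      exact ⟨hbc, by omega⟩
  · rintro (rfl | ⟨hbc, hbj⟩)
    · exact ⟨hUc, le_of_eq hUv⟩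
    · exact ⟨hbc, by omega⟩

lemma notMem_lev {Λ : MultiShape} {n : ℕ} {u : ℕ × ℕ × ℕ → ℕ}
    (hu : Λ.IsStd n u) {j k : ℕ} (h1 : 1 ≤ j) (h2 : j ≤ n) (h3 : k < j) :
    Function.invFunOn u Λ.cells j ∉ Lev Λ u k := by
  obtain ⟨hUc, hUv⟩ := invFunOn_std_mem hu h1 h2
  rintro ⟨-, hle⟩
  omega

lemma lev_eq_image {Λ : MultiShape} {n : ℕ} {u : ℕ × ℕ × ℕ → ℕ}
    (hu : Λ.IsStd n u) {j : ℕ} (hj : j ≤ n) :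
    Lev Λ u j = Function.invFunOn u Λ.cells '' Set.Icc 1 j := by
  ext b
  constructor
  · rintro ⟨hbc, hbj⟩
    have h1 : 1 ≤ u b := (Set.mem_Icc.mp (hu.1.mapsTo hbc)).1
    exact ⟨u b, Set.mem_Icc.mpr ⟨h1, hbj⟩, invFunOn_self' hu.1.injOn hbc⟩
  · rintro ⟨i, hi, rfl⟩
    rcases Set.mem_Icc.mp hi with ⟨hi1, hi2⟩
    obtain ⟨hUc, hUv⟩ := invFunOn_std_mem hu hi1 (le_trans hi2 hj)
    exact ⟨hUc, le_of_eq_of_le hUv hi2⟩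


lemma keyStep {K : Type} [Field K] (q : K) (Qf : ℕ → K) {Λ : MultiShape} {n : ℕ}
    (hfin : Λ.cells.Finite) (hsize : Λ.cells.ncard = n)
    (hsepL : ∀ g : ℕ × ℕ × ℕ → ℕ, Λ.IsStd n g → ∀ k, 1 ≤ k → k ≤ n - 1 →
      qval q (resAt q Qf Λ g k) ≠ qval q (resAt q Qf Λ g (k + 1)))
    {D : Set (ℕ × ℕ × ℕ)} {α β : ℕ × ℕ × ℕ}
    (hD : DLower Λ D) (hαc : α ∈ Λ.cells) (hβc : β ∈ Λ.cells)
    (hα : α ∉ D) (hβ : β ∉ D)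
    (hDα : DLower Λ (insert α D)) (hDβ : DLower Λ (insert β D))
    (hq : qval q (resBox q Qf α) = qval q (resBox q Qf β)) : α = β := by
  by_contra hne
  have hfinD : D.Finite := hfin.subset hD.1
  set k := D.ncard + 1 with hk
  -- cardinality: D ∪ {α, β} ⊆ cells
  have hsub : insert α (insert β D) ⊆ Λ.cells :=
    Set.insert_subset hαc (Set.insert_subset hβc hD.1)
  have hαβD : α ∉ insert β D := by
    rintro (h | h)
    · exact hne h
    · exact hα h
  have hc1 : (insert β D).ncard = D.ncard + 1 := Set.ncard_insert_of_notMem hβ hfinD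
  have hc2 : (insert α (insert β D)).ncard = D.ncard + 2 := by
    rw [Set.ncard_insert_of_notMem hαβD (hfinD.insert β), hc1]
  have hcard_le : D.ncard + 2 ≤ n := by
    rw [← hsize, ← hc2]
    exact Set.ncard_le_ncard hsub hfin
  -- fill D
  obtain ⟨f₀, hf₀, -⟩ := grow_to (Λ := Λ) ((D \ (∅ : Set _)).ncard) ∅ D (fun _ => 0)
    ⟨Set.empty_subset _, fun b hb => absurd hb (Set.notMem_empty b)⟩ hD hfinD
    (Set.empty_subset _) (le_refl _) (pstd_empty Λ)
  -- add α with value k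
  have hf₁ := single_step hfinD hD hαc hα hDα hf₀
  set f₁ := Function.update f₀ α (D.ncard + 1) with hf₁def
  -- add β with value k+1
  have hins2 : DLower Λ (insert β (insert α D)) := by
    have : insert β (insert α D) = insert α D ∪ insert β D := by
      rw [Set.union_insert, Set.insert_union, Set.union_self, Set.insert_comm]
    rw [this]
    exact dlower_union hDα hDβ
  have hβαD : β ∉ insert α D := by
    rintro (h | h)
    · exact hne h.symm
    · exact hβ h
  have hcα : (insert α D).ncard = D.ncard + 1 := Set.ncard_insert_of_notMem hα hfinD
  have hf₂ := single_step (hfinD.insert α) hDα hβc hβαD hins2 hf₁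
  set f₂ := Function.update f₁ β ((insert α D).ncard + 1) with hf₂def
  -- grow to all of cells
  obtain ⟨g, hg, heq⟩ := grow_to (Λ := Λ) ((Λ.cells \ insert β (insert α D)).ncard)
    (insert β (insert α D)) Λ.cells f₂ hins2 (dlower_cells Λ) hfin (by rw [Set.insert_comm]; exact hsub) (le_refl _) hf₂
  have hgα : g α = D.ncard + 1 := by
    rw [← heq (Set.mem_insert_of_mem _ (Set.mem_insert _ _))]
    show Function.update f₁ β ((insert α D).ncard + 1) α = _
    rw [Function.update_of_ne hne, hf₁def, Function.update_self]
  have hgβ : g β = D.ncard + 2 := by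
    rw [← heq (Set.mem_insert _ _)]
    show Function.update f₁ β ((insert α D).ncard + 1) β = _
    rw [Function.update_self, hcα]
  have hstd := pstd_isStd hsize hg
  have hinvα : Function.invFunOn g Λ.cells (D.ncard + 1) = α := by
    rw [← hgα]; exact invFunOn_self' hstd.1.injOn hαc
  have hinvβ : Function.invFunOn g Λ.cells (D.ncard + 2) = β := by
    rw [← hgβ]; exact invFunOn_self' hstd.1.injOn hβc
  have hne2 := hsepL g hstd (D.ncard + 1) (by omega) (by omega)
  apply hne2
  show qval q (resBox q Qf (Function.invFunOn g Λ.cells (D.ncard + 1))) =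
    qval q (resBox q Qf (Function.invFunOn g Λ.cells (D.ncard + 1 + 1)))
  rw [hinvα, show D.ncard + 1 + 1 = D.ncard + 2 from rfl, hinvβ]
  exact hq


lemma sw_apply_of_ne {l k : ℕ} (h1 : k ≠ l) (h2 : k ≠ l + 1) : (sw l) k = k :=
  Equiv.swap_apply_of_ne_of_ne h1 h2

lemma sw_left (l : ℕ) : (sw l) l = l + 1 := Equiv.swap_apply_left l (l + 1)

lemma sw_right (l : ℕ) : (sw l) (l + 1) = l := Equiv.swap_apply_right l (l + 1)

lemma sw_sw (l k : ℕ) : (sw l) ((sw l) k) = k := Equiv.swap_apply_self _ _ _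

lemma sw_mem {l n k : ℕ} (hl1 : 1 ≤ l) (hln : l + 1 ≤ n) (h1 : 1 ≤ k) (h2 : k ≤ n) :
    1 ≤ (sw l) k ∧ (sw l) k ≤ n := by
  rcases eq_or_ne k l with rfl | h
  · rw [sw_left]; omega
  rcases eq_or_ne k (l + 1) with rfl | h'
  · rw [sw_right]; omega
  · rw [sw_apply_of_ne h h']; omega

lemma swap_image_Icc {l j : ℕ} (hl : 1 ≤ l) (h : j < l ∨ l + 1 ≤ j) :
    ⇑(sw l) '' Set.Icc 1 j = Set.Icc 1 j := by
  have hmap : ∀ x ∈ Set.Icc 1 j, (sw l) x ∈ Set.Icc 1 j := by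
    intro x hx
    rcases Set.mem_Icc.mp hx with ⟨hx1, hx2⟩
    rcases eq_or_ne x l with rfl | h1
    · rw [sw_left]; exact Set.mem_Icc.mpr (by omega)
    rcases eq_or_ne x (l + 1) with rfl | h2
    · rw [sw_right]; exact Set.mem_Icc.mpr (by omega)
    · rw [sw_apply_of_ne h1 h2]; exact hx
  apply Set.Subset.antisymm
  · rintro _ ⟨x, hx, rfl⟩; exact hmap x hx
  · intro y hy; exact ⟨(sw l) y, hmap y hy, sw_sw l y⟩

lemma mainLemma {K : Type} [Field K] (q : K) (Qf : ℕ → K) {Λ : MultiShape} {n : ℕ}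
    (hfin : Λ.cells.Finite) (hsize : Λ.cells.ncard = n)
    (hsepL : ∀ g : ℕ × ℕ × ℕ → ℕ, Λ.IsStd n g → ∀ k, 1 ≤ k → k ≤ n - 1 →
      qval q (resAt q Qf Λ g k) ≠ qval q (resAt q Qf Λ g (k + 1)))
    {t u : ℕ × ℕ × ℕ → ℕ} (ht : Λ.IsStd n t) (hu : Λ.IsStd n u)
    {l : ℕ} (hl1 : 1 ≤ l) (hl2 : l ≤ n - 1)
    (hres : ∀ k, 1 ≤ k → k ≤ n →
      qval q (resAt q Qf Λ t ((sw l) k)) = qval q (resAt q Qf Λ u k)) :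
    u = ⇑(sw l) ∘ t := by
  have hn2 : 2 ≤ n := by omega
  have hln : l + 1 ≤ n := by omega
  have hrt : ∀ i, resAt q Qf Λ t i = resBox q Qf (Function.invFunOn t Λ.cells i) :=
    fun _ => rfl
  have hru : ∀ i, resAt q Qf Λ u i = resBox q Qf (Function.invFunOn u Λ.cells i) :=
    fun _ => rfl
  have key : ∀ j, j ≤ n → ∀ i, 1 ≤ i → i ≤ j →
      Function.invFunOn u Λ.cells i = Function.invFunOn t Λ.cells ((sw l) i) := by
    intro j
    induction j with
    | zero => intro _ i h1 h2; omega
    | succ j ihj =>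
      intro hj i h1 h2
      by_cases hij : i ≤ j
      · exact ihj (by omega) i h1 hij
      have hi : i = j + 1 := by omega
      have hin : i ≤ n := by omega
      have IH : ∀ i', 1 ≤ i' → i' ≤ i - 1 →
          Function.invFunOn u Λ.cells i' = Function.invFunOn t Λ.cells ((sw l) i') := by
        intro i' a b; exact ihj (by omega) i' a (by omega)
      have hlev : ∀ j', j' ≤ i - 1 → (j' < l ∨ l + 1 ≤ j') →
          Lev Λ u j' = Lev Λ t j' := by
        intro j' hj' hc
        rw [lev_eq_image hu (by omega), lev_eq_image ht (by omega)]
        have h1' : Function.invFunOn u Λ.cells '' Set.Icc 1 j' =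
            Function.invFunOn t Λ.cells '' (⇑(sw l) '' Set.Icc 1 j') := by
          rw [Set.image_image]
          exact Set.image_congr (fun x hx =>
            IH x (Set.mem_Icc.mp hx).1 (le_trans (Set.mem_Icc.mp hx).2 hj'))
        rw [h1', swap_image_Icc hl1 hc]
      by_cases hil : i = l
      · -- case i = l
        subst hil
        have hDeq : Lev Λ u (i - 1) = Lev Λ t (i - 1) := hlev (i - 1) (le_refl _) (by omega)
        have hql : qval q (resBox q Qf (Function.invFunOn t Λ.cells (i + 1))) =
            qval q (resBox q Qf (Function.invFunOn u Λ.cells i)) := by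
          have := hres i h1 hin
          rwa [hrt, hru, sw_left] at this
        obtain ⟨hTl1c, hTl1v⟩ := invFunOn_std_mem ht (show 1 ≤ i + 1 by omega) hln
        obtain ⟨hUlc, hUlv⟩ := invFunOn_std_mem hu h1 hin
        have hLt1 : Lev Λ t (i + 1) = insert (Function.invFunOn t Λ.cells (i + 1)) (Lev Λ t i) := by
          have := lev_insert ht (show 1 ≤ i + 1 by omega) hln
          simpa using this
        have hLt : Lev Λ t i = insert (Function.invFunOn t Λ.cells i) (Lev Λ t (i - 1)) :=
          lev_insert ht h1 hin
        have hLu : Lev Λ u i = insert (Function.invFunOn u Λ.cells i) (Lev Λ u (i - 1)) :=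
          lev_insert hu h1 hin
        have hαnot : Function.invFunOn t Λ.cells (i + 1) ∉ Lev Λ t i :=
          notMem_lev ht (by omega) hln (by omega)
        have hβnot : Function.invFunOn u Λ.cells i ∉ Lev Λ t i := by
          rw [hLt]
          rintro (h | h)
          · apply hsepL t ht i h1 hl2
            rw [hrt, hrt]
            rw [h] at hql
            exact hql.symm
          · rw [← hDeq] at h
            exact absurd h (notMem_lev hu h1 hin (by omega))
        have hDα : DLower Λ (insert (Function.invFunOn t Λ.cells (i + 1)) (Lev Λ t i)) :=
          hLt1 ▸ lev_dlower ht (i + 1)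
        have hDβ : DLower Λ (insert (Function.invFunOn u Λ.cells i) (Lev Λ t i)) := by
          have hset : insert (Function.invFunOn u Λ.cells i) (Lev Λ t i) =
              Lev Λ t i ∪ Lev Λ u i := by
            rw [hLt, hLu, hDeq, Set.union_insert, Set.insert_union, Set.union_self]
          rw [hset]
          exact dlower_union (lev_dlower ht i) (lev_dlower hu i)
        rw [sw_left]
        exact (keyStep q Qf hfin hsize hsepL (lev_dlower ht i) hTl1c hUlc hαnot hβnot
          hDα hDβ hql).symm
      by_cases hil2 : i = l + 1
      · -- case i = l + 1
        subst hil2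
        have hULl : Function.invFunOn u Λ.cells l = Function.invFunOn t Λ.cells (l + 1) := by
          have := IH l hl1 (by omega)
          rwa [sw_left] at this
        have hDeq : Lev Λ u (l - 1) = Lev Λ t (l - 1) := hlev (l - 1) (by omega) (by omega)
        have hLu : Lev Λ u l = insert (Function.invFunOn t Λ.cells (l + 1)) (Lev Λ t (l - 1)) := by
          rw [lev_insert hu hl1 (by omega), hULl, hDeq]
        obtain ⟨hTlc, hTlv⟩ := invFunOn_std_mem ht hl1 (show l ≤ n by omega)
        obtain ⟨hTl1c, hTl1v⟩ := invFunOn_std_mem ht (show 1 ≤ l + 1 by omega) hln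
        obtain ⟨hUc, hUv⟩ := invFunOn_std_mem hu (show 1 ≤ l + 1 by omega) hln
        have hTT : Function.invFunOn t Λ.cells l ≠ Function.invFunOn t Λ.cells (l + 1) := by
          intro h
          have := congrArg t h
          rw [hTlv, hTl1v] at this
          omega
        have hαnot : Function.invFunOn t Λ.cells l ∉ Lev Λ u l := by
          rw [hLu]
          rintro (h | h)
          · exact hTT h
          · exact absurd h (notMem_lev ht hl1 (by omega) (by omega))
        have hβnot : Function.invFunOn u Λ.cells (l + 1) ∉ Lev Λ u l :=
          notMem_lev hu (by omega) hln (by omega)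
        have hDα : DLower Λ (insert (Function.invFunOn t Λ.cells l) (Lev Λ u l)) := by
          have e1 : Lev Λ t (l + 1) = insert (Function.invFunOn t Λ.cells (l + 1)) (Lev Λ t l) := by
            have := lev_insert ht (show 1 ≤ l + 1 by omega) hln
            simpa using this
          have e2 : Lev Λ t l = insert (Function.invFunOn t Λ.cells l) (Lev Λ t (l - 1)) :=
            lev_insert ht hl1 (by omega)
          have hset : insert (Function.invFunOn t Λ.cells l) (Lev Λ u l) = Lev Λ t (l + 1) := by
            rw [hLu, e1, e2, Set.insert_comm]
          rw [hset]
          exact lev_dlower ht (l + 1)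
        have hDβ : DLower Λ (insert (Function.invFunOn u Λ.cells (l + 1)) (Lev Λ u l)) := by
          have e3 : Lev Λ u (l + 1) = insert (Function.invFunOn u Λ.cells (l + 1)) (Lev Λ u l) := by
            have := lev_insert hu (show 1 ≤ l + 1 by omega) hln
            simpa using this
          rw [← e3]
          exact lev_dlower hu (l + 1)
        have hq2 : qval q (resBox q Qf (Function.invFunOn t Λ.cells l)) =
            qval q (resBox q Qf (Function.invFunOn u Λ.cells (l + 1))) := by
          have := hres (l + 1) (by omega) hln
          rwa [hrt, hru, sw_right] at this
        rw [sw_right]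
        exact (keyStep q Qf hfin hsize hsepL (lev_dlower hu l) hTlc hUc hαnot hβnot
          hDα hDβ hq2).symm
      · -- generic case
        have hsw : (sw l) i = i := sw_apply_of_ne hil hil2
        have hDeq : Lev Λ u (i - 1) = Lev Λ t (i - 1) := hlev (i - 1) (le_refl _) (by omega)
        obtain ⟨hTic, hTiv⟩ := invFunOn_std_mem ht h1 hin
        obtain ⟨hUic, hUiv⟩ := invFunOn_std_mem hu h1 hin
        have hαnot : Function.invFunOn t Λ.cells i ∉ Lev Λ t (i - 1) :=
          notMem_lev ht h1 hin (by omega)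
        have hβnot : Function.invFunOn u Λ.cells i ∉ Lev Λ t (i - 1) := by
          rw [← hDeq]
          exact notMem_lev hu h1 hin (by omega)
        have hDα : DLower Λ (insert (Function.invFunOn t Λ.cells i) (Lev Λ t (i - 1))) := by
          rw [← lev_insert ht h1 hin]
          exact lev_dlower ht i
        have hDβ : DLower Λ (insert (Function.invFunOn u Λ.cells i) (Lev Λ t (i - 1))) := by
          rw [← hDeq, ← lev_insert hu h1 hin]
          exact lev_dlower hu i
        have hq2 : qval q (resBox q Qf (Function.invFunOn t Λ.cells i)) =
            qval q (resBox q Qf (Function.invFunOn u Λ.cells i)) := by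
          have := hres i h1 hin
          rwa [hrt, hru, hsw] at this
        rw [hsw]
        exact (keyStep q Qf hfin hsize hsepL (lev_dlower ht (i - 1)) hTic hUic hαnot hβnot
          hDα hDβ hq2).symm
  funext b
  by_cases hb : b ∈ Λ.cells
  · have htb := Set.mem_Icc.mp (ht.1.mapsTo hb)
    have hsb := sw_mem hl1 hln htb.1 htb.2
    have hkey := key n (le_refl n) ((sw l) (t b)) hsb.1 hsb.2
    rw [sw_sw] at hkey
    rw [invFunOn_self' ht.1.injOn hb] at hkey
    have hUval := (invFunOn_std_mem hu hsb.1 hsb.2).2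
    rw [hkey] at hUval
    exact hUval
  · rw [hu.2.2.2 b hb]
    show (0 : ℕ) = (sw l) (t b)
    rw [ht.2.2.2 b hb]
    exact (sw_apply_of_ne (by omega) (by omega)).symm

lemma resAt_swap {K : Type} [Field K] (q : K) (Qf : ℕ → K) {Λ : MultiShape} {n : ℕ}
    {t : ℕ × ℕ × ℕ → ℕ} (ht : Λ.IsStd n t) {l : ℕ} (hl1 : 1 ≤ l) (hln : l + 1 ≤ n)
    {k : ℕ} (h1 : 1 ≤ k) (h2 : k ≤ n) :
    resAt q Qf Λ t ((sw l) k) = resAt q Qf Λ (⇑(sw l) ∘ t) k := by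
  have hsk := sw_mem hl1 hln h1 h2
  obtain ⟨hbc, hbv⟩ := invFunOn_std_mem ht hsk.1 hsk.2
  have hub : (⇑(sw l) ∘ t) (Function.invFunOn t Λ.cells ((sw l) k)) = k := by
    show (sw l) (t _) = k
    rw [hbv, sw_sw]
  have hinj : Set.InjOn (⇑(sw l) ∘ t) Λ.cells :=
    fun x hx y hy h => ht.1.injOn hx hy ((sw l).injective h)
  have hinv : Function.invFunOn (⇑(sw l) ∘ t) Λ.cells k =
      Function.invFunOn t Λ.cells ((sw l) k) := by
    conv_lhs => rw [← hub]
    exact invFunOn_self' hinj hbc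
  show resBox q Qf (Function.invFunOn t Λ.cells ((sw l) k)) =
    resBox q Qf (Function.invFunOn (⇑(sw l) ∘ t) Λ.cells k)
  rw [hinv]

end MultiShape

open MultiShape in
/-- Suppose `(q, Q)` is separate with respect to `λ` and the separateness
condition `P_n^{(•)}(q², Q) ≠ 0` holds (equivalently, `(q,Q)` is separate with
respect to every shape in `P^{•,m}_{n+1}`).  Then for a standard tableau `t` of
shape `λ` and `1 ≤ l ≤ n-1`:  `s_l·t` is standard iff there is a standard
tableau `u` of shape `λ` with `s_l·𝚚(res(t)) = 𝚚(res(u))`; and any such `u`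
equals `s_l·t`. -/
theorem stmt16 (K : Type) [Field K] [IsAlgClosed K] (hchar : ringChar K ≠ 2)
    (q : K) (hq0 : q ≠ 0) (hq1 : q ≠ 1) (hqm1 : q ≠ -1)
    (e m : ℕ) (he : e ≤ 2) (Q : ℕ → K) (hQ : ∀ i < m, Q i ≠ 0)
    (n : ℕ) (Λ : MultiShape) (hΛ : IsShape Λ e m)
    (hfin : Λ.cells.Finite) (hsize : Λ.cells.ncard = n)
    (hsepL : ∀ t : ℕ × ℕ × ℕ → ℕ, Λ.IsStd n t → ∀ k, 1 ≤ k → k ≤ n - 1 →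
      qval q (resAt q (Qcomp e Q) Λ t k) ≠ qval q (resAt q (Qcomp e Q) Λ t (k + 1)))
    (hsep : ∀ Λ' : MultiShape, IsShape Λ' e m → Λ'.cells.Finite →
      Λ'.cells.ncard = n + 1 → ∀ t' : ℕ × ℕ × ℕ → ℕ, Λ'.IsStd (n + 1) t' →
      ∀ k, 1 ≤ k → k ≤ n →
        qval q (resAt q (Qcomp e Q) Λ' t' k) ≠
          qval q (resAt q (Qcomp e Q) Λ' t' (k + 1))) :
    ∀ t : ℕ × ℕ × ℕ → ℕ, Λ.IsStd n t → ∀ l, 1 ≤ l → l ≤ n - 1 →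
      (Λ.IsStd n (⇑(sw l) ∘ t) ↔
        ∃ u : ℕ × ℕ × ℕ → ℕ, Λ.IsStd n u ∧ ∀ k, 1 ≤ k → k ≤ n →
          qval q (resAt q (Qcomp e Q) Λ t (sw l k)) =
            qval q (resAt q (Qcomp e Q) Λ u k)) ∧
      (∀ u : ℕ × ℕ × ℕ → ℕ, Λ.IsStd n u →
        (∀ k, 1 ≤ k → k ≤ n →
          qval q (resAt q (Qcomp e Q) Λ t (sw l k)) =
            qval q (resAt q (Qcomp e Q) Λ u k)) →
        u = ⇑(sw l) ∘ t) := by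
  intro t ht l hl1 hl2
  have hln : l + 1 ≤ n := by omega
  constructor
  · constructor
    · intro hstd
      refine ⟨⇑(sw l) ∘ t, hstd, ?_⟩
      intro k h1 h2
      rw [resAt_swap q (Qcomp e Q) ht hl1 hln h1 h2]
    · rintro ⟨u, hu, hresu⟩
      have hmain := mainLemma q (Qcomp e Q) hfin hsize hsepL ht hu hl1 hl2 hresu
      rwa [← hmain]
  · intro u hu hresu
    exact mainLemma q (Qcomp e Q) hfin hsize hsepL ht hu hl1 hl2 hresu
end

section
/- Let • ∈ {0, s, ss}, Q = (Q₁,…,Q_m) ∈ (K*)^m, q ∈ K* with q ≠ ±1, and suppose P_n^{(•)}(q², Q) ≠ 0. Then for any λ, μ ∈ P^{•,m}_n and standard tableaux t ∈ Std(λ), t' ∈ Std(μ) with t ≠ t', the sequences 𝚚(res(t)) and 𝚚(res(t')) are distinct. -/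
namespace MultiShape

open Function Set

open scoped Classical

/-! ### Auxiliary combinatorial machinery -/

private lemma finset_seg (S : Finset ℕ) (a : ℕ) (h1 : ∀ j ∈ S, a ≤ j)
    (h2 : ∀ j ∈ S, ∀ j', a ≤ j' → j' ≤ j → j' ∈ S) :
    S = Finset.Ico a (a + S.card) := by
  ext j
  simp only [Finset.mem_Ico]
  constructor
  · intro hj
    refine ⟨h1 j hj, ?_⟩
    have hsub : Finset.Ico a (j + 1) ⊆ S := by
      intro x hx
      rw [Finset.mem_Ico] at hx
      exact h2 j hj x hx.1 (by omega)
    have := Finset.card_le_card hsub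
    rw [Nat.card_Ico] at this
    omega
  · rintro ⟨haj, hjc⟩
    by_contra hjS
    have hsub : S ⊆ Finset.Ico a j := by
      intro x hx
      rw [Finset.mem_Ico]
      refine ⟨h1 x hx, ?_⟩
      by_contra h
      exact hjS (h2 x hx j haj (by omega))
    have := Finset.card_le_card hsub
    rw [Nat.card_Ico] at this
    omega

/-- Row offset: `i` in a strict (shifted) component, `0` otherwise. -/
def offs (Λ : MultiShape) (l i : ℕ) : ℕ := if Λ.isStrict l then i else 0

lemma offs_false {Λ : MultiShape} {l : ℕ} (hs : Λ.isStrict l = false) (i : ℕ) :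
    offs Λ l i = 0 := by simp [offs, hs]

lemma offs_true {Λ : MultiShape} {l : ℕ} (hs : Λ.isStrict l = true) (i : ℕ) :
    offs Λ l i = i := by simp [offs, hs]

lemma offs_zero (Λ : MultiShape) (l : ℕ) : offs Λ l 0 = 0 := by simp [offs]

lemma mem_cells (Λ : MultiShape) (l i j : ℕ) :
    (l, i, j) ∈ Λ.cells ↔
      l < Λ.comps ∧ offs Λ l i ≤ j ∧ j < offs Λ l i + Λ.part l i := by
  cases h : Λ.isStrict l <;>
    simp [cells, offs, h, Set.mem_setOf_eq] <;> omega

/-- The boxes of `Λ` whose `t`-entry is at most `p`. -/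
def dset (Λ : MultiShape) (t : ℕ × ℕ × ℕ → ℕ) (p : ℕ) : Set (ℕ × ℕ × ℕ) :=
  {c | c ∈ Λ.cells ∧ t c ≤ p}

lemma mem_dset {Λ : MultiShape} {t : ℕ × ℕ × ℕ → ℕ} {p : ℕ} {c : ℕ × ℕ × ℕ} :
    c ∈ dset Λ t p ↔ c ∈ Λ.cells ∧ t c ≤ p := Iff.rfl

lemma dset_mono (Λ : MultiShape) (t : ℕ × ℕ × ℕ → ℕ) {p p' : ℕ} (h : p ≤ p') :
    dset Λ t p ⊆ dset Λ t p' := fun _ hc => ⟨hc.1, le_trans hc.2 h⟩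

/-- Number of boxes with `t`-entry `≤ p` in row `(l,i)`. -/
noncomputable def cnt (Λ : MultiShape) (t : ℕ × ℕ × ℕ → ℕ) (p l i : ℕ) : ℕ :=
  ((Finset.range (offs Λ l i + Λ.part l i)).filter
    (fun j => (l, i, j) ∈ dset Λ t p)).card

section closures

variable {Λ : MultiShape} {n : ℕ} {t : ℕ × ℕ × ℕ → ℕ}

lemma strict_part_ge {p : ℕ → ℕ} (hp : IsStrictPartFun p) :
    ∀ d i, p (i + d) ≠ 0 → p (i + d) + d ≤ p i := by
  intro d
  induction d with
  | zero => intro i h; simp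
  | succ d ih =>
    intro i h
    rw [show i + (d + 1) = (i + d) + 1 by ring] at h ⊢
    have h1 : p (i + d + 1) < p (i + d) := hp.2 (i + d) h
    have h2 := ih i (by omega)
    omega

lemma dset_row_closed (hstd : Λ.IsStd n t) {p l i j j' : ℕ}
    (hc : (l, i, j) ∈ dset Λ t p) (h1 : offs Λ l i ≤ j') (h2 : j' ≤ j) :
    (l, i, j') ∈ dset Λ t p := by
  obtain ⟨hcell, hle⟩ := hc
  have hcellm := (mem_cells Λ l i j).mp hcell
  have hcell' : (l, i, j') ∈ Λ.cells := by
    rw [mem_cells]; exact ⟨hcellm.1, h1, by omega⟩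
  refine ⟨hcell', ?_⟩
  rcases eq_or_lt_of_le h2 with rfl | hlt
  · exact hle
  · have h5 : t (l, i, j') < t (l, i, j) :=
      hstd.2.1 (l, i, j') hcell' (l, i, j) hcell rfl rfl hlt
    omega

lemma dset_col_closed (hW : Λ.WellFormed) (hstd : Λ.IsStd n t) {p l i j i' : ℕ}
    (hc : (l, i, j) ∈ dset Λ t p) (h : i' ≤ i) :
    (l, i', j) ∈ dset Λ t p := by
  obtain ⟨hcell, hle⟩ := hc
  have hcellm := (mem_cells Λ l i j).mp hcell
  obtain ⟨hl, hoff, hj⟩ := hcellm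
  have hcell' : (l, i', j) ∈ Λ.cells := by
    rw [mem_cells]
    cases hs : Λ.isStrict l
    · rw [offs_false hs] at hoff hj ⊢
      have hA := hW.2.1 l hl hs h
      exact ⟨hl, by omega, by omega⟩
    · rw [offs_true hs] at hoff hj ⊢
      have hsp := hW.1 l hl hs
      have hne : Λ.part l i ≠ 0 := by omega
      have hge := strict_part_ge hsp (i - i') i'
        (by rw [show i' + (i - i') = i by omega]; exact hne)
      rw [show i' + (i - i') = i by omega] at hge
      exact ⟨hl, by omega, by omega⟩
  refine ⟨hcell', ?_⟩
  rcases eq_or_lt_of_le h with rfl | hlt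
  · exact hle
  · have h5 : t (l, i', j) < t (l, i, j) :=
      hstd.2.2.1 (l, i', j) hcell' (l, i, j) hcell rfl rfl hlt
    omega

lemma dset_mem_iff (hstd : Λ.IsStd n t) (p l i j : ℕ) :
    (l, i, j) ∈ dset Λ t p ↔
      offs Λ l i ≤ j ∧ j < offs Λ l i + cnt Λ t p l i := by
  set S := (Finset.range (offs Λ l i + Λ.part l i)).filter
    (fun j => (l, i, j) ∈ dset Λ t p) with hS
  have hseg : S = Finset.Ico (offs Λ l i) (offs Λ l i + S.card) := by
    apply finset_seg
    · intro j0 hj0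
      rw [hS, Finset.mem_filter] at hj0
      have h := (mem_cells Λ l i j0).mp hj0.2.1
      exact h.2.1
    · intro j0 hj0 j' h1 h2
      rw [hS, Finset.mem_filter] at hj0 ⊢
      have hr := Finset.mem_range.mp hj0.1
      exact ⟨Finset.mem_range.mpr (by omega), dset_row_closed hstd hj0.2 h1 h2⟩
  have hcnt : cnt Λ t p l i = S.card := rfl
  constructor
  · intro h
    have hj : j ∈ S := by
      rw [hS, Finset.mem_filter]
      refine ⟨Finset.mem_range.mpr ?_, h⟩
      have h' := (mem_cells Λ l i j).mp h.1
      omega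
    rw [hseg, Finset.mem_Ico] at hj
    omega
  · intro h
    have hj : j ∈ S := by
      rw [hseg, Finset.mem_Ico]
      omega
    rw [hS, Finset.mem_filter] at hj
    exact hj.2

lemma cnt_zero_of_ge {l : ℕ} (hl : Λ.comps ≤ l) (p i : ℕ) : cnt Λ t p l i = 0 := by
  rw [cnt, Finset.card_eq_zero, Finset.filter_eq_empty_iff]
  intro j _ hj
  have h := (mem_cells Λ l i j).mp hj.1
  omega

lemma cnt_succ (hW : Λ.WellFormed) (hstd : Λ.IsStd n t) (p l i : ℕ) :
    cnt Λ t p l (i + 1) ≤ cnt Λ t p l i ∧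
      (Λ.isStrict l = true →
        cnt Λ t p l (i + 1) ≠ 0 → cnt Λ t p l (i + 1) < cnt Λ t p l i) := by
  by_cases h0 : cnt Λ t p l (i + 1) = 0
  · exact ⟨by omega, fun _ h => absurd h0 h⟩
  · have hmem : (l, i + 1, offs Λ l (i + 1) + cnt Λ t p l (i + 1) - 1) ∈ dset Λ t p := by
      rw [dset_mem_iff hstd]
      omega
    have hcc := dset_col_closed hW hstd hmem (Nat.le_succ i)
    rw [dset_mem_iff hstd] at hcc
    cases hs : Λ.isStrict l
    · simp only [offs_false hs] at hcc
      refine ⟨by omega, fun hT => ?_⟩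
      simp at hT
    · simp only [offs_true hs] at hcc
      exact ⟨by omega, fun _ _ => by omega⟩

lemma std_inv_self (hstd : Λ.IsStd n t) {c : ℕ × ℕ × ℕ} (hc : c ∈ Λ.cells) :
    Function.invFunOn t Λ.cells (t c) = c :=
  hstd.1.2.1 (Function.invFunOn_mem ⟨c, hc, rfl⟩) hc (Function.invFunOn_eq ⟨c, hc, rfl⟩)

lemma std_inv_spec (hstd : Λ.IsStd n t) {j : ℕ} (h1 : 1 ≤ j) (h2 : j ≤ n) :
    Function.invFunOn t Λ.cells j ∈ Λ.cells ∧ t (Function.invFunOn t Λ.cells j) = j := by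
  have hex : ∃ a ∈ Λ.cells, t a = j := by
    obtain ⟨a, ha, hta⟩ := hstd.1.2.2 (Set.mem_Icc.mpr ⟨h1, h2⟩)
    exact ⟨a, ha, hta⟩
  exact ⟨Function.invFunOn_mem hex, Function.invFunOn_eq hex⟩

lemma dset_eq_image (hstd : Λ.IsStd n t) {p : ℕ} (hp : p ≤ n) :
    dset Λ t p = (fun j => Function.invFunOn t Λ.cells j) '' Set.Icc 1 p := by
  ext c
  constructor
  · rintro ⟨hc, hle⟩
    have h1 : t c ∈ Set.Icc 1 n := hstd.1.1 hc
    rw [Set.mem_Icc] at h1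
    exact ⟨t c, Set.mem_Icc.mpr ⟨h1.1, hle⟩, std_inv_self hstd hc⟩
  · rintro ⟨j, hj, rfl⟩
    rw [Set.mem_Icc] at hj
    have hx := std_inv_spec hstd hj.1 (le_trans hj.2 hp)
    exact ⟨hx.1, by rw [hx.2]; exact hj.2⟩

end closures

/-! ### The glued shape -/

/-- The shape whose cells are the boxes of entries `≤ k` of `t` (on `Λ`)
together with those of `t'` (on `M`), padded with `D` extra boxes at the end
of row `0` of component `L`. -/
noncomputable def jshape (Λ M : MultiShape) (t t' : ℕ × ℕ × ℕ → ℕ) (k D L : ℕ) :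
    MultiShape where
  comps := Λ.comps
  isStrict := Λ.isStrict
  part := fun l i =>
    max (cnt Λ t k l i) (cnt M t' k l i) + (if l = L ∧ i = 0 then D else 0)

section jshape

variable {Λ M : MultiShape} {n n' : ℕ} {t t' : ℕ × ℕ × ℕ → ℕ} {k D L : ℕ}

lemma jshape_offs (l i : ℕ) : offs (jshape Λ M t t' k D L) l i = offs Λ l i := rfl

lemma jshape_cells (hstdΛ : Λ.IsStd n t) (hstdM : M.IsStd n' t')
    (hMc : M.comps = Λ.comps) (hMs : M.isStrict = Λ.isStrict)
    (hL : L + 1 = Λ.comps) (c : ℕ × ℕ × ℕ) :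
    c ∈ (jshape Λ M t t' k D L).cells ↔
      c ∈ dset Λ t k ∨ c ∈ dset M t' k ∨
        (c.1 = L ∧ c.2.1 = 0 ∧
          max (cnt Λ t k L 0) (cnt M t' k L 0) ≤ c.2.2 ∧
          c.2.2 < max (cnt Λ t k L 0) (cnt M t' k L 0) + D) := by
  obtain ⟨l, i, j⟩ := c
  dsimp only
  have hpart : (jshape Λ M t t' k D L).part l i =
      max (cnt Λ t k l i) (cnt M t' k l i) + (if l = L ∧ i = 0 then D else 0) := rfl
  have hcomp : (jshape Λ M t t' k D L).comps = Λ.comps := rfl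
  have hoM : offs M l i = offs Λ l i := by simp [offs, hMs]
  have hΛiff := dset_mem_iff hstdΛ k l i j
  have hMiff := dset_mem_iff hstdM k l i j
  rw [hoM] at hMiff
  rw [mem_cells, jshape_offs, hpart, hcomp]
  constructor
  · rintro ⟨hl, h1, h2⟩
    by_cases hE : l = L ∧ i = 0
    · obtain ⟨rfl, rfl⟩ := hE
      rw [if_pos ⟨rfl, rfl⟩] at h2
      rw [offs_zero] at h1 h2 hΛiff hMiff
      rcases le_or_gt (max (cnt Λ t k l 0) (cnt M t' k l 0)) j with hj | hj
      · exact Or.inr (Or.inr ⟨rfl, rfl, hj, by omega⟩)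
      · rcases le_total (cnt Λ t k l 0) (cnt M t' k l 0) with hm | hm
        · rw [max_eq_right hm] at hj
          exact Or.inr (Or.inl (hMiff.mpr ⟨by omega, by omega⟩))
        · rw [max_eq_left hm] at hj
          exact Or.inl (hΛiff.mpr ⟨by omega, by omega⟩)
    · rw [if_neg hE] at h2
      rcases le_total (cnt Λ t k l i) (cnt M t' k l i) with hm | hm
      · rw [max_eq_right hm] at h2
        exact Or.inr (Or.inl (hMiff.mpr ⟨h1, by omega⟩))
      · rw [max_eq_left hm] at h2
        exact Or.inl (hΛiff.mpr ⟨h1, by omega⟩)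
  · rintro (h | h | h)
    · have hl : l < Λ.comps := ((mem_cells Λ l i j).mp h.1).1
      have ha := hΛiff.mp h
      refine ⟨hl, ha.1, ?_⟩
      have h5 : cnt Λ t k l i ≤ max (cnt Λ t k l i) (cnt M t' k l i) := le_max_left _ _
      omega
    · have hl : l < M.comps := ((mem_cells M l i j).mp h.1).1
      rw [hMc] at hl
      have ha := hMiff.mp h
      refine ⟨hl, ha.1, ?_⟩
      have h5 : cnt M t' k l i ≤ max (cnt Λ t k l i) (cnt M t' k l i) := le_max_right _ _
      omega
    · obtain ⟨rfl, rfl, h3, h4⟩ := h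
      rw [if_pos ⟨rfl, rfl⟩, offs_zero]
      exact ⟨by omega, by omega, by omega⟩

lemma jshape_wf (hstdΛ : Λ.IsStd n t) (hstdM : M.IsStd n' t')
    (hWΛ : Λ.WellFormed) (hWM : M.WellFormed)
    (hMc : M.comps = Λ.comps) (hMs : M.isStrict = Λ.isStrict)
    (hL : L + 1 = Λ.comps) :
    (jshape Λ M t t' k D L).WellFormed := by
  have hpart : ∀ l i, (jshape Λ M t t' k D L).part l i =
      max (cnt Λ t k l i) (cnt M t' k l i) + (if l = L ∧ i = 0 then D else 0) :=
    fun _ _ => rfl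
  have hstrict : ∀ l, (jshape Λ M t t' k D L).isStrict l = Λ.isStrict l := fun _ => rfl
  have hcomp : (jshape Λ M t t' k D L).comps = Λ.comps := rfl
  refine ⟨?_, ?_, ?_⟩
  · intro l hl hs
    rw [hcomp] at hl
    rw [hstrict] at hs
    have hsM : M.isStrict l = true := by rw [hMs]; exact hs
    constructor
    · apply antitone_nat_of_succ_le
      intro i
      rw [hpart, hpart, if_neg (fun h => Nat.succ_ne_zero i h.2)]
      have e1 := (cnt_succ hWΛ hstdΛ k l i).1
      have e2 := (cnt_succ hWM hstdM k l i).1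
      have e3 := max_le_max e1 e2
      omega
    · intro i hi
      rw [hpart, if_neg (fun h => Nat.succ_ne_zero i h.2)] at hi
      rw [hpart, hpart, if_neg (fun h => Nat.succ_ne_zero i h.2)]
      have e1 := (cnt_succ hWΛ hstdΛ k l i).2 hs
      have e2 := (cnt_succ hWM hstdM k l i).2 hsM
      have l1 : cnt Λ t k l i ≤ max (cnt Λ t k l i) (cnt M t' k l i) := le_max_left _ _
      have l2 : cnt M t' k l i ≤ max (cnt Λ t k l i) (cnt M t' k l i) := le_max_right _ _
      rw [add_zero] at hi
      rcases max_choice (cnt Λ t k l (i + 1)) (cnt M t' k l (i + 1)) with hx | hx <;>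
        rw [hx] at hi ⊢ <;> omega
  · intro l hl hs
    rw [hcomp] at hl
    apply antitone_nat_of_succ_le
    intro i
    rw [hpart, hpart, if_neg (fun h => Nat.succ_ne_zero i h.2)]
    have e1 := (cnt_succ hWΛ hstdΛ k l i).1
    have e2 := (cnt_succ hWM hstdM k l i).1
    have e3 := max_le_max e1 e2
    omega
  · intro l hl
    rw [hcomp] at hl
    constructor
    · funext i
      rw [hpart, cnt_zero_of_ge hl, cnt_zero_of_ge (show M.comps ≤ l by omega),
        if_neg (show ¬(l = L ∧ i = 0) by rintro ⟨rfl, -⟩; omega)]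
      simp
    · rw [hstrict]
      exact (hWΛ.2.2 l hl).2

end jshape

end MultiShape

open MultiShape in
/-- Under the separateness condition `P_n^{(•)}(q², Q) ≠ 0` (equivalently,
`(q,Q)` is separate with respect to every shape in `P^{•,m}_{n+1}`), distinct
standard tableaux `t ∈ Std(λ)`, `t' ∈ Std(μ)` with `λ, μ ∈ P^{•,m}_n` have
distinct sequences `𝚚(res(t)) ≠ 𝚚(res(t'))`. -/
theorem stmt17 (K : Type) [Field K] [IsAlgClosed K] (hchar : ringChar K ≠ 2)
    (q : K) (hq0 : q ≠ 0) (hq1 : q ≠ 1) (hqm1 : q ≠ -1)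
    (e m : ℕ) (he : e ≤ 2) (Q : ℕ → K) (hQ : ∀ i < m, Q i ≠ 0) (n : ℕ)
    (hsep : ∀ Λ' : MultiShape, IsShape Λ' e m → Λ'.cells.Finite →
      Λ'.cells.ncard = n + 1 → ∀ t' : ℕ × ℕ × ℕ → ℕ, Λ'.IsStd (n + 1) t' →
      ∀ k, 1 ≤ k → k ≤ n →
        qval q (resAt q (Qcomp e Q) Λ' t' k) ≠
          qval q (resAt q (Qcomp e Q) Λ' t' (k + 1)))
    (Λ M : MultiShape) (hΛ : IsShape Λ e m) (hM : IsShape M e m)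
    (hfΛ : Λ.cells.Finite) (hnΛ : Λ.cells.ncard = n)
    (hfM : M.cells.Finite) (hnM : M.cells.ncard = n)
    (t t' : ℕ × ℕ × ℕ → ℕ) (ht : Λ.IsStd n t) (ht' : M.IsStd n t')
    (hne : t ≠ t') :
    ∃ k, 1 ≤ k ∧ k ≤ n ∧
      qval q (resAt q (Qcomp e Q) Λ t k) ≠ qval q (resAt q (Qcomp e Q) M t' k) := by
  classical
  by_contra hcon
  push_neg at hcon
  -- If the inverse functions agree on all of `[1,n]` then `t = t'`.
  have hS : ∃ j, 1 ≤ j ∧ j ≤ n ∧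
      Function.invFunOn t Λ.cells j ≠ Function.invFunOn t' M.cells j := by
    by_contra hS
    push_neg at hS
    apply hne
    funext c
    by_cases hc : c ∈ Λ.cells
    · have h1 : t c ∈ Set.Icc 1 n := ht.1.1 hc
      rw [Set.mem_Icc] at h1
      have h2 := hS (t c) h1.1 h1.2
      rw [std_inv_self ht hc] at h2
      have h3 := (std_inv_spec ht' h1.1 h1.2).2
      rw [← h2] at h3
      exact h3.symm
    · rw [ht.2.2.2 c hc]
      by_cases hc' : c ∈ M.cells
      · exfalso
        have h1 : t' c ∈ Set.Icc 1 n := ht'.1.1 hc'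
        rw [Set.mem_Icc] at h1
        have h2 := hS (t' c) h1.1 h1.2
        rw [std_inv_self ht' hc'] at h2
        have h4 := (std_inv_spec ht h1.1 h1.2).1
        rw [h2] at h4
        exact hc h4
      · rw [ht'.2.2.2 c hc']
  -- minimal disagreeing entry
  set k := Nat.find hS with hkdef
  obtain ⟨hk1, hk2, hkne⟩ := Nat.find_spec hS
  have hkmin : ∀ j, j < k → 1 ≤ j → j ≤ n →
      Function.invFunOn t Λ.cells j = Function.invFunOn t' M.cells j := by
    intro j hj h1 h2
    by_contra hne'
    exact Nat.find_min hS hj ⟨h1, h2, hne'⟩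
  set b := Function.invFunOn t Λ.cells k with hbdef
  set b' := Function.invFunOn t' M.cells k with hb'def
  have hbc : b ∈ Λ.cells := (std_inv_spec ht hk1 hk2).1
  have htb : t b = k := (std_inv_spec ht hk1 hk2).2
  have hb'c : b' ∈ M.cells := (std_inv_spec ht' hk1 hk2).1
  have ht'b' : t' b' = k := (std_inv_spec ht' hk1 hk2).2
  have hbb' : b ≠ b' := hkne
  -- the common sub-shape of entries < k
  have hνeq : dset Λ t (k - 1) = dset M t' (k - 1) := by
    rw [dset_eq_image ht (by omega), dset_eq_image ht' (by omega)]
    apply Set.image_congr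
    intro j hj
    rw [Set.mem_Icc] at hj
    exact hkmin j (by omega) (by omega) (by omega)
  have hcomps1 : 1 ≤ Λ.comps := by
    have h := ((mem_cells Λ b.1 b.2.1 b.2.2).mp hbc).1
    omega
  set L := Λ.comps - 1 with hLdef
  have hL : L + 1 = Λ.comps := by omega
  have hMc : M.comps = Λ.comps := by rw [hM.1, hΛ.1]
  have hMs : M.isStrict = Λ.isStrict := by
    funext l; rw [hM.2.1, hΛ.2.1]
  set s := max (cnt Λ t k L 0) (cnt M t' k L 0) with hsdef
  set D := n - k with hDdef
  set Ξ := jshape Λ M t t' k D L with hΞdef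
  have hcells : ∀ c, c ∈ Ξ.cells ↔ c ∈ dset Λ t k ∨ c ∈ dset M t' k ∨
      (c.1 = L ∧ c.2.1 = 0 ∧ s ≤ c.2.2 ∧ c.2.2 < s + D) :=
    jshape_cells ht ht' hMc hMs hL
  have hwf : Ξ.WellFormed := jshape_wf ht ht' hΛ.2.2 hM.2.2 hMc hMs hL
  have hshape : IsShape Ξ e m := ⟨hΛ.1, fun l => hΛ.2.1 l, hwf⟩
  -- splitting the entry-≤-k sets
  have hbd : b ∈ dset Λ t k := mem_dset.mpr ⟨hbc, by omega⟩
  have hb'd : b' ∈ dset M t' k := mem_dset.mpr ⟨hb'c, by omega⟩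
  have hAsplit : ∀ c ∈ dset Λ t k, c ∈ dset Λ t (k - 1) ∨ c = b := by
    intro c hc
    rcases Nat.lt_or_ge (t c) k with h | h
    · exact Or.inl (mem_dset.mpr ⟨hc.1, by omega⟩)
    · refine Or.inr ?_
      have hck : t c = k := by have := hc.2; omega
      rw [hbdef, ← hck]
      exact (std_inv_self ht hc.1).symm
  have hBsplit : ∀ c ∈ dset M t' k, c ∈ dset Λ t (k - 1) ∨ c = b' := by
    intro c hc
    rcases Nat.lt_or_ge (t' c) k with h | h
    · refine Or.inl ?_
      rw [hνeq]
      exact mem_dset.mpr ⟨hc.1, by omega⟩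
    · refine Or.inr ?_
      have hck : t' c = k := by have := hc.2; omega
      rw [hb'def, ← hck]
      exact (std_inv_self ht' hc.1).symm
  have hbν : b ∉ dset Λ t (k - 1) := by
    intro h
    have := h.2
    omega
  have hb'ν : b' ∉ dset Λ t (k - 1) := by
    rw [hνeq]
    intro h
    have := h.2
    omega
  have hjA : ∀ c ∈ dset Λ t k, c.1 = L → c.2.1 = 0 → c.2.2 < s := by
    intro c hc h1 h2
    have hc' : (c.1, c.2.1, c.2.2) ∈ dset Λ t k := hc
    rw [h1, h2] at hc'
    have hi := (dset_mem_iff ht k L 0 c.2.2).mp hc'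
    rw [offs_zero] at hi
    have hle : cnt Λ t k L 0 ≤ s := le_max_left _ _
    omega
  have hjB : ∀ c ∈ dset M t' k, c.1 = L → c.2.1 = 0 → c.2.2 < s := by
    intro c hc h1 h2
    have hc' : (c.1, c.2.1, c.2.2) ∈ dset M t' k := hc
    rw [h1, h2] at hc'
    have hi := (dset_mem_iff ht' k L 0 c.2.2).mp hc'
    rw [offs_zero] at hi
    have hle : cnt M t' k L 0 ≤ s := le_max_right _ _
    omega
  -- the glued tableau
  set T : ℕ × ℕ × ℕ → ℕ := fun c =>
    if c ∈ dset Λ t (k - 1) then t c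
    else if c = b then k
    else if c = b' then k + 1
    else if c.1 = L ∧ c.2.1 = 0 ∧ s ≤ c.2.2 ∧ c.2.2 < s + D then c.2.2 - s + (k + 2)
    else 0 with hTdef
  have hTν : ∀ c ∈ dset Λ t (k - 1), T c = t c := by
    intro c hc
    simp only [hTdef]
    rw [if_pos hc]
  have hTb : T b = k := by
    simp [hTdef, hbν]
  have hTb' : T b' = k + 1 := by
    simp [hTdef, hb'ν, Ne.symm hbb']
  have hTE : ∀ c, c ∉ dset Λ t (k - 1) → c ≠ b → c ≠ b' →
      (c.1 = L ∧ c.2.1 = 0 ∧ s ≤ c.2.2 ∧ c.2.2 < s + D) → T c = c.2.2 - s + (k + 2) := by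
    intro c h1 h2 h3 h4
    simp only [hTdef]
    rw [if_neg h1, if_neg h2, if_neg h3, if_pos h4]
  -- classification of values of T on cells of Ξ
  have hTval : ∀ c ∈ Ξ.cells,
      (c ∈ dset Λ t (k - 1) ∧ T c = t c ∧ 1 ≤ t c ∧ t c ≤ k - 1 ∧ c ∈ Λ.cells) ∨
      (c = b ∧ T c = k) ∨ (c = b' ∧ T c = k + 1) ∨
      (c.1 = L ∧ c.2.1 = 0 ∧ s ≤ c.2.2 ∧ c.2.2 < s + D ∧ T c = c.2.2 - s + (k + 2)) := by
    intro c hc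
    rw [hcells c] at hc
    rcases hc with h | h | h
    · rcases hAsplit c h with h' | h'
      · have h1 : t c ∈ Set.Icc 1 n := ht.1.1 h'.1
        rw [Set.mem_Icc] at h1
        exact Or.inl ⟨h', hTν c h', h1.1, h'.2, h'.1⟩
      · exact Or.inr (Or.inl ⟨h', h' ▸ hTb⟩)
    · rcases hBsplit c h with h' | h'
      · have h1 : t c ∈ Set.Icc 1 n := ht.1.1 h'.1
        rw [Set.mem_Icc] at h1
        exact Or.inl ⟨h', hTν c h', h1.1, h'.2, h'.1⟩
      · exact Or.inr (Or.inr (Or.inl ⟨h', h' ▸ hTb'⟩))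
    · refine Or.inr (Or.inr (Or.inr ⟨h.1, h.2.1, h.2.2.1, h.2.2.2, ?_⟩))
      have hnν : c ∉ dset Λ t (k - 1) := by
        intro hx
        have h6 := hjA c (dset_mono Λ t (by omega) hx) h.1 h.2.1
        have h7 := h.2.2.1
        omega
      have hnb : c ≠ b := by
        intro hx
        have h6 := hjA b hbd (hx ▸ h.1) (hx ▸ h.2.1)
        have h5 := h.2.2.1
        rw [hx] at h5
        omega
      have hnb' : c ≠ b' := by
        intro hx
        have h6 := hjB b' hb'd (hx ▸ h.1) (hx ▸ h.2.1)
        have h5 := h.2.2.1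
        rw [hx] at h5
        omega
      exact hTE c hnν hnb hnb' h
  -- standardness of T
  have hmapΞ : Set.MapsTo T Ξ.cells (Set.Icc 1 (n + 1)) := by
    intro c hc
    rw [Set.mem_Icc]
    rcases hTval c hc with ⟨_, hv, h1, h2, _⟩ | ⟨_, hv⟩ | ⟨_, hv⟩ | ⟨_, _, h3, h4, hv⟩ <;>
      omega
  have hinjΞ : Set.InjOn T Ξ.cells := by
    intro c hc d hd heq
    rcases hTval c hc with ⟨hc1, hcv, hc2, hc3, hccell⟩ | ⟨hcb, hcv⟩ | ⟨hcb, hcv⟩ |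
        ⟨hcL, hc0, hcs, hcD, hcv⟩ <;>
      rcases hTval d hd with ⟨hd1, hdv, hd2, hd3, hdcell⟩ | ⟨hdb, hdv⟩ | ⟨hdb, hdv⟩ |
        ⟨hdL, hd0, hds, hdD, hdv⟩
    · exact ht.1.2.1 hccell hdcell (by rw [← hcv, ← hdv]; exact heq)
    · omega
    · omega
    · omega
    · omega
    · rw [hcb, hdb]
    · omega
    · omega
    · omega
    · omega
    · rw [hcb, hdb]
    · omega
    · omega
    · omega
    · omega
    · have h22 : c.2.2 = d.2.2 := by omega
      have ha : c.1 = d.1 := by rw [hcL, hdL]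
      have hb2 : c.2.1 = d.2.1 := by rw [hc0, hd0]
      exact Prod.ext ha (Prod.ext hb2 h22)
  have hsurjΞ : Set.SurjOn T Ξ.cells (Set.Icc 1 (n + 1)) := by
    intro v hv
    rw [Set.mem_Icc] at hv
    rcases Nat.lt_or_ge v k with hvk | hvk
    · have h1 := std_inv_spec ht (show 1 ≤ v by omega) (show v ≤ n by omega)
      have hν : Function.invFunOn t Λ.cells v ∈ dset Λ t (k - 1) :=
        mem_dset.mpr ⟨h1.1, by omega⟩
      refine ⟨Function.invFunOn t Λ.cells v, ?_, ?_⟩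
      · rw [hcells]
        exact Or.inl (mem_dset.mpr ⟨h1.1, by omega⟩)
      · rw [hTν _ hν, h1.2]
    · rcases Nat.lt_or_ge v (k + 1) with hvk1 | hvk1
      · have hvek : v = k := by omega
        exact ⟨b, (hcells b).mpr (Or.inl hbd), by rw [hTb, hvek]⟩
      · rcases Nat.lt_or_ge v (k + 2) with hvk2 | hvk2
        · have hvek : v = k + 1 := by omega
          exact ⟨b', (hcells b').mpr (Or.inr (Or.inl hb'd)), by rw [hTb', hvek]⟩
        · have hmem : (L, 0, s + (v - (k + 2))) ∈ Ξ.cells := by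
            rw [hcells]
            refine Or.inr (Or.inr ⟨rfl, rfl, ?_, ?_⟩)
            · show s ≤ s + (v - (k + 2)); omega
            · show s + (v - (k + 2)) < s + D; omega
          refine ⟨(L, 0, s + (v - (k + 2))), hmem, ?_⟩
          rcases hTval _ hmem with ⟨h', _⟩ | ⟨h', _⟩ | ⟨h', _⟩ | ⟨_, _, _, _, hv'⟩
          · exfalso
            have h6 := hjA _ (dset_mono Λ t (by omega) h') rfl rfl
            have h7 : s + (v - (k + 2)) < s := h6
            omega
          · exfalso
            have hmem' : (L, 0, s + (v - (k + 2))) ∈ dset Λ t k := by rw [h']; exact hbd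
            have h6 := hjA _ hmem' rfl rfl
            have h7 : s + (v - (k + 2)) < s := h6
            omega
          · exfalso
            have hmem' : (L, 0, s + (v - (k + 2))) ∈ dset M t' k := by rw [h']; exact hb'd
            have h6 := hjB _ hmem' rfl rfl
            have h7 : s + (v - (k + 2)) < s := h6
            omega
          · rw [hv']
            show s + (v - (k + 2)) - s + (k + 2) = v
            omega
  have hrowΞ : ∀ x ∈ Ξ.cells, ∀ y ∈ Ξ.cells,
      x.1 = y.1 → x.2.1 = y.2.1 → x.2.2 < y.2.2 → T x < T y := by
    intro x hx y hy h1 h2 h3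
    have hxo : offs Λ x.1 x.2.1 ≤ x.2.2 := ((mem_cells Ξ x.1 x.2.1 x.2.2).mp hx).2.1
    have hxo' : offs Λ y.1 y.2.1 ≤ x.2.2 := by rw [← h1, ← h2]; exact hxo
    have hxeq : x = (y.1, y.2.1, x.2.2) := by
      rw [← h1, ← h2]
    rcases hTval y hy with ⟨hy1, hyv, hg1, hg2, hycell⟩ | ⟨hyb, hyv⟩ | ⟨hyb, hyv⟩ |
        ⟨hyL, hy0, hys, hyD, hyv⟩
    · have hy1' : (y.1, y.2.1, y.2.2) ∈ dset Λ t (k - 1) := hy1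
      have hx1 : x ∈ dset Λ t (k - 1) := by
        rw [hxeq]
        exact dset_row_closed ht hy1' hxo' (le_of_lt h3)
      rw [hTν x hx1, hyv]
      exact ht.2.1 x hx1.1 y hycell h1 h2 h3
    · have hyd : (y.1, y.2.1, y.2.2) ∈ dset Λ t k := hyb ▸ hbd
      have hx1 : x ∈ dset Λ t k := by
        rw [hxeq]
        exact dset_row_closed ht hyd hxo' (le_of_lt h3)
      have hxk : t x < k := by
        have h5 := ht.2.1 x hx1.1 y (hyb ▸ hbc) h1 h2 h3
        rw [hyb, htb] at h5
        exact h5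
      rw [hTν x (mem_dset.mpr ⟨hx1.1, by omega⟩), hyv]
      omega
    · have hyd : (y.1, y.2.1, y.2.2) ∈ dset M t' k := hyb ▸ hb'd
      have hoM : offs M y.1 y.2.1 = offs Λ y.1 y.2.1 := by simp [offs, hMs]
      have hx1 : x ∈ dset M t' k := by
        rw [hxeq]
        exact dset_row_closed ht' hyd (by rw [hoM]; exact hxo') (le_of_lt h3)
      have hxk : t' x < k := by
        have h5 := ht'.2.1 x hx1.1 y (hyb ▸ hb'c) h1 h2 h3
        rw [hyb, ht'b'] at h5
        exact h5
      have hxν : x ∈ dset Λ t (k - 1) := by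
        rw [hνeq]
        exact mem_dset.mpr ⟨hx1.1, by omega⟩
      have hxv : t x ≤ k - 1 := hxν.2
      rw [hTν x hxν, hyv]
      omega
    · rcases Nat.lt_or_ge x.2.2 s with hxs | hxs
      · have hTx : T x ≤ k + 1 := by
          rcases hTval x hx with ⟨_, hv, _, h2', _⟩ | ⟨_, hv⟩ | ⟨_, hv⟩ | ⟨_, _, hv3, _, _⟩ <;>
            omega
        rw [hyv]
        omega
      · have hxE : x.1 = L ∧ x.2.1 = 0 ∧ s ≤ x.2.2 ∧ x.2.2 < s + D :=
          ⟨h1.trans hyL, h2.trans hy0, hxs, by omega⟩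
        have hTx : T x = x.2.2 - s + (k + 2) := by
          rcases hTval x hx with ⟨hx1, _, _, _, _⟩ | ⟨hxb, _⟩ | ⟨hxb, _⟩ | ⟨_, _, _, _, hv⟩
          · exfalso
            have h6 := hjA x (dset_mono Λ t (by omega) hx1) hxE.1 hxE.2.1
            omega
          · exfalso
            have h6 := hjA b hbd (hxb ▸ hxE.1) (hxb ▸ hxE.2.1)
            rw [← hxb] at h6
            omega
          · exfalso
            have h6 := hjB b' hb'd (hxb ▸ hxE.1) (hxb ▸ hxE.2.1)
            rw [← hxb] at h6
            omega
          · exact hv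
        rw [hTx, hyv]
        omega
  have hcolΞ : ∀ x ∈ Ξ.cells, ∀ y ∈ Ξ.cells,
      x.1 = y.1 → x.2.2 = y.2.2 → x.2.1 < y.2.1 → T x < T y := by
    intro x hx y hy h1 h2 h3
    have hxeq : x = (y.1, x.2.1, y.2.2) := by
      rw [← h1, ← h2]
    rcases hTval y hy with ⟨hy1, hyv, hg1, hg2, hycell⟩ | ⟨hyb, hyv⟩ | ⟨hyb, hyv⟩ |
        ⟨hyL, hy0, hys, hyD, hyv⟩
    · have hy1' : (y.1, y.2.1, y.2.2) ∈ dset Λ t (k - 1) := hy1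
      have hx1 : x ∈ dset Λ t (k - 1) := by
        rw [hxeq]
        exact dset_col_closed hΛ.2.2 ht hy1' (le_of_lt h3)
      rw [hTν x hx1, hyv]
      exact ht.2.2.1 x hx1.1 y hycell h1 h2 h3
    · have hyd : (y.1, y.2.1, y.2.2) ∈ dset Λ t k := hyb ▸ hbd
      have hx1 : x ∈ dset Λ t k := by
        rw [hxeq]
        exact dset_col_closed hΛ.2.2 ht hyd (le_of_lt h3)
      have hxk : t x < k := by
        have h5 := ht.2.2.1 x hx1.1 y (hyb ▸ hbc) h1 h2 h3
        rw [hyb, htb] at h5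
        exact h5
      rw [hTν x (mem_dset.mpr ⟨hx1.1, by omega⟩), hyv]
      omega
    · have hyd : (y.1, y.2.1, y.2.2) ∈ dset M t' k := hyb ▸ hb'd
      have hx1 : x ∈ dset M t' k := by
        rw [hxeq]
        exact dset_col_closed hM.2.2 ht' hyd (le_of_lt h3)
      have hxk : t' x < k := by
        have h5 := ht'.2.2.1 x hx1.1 y (hyb ▸ hb'c) h1 h2 h3
        rw [hyb, ht'b'] at h5
        exact h5
      have hxν : x ∈ dset Λ t (k - 1) := by
        rw [hνeq]
        exact mem_dset.mpr ⟨hx1.1, by omega⟩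
      have hxv : t x ≤ k - 1 := hxν.2
      rw [hTν x hxν, hyv]
      omega
    · exfalso
      omega
  have hzeroΞ : ∀ c, c ∉ Ξ.cells → T c = 0 := by
    intro c hc
    have h1 : c ∉ dset Λ t (k - 1) := fun h =>
      hc ((hcells c).mpr (Or.inl (dset_mono Λ t (by omega) h)))
    have h2 : c ≠ b := fun h => hc ((hcells c).mpr (Or.inl (h ▸ hbd)))
    have h3 : c ≠ b' := fun h => hc ((hcells c).mpr (Or.inr (Or.inl (h ▸ hb'd))))
    have h4 : ¬(c.1 = L ∧ c.2.1 = 0 ∧ s ≤ c.2.2 ∧ c.2.2 < s + D) := fun h =>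
      hc ((hcells c).mpr (Or.inr (Or.inr h)))
    simp only [hTdef]
    rw [if_neg h1, if_neg h2, if_neg h3, if_neg h4]
  have hTstd : Ξ.IsStd (n + 1) T := ⟨⟨hmapΞ, hinjΞ, hsurjΞ⟩, hrowΞ, hcolΞ, hzeroΞ⟩
  have himg : T '' Ξ.cells = Set.Icc 1 (n + 1) :=
    Set.BijOn.image_eq ⟨hmapΞ, hinjΞ, hsurjΞ⟩
  have hfin : Ξ.cells.Finite := by
    apply Set.Finite.of_finite_image _ hinjΞ
    rw [himg]
    exact Set.finite_Icc _ _
  have hcard : Ξ.cells.ncard = n + 1 := by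
    have h := Set.ncard_image_of_injOn hinjΞ
    rw [himg] at h
    rw [← h, ← Finset.coe_Icc, Set.ncard_coe_finset, Nat.card_Icc]
    omega
  have hneq := hsep Ξ hshape hfin hcard T hTstd k hk1 hk2
  apply hneq
  have e1 : Function.invFunOn T Ξ.cells k = b := by
    rw [← hTb]
    exact std_inv_self hTstd ((hcells b).mpr (Or.inl hbd))
  have e2 : Function.invFunOn T Ξ.cells (k + 1) = b' := by
    rw [← hTb']
    exact std_inv_self hTstd ((hcells b').mpr (Or.inr (Or.inl hb'd)))
  have e3 := hcon k hk1 hk2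
  simp only [resAt] at e3 ⊢
  rw [e1, e2]
  rw [← hbdef, ← hb'def] at e3
  exact e3
end
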